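/- arXiv:math/0609756 — 5 statements merged into one kernel-verified Lean document; each statement's English description precedes it below -/
import Mathlib

section
/- Every (n,k,d)-graph G is also an (n',k',d)-graph whenever 0 ≤ n' ≤ n, 0 ≤ k' ≤ k, and n' ≡ n (mod 2). -/
open SimpleGraph

/-- `M` is a `k`-matching in its ambient graph `H`: a matching consisting of exactly `k`
edges, i.e. covering exactly `2 * k` vertices. -/
def IsKMatching {W : Type*} {H : SimpleGraph W} (M : H.Subgraph) (k : ℕ) : Prop :=
  M.IsMatching ∧ M.verts.ncard = 2 * k

/-- `M` is a defect-`d` matching in its ambient graph `H` on the vertex type `W`: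
a matching covering exactly `|W| - d` vertices. -/
def IsDefectMatching {W : Type*} {H : SimpleGraph W} (M : H.Subgraph) (d : ℕ) : Prop :=
  M.IsMatching ∧ M.verts.ncard = Nat.card W - d

/-- `G` is an `(n,k,d)`-graph: `|V(G)| ≥ n + 2k + d + 2`, `|V(G)| - n - d` is even, and for
every set `S` of `n` vertices the graph `G - S` contains a `k`-matching, and every
`k`-matching of `G - S` extends to a defect-`d` matching of `G - S`. -/
def IsNkdGraph {V : Type*} [Fintype V] (G : SimpleGraph V) (n k d : ℕ) : Prop :=
  n + 2 * k + d + 2 ≤ Nat.card V ∧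
  Even (Nat.card V - n - d) ∧
  ∀ S : Finset V, S.card = n →
    (∃ M : (G.induce ((S : Set V)ᶜ)).Subgraph, IsKMatching M k) ∧
    ∀ M : (G.induce ((S : Set V)ᶜ)).Subgraph, IsKMatching M k →
      ∃ M' : (G.induce ((S : Set V)ᶜ)).Subgraph, M ≤ M' ∧ IsDefectMatching M' d

/-- The number of odd components of `H`, i.e. connected components with an odd number
of vertices. -/
noncomputable def oddComponentsCard {W : Type*} (H : SimpleGraph W) : ℕ :=
  Nat.card {c : H.ConnectedComponent // Odd (Nat.card c.supp)}

/-- The subgraph of `H` induced on the set `s` is factor-critical: deleting any one vertex of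
`s` leaves a graph with a perfect matching. -/
def IsFactorCriticalOn {W : Type*} (H : SimpleGraph W) (s : Set W) : Prop :=
  ∀ w ∈ s, ∃ M : (H.induce (s \ {w})).Subgraph, M.IsPerfectMatching

/-- The graph `G + x` obtained from `G` by adding one new vertex (`none`) joined to every
vertex of `G`. -/
def addUniversalVertex {V : Type*} (G : SimpleGraph V) : SimpleGraph (Option V) :=
  SimpleGraph.fromRel (fun a b =>
    (∃ u v, a = some u ∧ b = some v ∧ G.Adj u v) ∨ a = none)

namespace NkdAux

variable {W : Type*} {H : SimpleGraph W}

/-- Restrict a subgraph to an edge set. -/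
def restrictE (M : H.Subgraph) (E : Set (Sym2 W)) : H.Subgraph where
  verts := {v | ∃ w, M.Adj v w ∧ s(v, w) ∈ E}
  Adj v w := M.Adj v w ∧ s(v, w) ∈ E
  adj_sub h := M.adj_sub h.1
  edge_vert h := ⟨_, h⟩
  symm := ⟨fun v w h => ⟨M.adj_symm h.1, by rw [Sym2.eq_swap]; exact h.2⟩⟩

lemma restrictE_le (M : H.Subgraph) (E : Set (Sym2 W)) : restrictE M E ≤ M :=
  ⟨fun _ h => M.edge_vert h.choose_spec.1, fun _ _ h => h.1⟩

lemma restrictE_edgeSet (M : H.Subgraph) {E : Set (Sym2 W)} (hE : E ⊆ M.edgeSet) :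
    (restrictE M E).edgeSet = E := by
  ext e
  induction e with
  | _ x y =>
    simp only [SimpleGraph.Subgraph.mem_edgeSet, restrictE]
    exact ⟨fun h => h.2, fun h => ⟨hE h, h⟩⟩

lemma restrictE_isMatching {M : H.Subgraph} (hM : M.IsMatching) (E : Set (Sym2 W)) :
    (restrictE M E).IsMatching := by
  rintro v ⟨w, hadj, he⟩
  refine ⟨w, ⟨hadj, he⟩, ?_⟩
  rintro y ⟨hy, -⟩
  exact ((hM (M.edge_vert hadj)).unique hy hadj)

lemma restrictE_verts_sdiff {M : H.Subgraph} (hM : M.IsMatching) {x z : W} (hxz : M.Adj x z) :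
    (restrictE M (M.edgeSet \ {s(x, z)})).verts = M.verts \ {x, z} := by
  ext v
  constructor
  · rintro ⟨w, hadj, hmem, hne⟩
    refine ⟨M.edge_vert hadj, ?_⟩
    rintro (rfl | rfl)
    · exact hne (by rw [(hM (M.edge_vert hadj)).unique hadj hxz]; rfl)
    · exact hne (by rw [(hM (M.edge_vert hadj)).unique hadj (M.adj_symm hxz),
        Sym2.eq_swap]; rfl)
  · rintro ⟨hv, hne⟩
    obtain ⟨w, hw, -⟩ := hM hv
    refine ⟨w, hw, SimpleGraph.Subgraph.mem_edgeSet.mpr hw, fun hcon => ?_⟩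
    rw [Set.mem_singleton_iff, Sym2.eq_iff] at hcon
    rcases hcon with ⟨rfl, rfl⟩ | ⟨rfl, rfl⟩
    · exact hne (Or.inl rfl)
    · exact hne (Or.inr rfl)

/-- A matching covers twice as many vertices as it has edges. -/
lemma isMatching_ncard_verts {M : H.Subgraph} [Finite W] (hM : M.IsMatching) :
    M.verts.ncard = 2 * M.edgeSet.ncard := by
  generalize hgen : M.edgeSet.ncard = N
  induction N using Nat.strong_induction_on generalizing M with
  | _ N ih =>
    rcases Set.eq_empty_or_nonempty M.verts with hve | ⟨v, hv⟩
    · have he : M.edgeSet = ∅ := by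
        ext e
        induction e with
        | _ x y =>
          simp only [Set.mem_empty_iff_false, iff_false, SimpleGraph.Subgraph.mem_edgeSet]
          intro h
          exact absurd (M.edge_vert h) (by simp [hve])
      simp [hve, he] at hgen ⊢
      omega
    · obtain ⟨z, hz, -⟩ := hM hv
      have hvz : v ≠ z := (M.adj_sub hz).ne
      have hzv : z ∈ M.verts := M.edge_vert (M.adj_symm hz)
      have hedge : s(v, z) ∈ M.edgeSet := SimpleGraph.Subgraph.mem_edgeSet.mpr hz
      set M' := restrictE M (M.edgeSet \ {s(v, z)}) with hM'
      have hverts : M'.verts = M.verts \ {v, z} := restrictE_verts_sdiff hM hz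
      have hedges : M'.edgeSet = M.edgeSet \ {s(v, z)} :=
        restrictE_edgeSet M Set.diff_subset
      have hNpos : 1 ≤ N := by
        rw [← hgen]
        exact (Set.ncard_pos (Set.toFinite _)).mpr ⟨_, hedge⟩
      have hcard' : M'.edgeSet.ncard = N - 1 := by
        rw [hedges, Set.ncard_diff_singleton_of_mem hedge, hgen]
      have hrec := ih (N - 1) (by omega) (restrictE_isMatching hM _) hcard'
      have hvcard : M'.verts.ncard = M.verts.ncard - 2 := by
        rw [hverts]
        rw [Set.ncard_diff (by simp [Set.insert_subset_iff, hv, hzv]) (Set.toFinite _)]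
        rw [Set.ncard_pair hvz]
      have h2 : 2 ≤ M.verts.ncard := by
        have : ({v, z} : Set W) ⊆ M.verts := by simp [Set.insert_subset_iff, hv, hzv]
        calc 2 = ({v, z} : Set W).ncard := (Set.ncard_pair hvz).symm
        _ ≤ _ := Set.ncard_le_ncard this (Set.toFinite _)
      rw [hvcard] at hrec
      omega

lemma le_of_edgeSet_subset {M F : H.Subgraph} (hM : M.IsMatching)
    (h : M.edgeSet ⊆ F.edgeSet) : M ≤ F := by
  constructor
  · intro v hv
    obtain ⟨w, hw, -⟩ := hM hv
    exact F.edge_vert (SimpleGraph.Subgraph.mem_edgeSet.mp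
      (h (SimpleGraph.Subgraph.mem_edgeSet.mpr hw)))
  · intro v w hadj
    exact SimpleGraph.Subgraph.mem_edgeSet.mp (h (SimpleGraph.Subgraph.mem_edgeSet.mpr hadj))

/-- Adding an edge disjoint from a matching. -/
lemma sup_edge_isMatching {F : H.Subgraph} (hF : F.IsMatching) {x y : W}
    (hxy : H.Adj x y) (hx : x ∉ F.verts) (hy : y ∉ F.verts) :
    (F ⊔ H.subgraphOfAdj hxy).IsMatching := by
  refine hF.sup (SimpleGraph.Subgraph.IsMatching.subgraphOfAdj hxy) ?_
  rw [hF.support_eq_verts, SimpleGraph.support_subgraphOfAdj]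
  rw [Set.disjoint_right]
  rintro a (rfl | rfl) <;> assumption

variable [Finite W]

/-- Core lemma: under the `(k,d)`-extension hypotheses, every matching with at most
`k` edges extends to a defect-`d` matching. -/
lemma extend_small (k d : ℕ) (hcard : 2 * k + d + 2 ≤ Nat.card W)
    (hex : ∃ M : H.Subgraph, IsKMatching M k)
    (hext : ∀ M : H.Subgraph, IsKMatching M k →
      ∃ F : H.Subgraph, M ≤ F ∧ IsDefectMatching F d)
    (M : H.Subgraph) (hM : M.IsMatching) (hMk : M.edgeSet.ncard ≤ k) :
    ∃ F : H.Subgraph, M ≤ F ∧ IsDefectMatching F d := by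
  classical
  -- The set of possible overlaps with defect-d matchings
  have hFdedges : ∀ F : H.Subgraph, IsDefectMatching F d →
      2 * F.edgeSet.ncard = Nat.card W - d := by
    intro F hFd
    rw [← isMatching_ncard_verts hFd.1, hFd.2]
  have hFdbig : ∀ F : H.Subgraph, IsDefectMatching F d → k + 1 ≤ F.edgeSet.ncard := by
    intro F hFd
    have := hFdedges F hFd
    omega
  set T : Set ℕ :=
    {c | ∃ F : H.Subgraph, IsDefectMatching F d ∧ (M.edgeSet ∩ F.edgeSet).ncard = c} with hT
  have hTne : T.Nonempty := by
    obtain ⟨M0, hM0⟩ := hex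
    obtain ⟨F0, -, hF0⟩ := hext M0 hM0
    exact ⟨_, F0, hF0, rfl⟩
  have hTbdd : BddAbove T := by
    refine ⟨k, ?_⟩
    rintro c ⟨F, -, rfl⟩
    exact le_trans (Set.ncard_le_ncard Set.inter_subset_left (Set.toFinite _)) hMk
  obtain ⟨F, hFd, hFc⟩ := Nat.sSup_mem hTne hTbdd
  have hmax : ∀ F' : H.Subgraph, IsDefectMatching F' d →
      (M.edgeSet ∩ F'.edgeSet).ncard ≤ (M.edgeSet ∩ F.edgeSet).ncard := by
    intro F' hF'
    rw [hFc]
    exact le_csSup hTbdd ⟨F', hF', rfl⟩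
  -- It suffices to show M's edges are all in F
  suffices hsub : M.edgeSet ⊆ F.edgeSet by
    exact ⟨F, le_of_edgeSet_subset hM hsub, hFd⟩
  by_contra hnsub
  obtain ⟨e, heM, heF⟩ := Set.not_subset.mp hnsub
  induction e with
  | _ x y =>
  have hMxy : M.Adj x y := SimpleGraph.Subgraph.mem_edgeSet.mp heM
  have hGxy : H.Adj x y := M.adj_sub hMxy
  have hxny : x ≠ y := hGxy.ne
  -- a uniform way to derive the contradiction
  have contra : ∀ F'' : H.Subgraph, IsDefectMatching F'' d →
      (M.edgeSet ∩ F.edgeSet) ∪ {s(x, y)} ⊆ F''.edgeSet → False := by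
    intro F'' hF'' hsup
    have hsub'' : (M.edgeSet ∩ F.edgeSet) ∪ {s(x, y)} ⊆ M.edgeSet ∩ F''.edgeSet := by
      intro e he
      refine ⟨?_, hsup he⟩
      rcases he with he | he
      · exact he.1
      · rw [Set.mem_singleton_iff] at he; exact he ▸ heM
    have hxyF : s(x, y) ∉ M.edgeSet ∩ F.edgeSet := fun h => heF h.2
    have hcount : (M.edgeSet ∩ F.edgeSet).ncard + 1 ≤ (M.edgeSet ∩ F''.edgeSet).ncard := by
      calc (M.edgeSet ∩ F.edgeSet).ncard + 1
          = ((M.edgeSet ∩ F.edgeSet) ∪ {s(x, y)}).ncard := by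
            rw [Set.union_singleton, Set.ncard_insert_of_notMem hxyF (Set.toFinite _)]
        _ ≤ _ := Set.ncard_le_ncard hsub'' (Set.toFinite _)
    have := hmax F'' hF''
    omega
  -- partner facts
  have hpartner : ∀ u v : W, F.Adj u v → s(u, v) ∉ M.edgeSet → True := fun _ _ _ _ => trivial
  by_cases hx : x ∈ F.verts
  · obtain ⟨z, hxz, hzu⟩ := hFd.1 hx
    have hzny : z ≠ y := by
      rintro rfl
      exact heF (SimpleGraph.Subgraph.mem_edgeSet.mpr hxz)
    have hznx : z ≠ x := (F.adj_sub hxz).ne'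
    have hxzM : s(x, z) ∉ M.edgeSet := by
      intro h
      exact hzny ((hM (M.edge_vert hMxy)).unique (SimpleGraph.Subgraph.mem_edgeSet.mp h) hMxy)
    by_cases hy : y ∈ F.verts
    · -- Case 3: both covered
      obtain ⟨w, hyw, hwu⟩ := hFd.1 hy
      have hwnx : w ≠ x := by
        rintro rfl
        exact heF (by rw [Sym2.eq_swap]; exact SimpleGraph.Subgraph.mem_edgeSet.mpr hyw)
      have hwny : w ≠ y := (F.adj_sub hyw).ne'
      have hznw : z ≠ w := by
        rintro rfl
        exact hxny ((hFd.1 (F.edge_vert (F.adj_symm hxz))).unique (F.adj_symm hxz) (F.adj_symm hyw))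
      have hywM : s(y, w) ∉ M.edgeSet := by
        intro h
        exact hwnx ((hM (M.edge_vert (M.adj_symm hMxy))).unique
          (SimpleGraph.Subgraph.mem_edgeSet.mp h) (M.adj_symm hMxy))
      -- remove the two edges, add s(x,y), then fill up to a k-matching and extend
      set F1 := restrictE F (F.edgeSet \ {s(x, z)}) with hF1
      have hF1m : F1.IsMatching := restrictE_isMatching hFd.1 _
      have hF1v : F1.verts = F.verts \ {x, z} := restrictE_verts_sdiff hFd.1 hxz
      have hF1e : F1.edgeSet = F.edgeSet \ {s(x, z)} := restrictE_edgeSet F Set.diff_subset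
      have hF1yw : F1.Adj y w := by
        refine ⟨hyw, ?_, ?_⟩
        · exact SimpleGraph.Subgraph.mem_edgeSet.mpr hyw
        · rw [Set.mem_singleton_iff, Sym2.eq_iff]
          rintro (⟨h1, h2⟩ | ⟨h1, h2⟩)
          · exact hxny h1.symm
          · exact hzny h1.symm
      set F2 := restrictE F1 (F1.edgeSet \ {s(y, w)}) with hF2
      have hF2m : F2.IsMatching := restrictE_isMatching hF1m _
      have hF2v : F2.verts = (F.verts \ {x, z}) \ {y, w} := by
        rw [hF2, restrictE_verts_sdiff hF1m hF1yw, hF1v]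
      have hF2e : F2.edgeSet = (F.edgeSet \ {s(x, z)}) \ {s(y, w)} := by
        rw [hF2, restrictE_edgeSet F1 Set.diff_subset, hF1e]
      have hxF2 : x ∉ F2.verts := by rw [hF2v]; rintro ⟨⟨-, h⟩, -⟩; exact h (Or.inl rfl)
      have hyF2 : y ∉ F2.verts := by rw [hF2v]; rintro ⟨-, h⟩; exact h (Or.inl rfl)
      set F3 := F2 ⊔ H.subgraphOfAdj hGxy with hF3
      have hF3m : F3.IsMatching := sup_edge_isMatching hF2m hGxy hxF2 hyF2
      have hF3e : F3.edgeSet = ((F.edgeSet \ {s(x, z)}) \ {s(y, w)}) ∪ {s(x, y)} := by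
        rw [hF3, SimpleGraph.Subgraph.edgeSet_sup, hF2e,
          SimpleGraph.edgeSet_subgraphOfAdj]
      -- count edges of F3
      have hxzF : s(x, z) ∈ F.edgeSet := SimpleGraph.Subgraph.mem_edgeSet.mpr hxz
      have hywF : s(y, w) ∈ F.edgeSet := SimpleGraph.Subgraph.mem_edgeSet.mpr hyw
      have hxyne1 : s(x, y) ∉ (F.edgeSet \ {s(x, z)}) \ {s(y, w)} := fun h => heF h.1.1
      have hywne : s(y, w) ∈ F.edgeSet \ {s(x, z)} := by
        refine ⟨hywF, ?_⟩
        rw [Set.mem_singleton_iff, Sym2.eq_iff]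
        rintro (⟨h1, h2⟩ | ⟨h1, h2⟩)
        · exact hxny h1.symm
        · exact hzny h1.symm
      have hF3card : k ≤ F3.edgeSet.ncard := by
        have h1 : (F.edgeSet \ {s(x, z)}).ncard = F.edgeSet.ncard - 1 :=
          Set.ncard_diff_singleton_of_mem hxzF
        have h2 : ((F.edgeSet \ {s(x, z)}) \ {s(y, w)}).ncard = F.edgeSet.ncard - 2 := by
          rw [Set.ncard_diff_singleton_of_mem hywne, h1]
          have := hFdbig F hFd
          omega
        have h3 : F3.edgeSet.ncard = F.edgeSet.ncard - 2 + 1 := by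
          rw [hF3e, Set.union_singleton, Set.ncard_insert_of_notMem hxyne1 (Set.toFinite _), h2]
        have := hFdbig F hFd
        omega
      -- the edges we must keep
      set E0 := (M.edgeSet ∩ F.edgeSet) ∪ {s(x, y)} with hE0
      have hE0sub : E0 ⊆ F3.edgeSet := by
        rw [hF3e]
        rintro e (he | he)
        · left
          refine ⟨⟨he.2, ?_⟩, ?_⟩
          · rw [Set.mem_singleton_iff]; rintro rfl; exact hxzM he.1
          · rw [Set.mem_singleton_iff]; rintro rfl; exact hywM he.1
        · right; exact he
      have hE0card : E0.ncard ≤ k := by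
        have hsubM : E0 ⊆ M.edgeSet := by
          rintro e (he | he)
          · exact he.1
          · rw [Set.mem_singleton_iff] at he; exact he ▸ heM
        exact le_trans (Set.ncard_le_ncard hsubM (Set.toFinite _)) hMk
      obtain ⟨E1, hE1sub, hE1sub', hE1card⟩ :=
        Set.exists_subsuperset_card_eq hE0sub hE0card hF3card
      set N := restrictE F3 E1 with hN
      have hNm : N.IsMatching := restrictE_isMatching hF3m _
      have hNe : N.edgeSet = E1 := restrictE_edgeSet F3 hE1sub'
      have hNk : IsKMatching N k := by
        refine ⟨hNm, ?_⟩
        rw [isMatching_ncard_verts hNm, hNe, hE1card]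
      obtain ⟨F4, hNF4, hF4d⟩ := hext N hNk
      refine contra F4 hF4d ?_
      intro e he
      exact SimpleGraph.Subgraph.edgeSet_mono hNF4 (hNe ▸ hE1sub he)
    · -- Case 2a: x covered, y not
      set F1 := restrictE F (F.edgeSet \ {s(x, z)}) with hF1
      have hF1m : F1.IsMatching := restrictE_isMatching hFd.1 _
      have hF1v : F1.verts = F.verts \ {x, z} := restrictE_verts_sdiff hFd.1 hxz
      have hF1e : F1.edgeSet = F.edgeSet \ {s(x, z)} := restrictE_edgeSet F Set.diff_subset
      have hxF1 : x ∉ F1.verts := by rw [hF1v]; rintro ⟨-, h⟩; exact h (Or.inl rfl)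
      have hyF1 : y ∉ F1.verts := by rw [hF1v]; rintro ⟨h, -⟩; exact hy h
      set F2 := F1 ⊔ H.subgraphOfAdj hGxy with hF2
      have hF2m : F2.IsMatching := sup_edge_isMatching hF1m hGxy hxF1 hyF1
      refine contra F2 ⟨hF2m, ?_⟩ ?_
      · -- verts count
        have hv2 : F2.verts = (F.verts \ {x, z}) ∪ {x, y} := by
          rw [hF2, SimpleGraph.Subgraph.verts_sup, hF1v, SimpleGraph.subgraphOfAdj_verts]
        have hdisj : Disjoint (F.verts \ {x, z} : Set W) {x, y} := by
          rw [Set.disjoint_right]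
          rintro a (rfl | rfl)
          · rintro ⟨-, h⟩; exact h (Or.inl rfl)
          · rintro ⟨h, -⟩; exact hy h
        have hzv : z ∈ F.verts := F.edge_vert (F.adj_symm hxz)
        have hcv : (F.verts \ {x, z}).ncard = F.verts.ncard - 2 := by
          rw [Set.ncard_diff (by simp [Set.insert_subset_iff, hx, hzv]) (Set.toFinite _),
            Set.ncard_pair (fun h => hznx h.symm)]
        have h2le : 2 ≤ F.verts.ncard := by
          calc 2 = ({x, z} : Set W).ncard := (Set.ncard_pair (fun h => hznx h.symm)).symm
          _ ≤ _ := Set.ncard_le_ncard (by simp [Set.insert_subset_iff, hx, hzv])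
              (Set.toFinite _)
        rw [hv2, Set.ncard_union_eq hdisj (Set.toFinite _) (Set.toFinite _), hcv,
          Set.ncard_pair hxny, hFd.2]
        have hNd : d + 2 ≤ Nat.card W := by omega
        omega
      · -- edge containment
        have hF2e : F2.edgeSet = (F.edgeSet \ {s(x, z)}) ∪ {s(x, y)} := by
          rw [hF2, SimpleGraph.Subgraph.edgeSet_sup, hF1e, SimpleGraph.edgeSet_subgraphOfAdj]
        rw [hF2e]
        rintro e (he | he)
        · left
          refine ⟨he.2, ?_⟩
          rw [Set.mem_singleton_iff]; rintro rfl; exact hxzM he.1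
        · right; exact he
  · by_cases hy : y ∈ F.verts
    · -- Case 2b: y covered, x not (symmetric)
      obtain ⟨w, hyw, hwu⟩ := hFd.1 hy
      have hwnx : w ≠ x := by
        rintro rfl
        exact heF (by rw [Sym2.eq_swap]; exact SimpleGraph.Subgraph.mem_edgeSet.mpr hyw)
      have hwny : w ≠ y := (F.adj_sub hyw).ne'
      have hywM : s(y, w) ∉ M.edgeSet := by
        intro h
        exact hwnx ((hM (M.edge_vert (M.adj_symm hMxy))).unique
          (SimpleGraph.Subgraph.mem_edgeSet.mp h) (M.adj_symm hMxy))
      set F1 := restrictE F (F.edgeSet \ {s(y, w)}) with hF1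
      have hF1m : F1.IsMatching := restrictE_isMatching hFd.1 _
      have hF1v : F1.verts = F.verts \ {y, w} := restrictE_verts_sdiff hFd.1 hyw
      have hF1e : F1.edgeSet = F.edgeSet \ {s(y, w)} := restrictE_edgeSet F Set.diff_subset
      have hxF1 : x ∉ F1.verts := by rw [hF1v]; rintro ⟨h, -⟩; exact hx h
      have hyF1 : y ∉ F1.verts := by rw [hF1v]; rintro ⟨-, h⟩; exact h (Or.inl rfl)
      set F2 := F1 ⊔ H.subgraphOfAdj hGxy with hF2
      have hF2m : F2.IsMatching := sup_edge_isMatching hF1m hGxy hxF1 hyF1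
      refine contra F2 ⟨hF2m, ?_⟩ ?_
      · have hv2 : F2.verts = (F.verts \ {y, w}) ∪ {x, y} := by
          rw [hF2, SimpleGraph.Subgraph.verts_sup, hF1v, SimpleGraph.subgraphOfAdj_verts]
        have hdisj : Disjoint (F.verts \ {y, w} : Set W) {x, y} := by
          rw [Set.disjoint_right]
          rintro a (rfl | rfl)
          · rintro ⟨h, -⟩; exact hx h
          · rintro ⟨-, h⟩; exact h (Or.inl rfl)
        have hwv : w ∈ F.verts := F.edge_vert (F.adj_symm hyw)
        have hcv : (F.verts \ {y, w}).ncard = F.verts.ncard - 2 := by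
          rw [Set.ncard_diff (by simp [Set.insert_subset_iff, hy, hwv]) (Set.toFinite _),
            Set.ncard_pair (fun h => hwny h.symm)]
        have h2le : 2 ≤ F.verts.ncard := by
          calc 2 = ({y, w} : Set W).ncard := (Set.ncard_pair (fun h => hwny h.symm)).symm
          _ ≤ _ := Set.ncard_le_ncard (by simp [Set.insert_subset_iff, hy, hwv])
              (Set.toFinite _)
        rw [hv2, Set.ncard_union_eq hdisj (Set.toFinite _) (Set.toFinite _), hcv,
          Set.ncard_pair hxny, hFd.2]
        have hNd : d + 2 ≤ Nat.card W := by omega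
        omega
      · have hF2e : F2.edgeSet = (F.edgeSet \ {s(y, w)}) ∪ {s(x, y)} := by
          rw [hF2, SimpleGraph.Subgraph.edgeSet_sup, hF1e, SimpleGraph.edgeSet_subgraphOfAdj]
        rw [hF2e]
        rintro e (he | he)
        · left
          refine ⟨he.2, ?_⟩
          rw [Set.mem_singleton_iff]; rintro rfl; exact hywM he.1
        · right; exact he
    · -- Case 1: neither covered
      set F1 := F ⊔ H.subgraphOfAdj hGxy with hF1
      have hF1m : F1.IsMatching := sup_edge_isMatching hFd.1 hGxy hx hy
      have hF1e : F1.edgeSet = F.edgeSet ∪ {s(x, y)} := by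
        rw [hF1, SimpleGraph.Subgraph.edgeSet_sup, SimpleGraph.edgeSet_subgraphOfAdj]
      -- find an F-edge not in M
      have hfex : ∃ f, f ∈ F.edgeSet ∧ f ∉ M.edgeSet := by
        by_contra hcon
        push_neg at hcon
        have := Set.ncard_le_ncard hcon (Set.toFinite _)
        have := hFdbig F hFd
        omega
      obtain ⟨f, hfF, hfM⟩ := hfex
      have hfne : f ≠ s(x, y) := by rintro rfl; exact heF hfF
      set F2 := restrictE F1 (F1.edgeSet \ {f}) with hF2
      have hF2m : F2.IsMatching := restrictE_isMatching hF1m _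
      have hF2e : F2.edgeSet = (F.edgeSet ∪ {s(x, y)}) \ {f} := by
        rw [hF2, restrictE_edgeSet F1 Set.diff_subset, hF1e]
      refine contra F2 ⟨hF2m, ?_⟩ ?_
      · -- vertex count via edge count
        rw [isMatching_ncard_verts hF2m, hF2e]
        have hxyF : s(x, y) ∉ F.edgeSet := heF
        have hc1 : (F.edgeSet ∪ {s(x, y)}).ncard = F.edgeSet.ncard + 1 := by
          rw [Set.union_singleton, Set.ncard_insert_of_notMem hxyF (Set.toFinite _)]
        have hfmem : f ∈ F.edgeSet ∪ {s(x, y)} := Or.inl hfF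
        have hc2 : ((F.edgeSet ∪ {s(x, y)}) \ {f}).ncard = F.edgeSet.ncard := by
          rw [Set.ncard_diff_singleton_of_mem hfmem, hc1]
          omega
        rw [hc2]
        exact hFdedges F hFd
      · rw [hF2e]
        rintro e (he | he)
        · refine ⟨Or.inl he.2, ?_⟩
          rw [Set.mem_singleton_iff]; rintro rfl; exact hfM he.1
        · refine ⟨Or.inr he, ?_⟩
          rw [Set.mem_singleton_iff] at he ⊢
          exact fun hcon => hfne (hcon.symm.trans he)



variable {V : Type*} {G : SimpleGraph V}

/-- The inclusion homomorphism from an induced subgraph. -/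
def upHom (G : SimpleGraph V) (A : Set V) : G.induce A →g G :=
  ⟨Subtype.val, fun h => h⟩

/-- Push a subgraph of an induced subgraph up to the ambient graph. -/
def up {A : Set V} (M : (G.induce A).Subgraph) : G.Subgraph :=
  M.map (upHom G A)

lemma up_verts {A : Set V} (M : (G.induce A).Subgraph) :
    (up M).verts = Subtype.val '' M.verts := rfl

lemma up_isMatching {A : Set V} {M : (G.induce A).Subgraph} (hM : M.IsMatching) :
    (up M).IsMatching :=
  SimpleGraph.Subgraph.IsMatching.map _ Subtype.val_injective hM

lemma up_verts_ncard {A : Set V} (M : (G.induce A).Subgraph) :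
    (up M).verts.ncard = M.verts.ncard := by
  rw [up_verts, Set.ncard_image_of_injective _ Subtype.val_injective]

lemma up_verts_subset {A : Set V} (M : (G.induce A).Subgraph) : (up M).verts ⊆ A := by
  rw [up_verts]
  rintro v ⟨a, -, rfl⟩
  exact a.2

lemma up_mono {A : Set V} {M M' : (G.induce A).Subgraph} (h : M ≤ M') : up M ≤ up M' :=
  SimpleGraph.Subgraph.map_mono h

/-- Pull a subgraph of the ambient graph down into an induced subgraph containing
all its vertices. -/
def down (A : Set V) (M : G.Subgraph) (h : M.verts ⊆ A) : (G.induce A).Subgraph where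
  verts := Subtype.val ⁻¹' M.verts
  Adj a b := M.Adj a b
  adj_sub h' := M.adj_sub h'
  edge_vert h' := M.edge_vert h'
  symm := ⟨fun a b h' => M.adj_symm h'⟩

lemma down_isMatching {A : Set V} {M : G.Subgraph} (h : M.verts ⊆ A)
    (hM : M.IsMatching) : (down A M h).IsMatching := by
  rintro ⟨v, hvA⟩ hv
  obtain ⟨w, hw, hu⟩ := hM hv
  refine ⟨⟨w, h (M.edge_vert (M.adj_symm hw))⟩, hw, ?_⟩
  rintro ⟨y, hy⟩ hadj
  exact Subtype.ext (hu y hadj)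

lemma down_verts_ncard {A : Set V} (M : G.Subgraph) (h : M.verts ⊆ A) :
    (down A M h).verts.ncard = M.verts.ncard := by
  have himg : Subtype.val '' ((down A M h).verts : Set A) = M.verts := by
    rw [show ((down A M h).verts : Set A) = Subtype.val ⁻¹' M.verts from rfl]
    rw [Set.image_preimage_eq_iff.mpr (by rw [Subtype.range_val]; exact h)]
  rw [← himg, Set.ncard_image_of_injective _ Subtype.val_injective]

lemma le_down {A : Set V} {M0 : (G.induce A).Subgraph} {F : G.Subgraph}
    (hF : F.verts ⊆ A) (hle : up M0 ≤ F) : M0 ≤ down A F hF := by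
  constructor
  · intro v hv
    exact hle.1 ⟨v, hv, rfl⟩
  · intro a b hadj
    exact hle.2 ⟨a, b, hadj, rfl, rfl⟩

lemma le_up_down {A : Set V} (M : G.Subgraph) (h : M.verts ⊆ A) :
    M ≤ up (down A M h) := by
  constructor
  · intro v hv
    exact ⟨⟨v, h hv⟩, hv, rfl⟩
  · intro a b hadj
    exact ⟨⟨a, h (M.edge_vert hadj)⟩, ⟨b, h (M.edge_vert (M.adj_symm hadj))⟩, hadj, rfl, rfl⟩


variable [Fintype V]

lemma card_compl_coe (S : Finset V) :
    Nat.card ↥((S : Set V)ᶜ) = Nat.card V - S.card := by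
  rw [Nat.card_coe_set_eq]
  have h := Set.ncard_add_ncard_compl (S : Set V)
  rw [Set.ncard_coe_finset] at h
  omega

lemma extendG {n k d : ℕ} (hG : IsNkdGraph G n k d) (S : Finset V) (hS : S.card = n)
    (M : G.Subgraph) (hM : M.IsMatching) (hMv : M.verts ⊆ ((S : Set V)ᶜ))
    (hMk : M.verts.ncard ≤ 2 * k) :
    ∃ F : G.Subgraph, M ≤ F ∧ F.IsMatching ∧ F.verts ⊆ ((S : Set V)ᶜ) ∧
      F.verts.ncard = Nat.card V - n - d := by
  obtain ⟨hcard, -, hprop⟩ := hG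
  obtain ⟨hex, hext⟩ := hprop S hS
  have hWcard : Nat.card ↥((S : Set V)ᶜ) = Nat.card V - S.card := card_compl_coe S
  have hMdm : (down _ M hMv).IsMatching := down_isMatching hMv hM
  have hMdk : (down _ M hMv).edgeSet.ncard ≤ k := by
    have h1 := isMatching_ncard_verts hMdm
    have h2 := down_verts_ncard M hMv
    omega
  obtain ⟨F', hleF', hF'd⟩ :=
    extend_small k d (by rw [hWcard, hS]; omega) hex hext (down _ M hMv) hMdm hMdk
  refine ⟨up F', le_trans (le_up_down M hMv) (up_mono hleF'), up_isMatching hF'd.1,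
    up_verts_subset F', ?_⟩
  rw [up_verts_ncard, hF'd.2, hWcard, hS]

lemma extend_relative {n k d : ℕ} (hG : IsNkdGraph G n k d) (m : ℕ) :
    ∀ S' : Finset V, 2 * m ≤ n → S'.card = n - 2 * m →
    ∀ M : G.Subgraph, M.IsMatching → M.verts ⊆ ((S' : Set V)ᶜ) → M.verts.ncard ≤ 2 * k →
    ∃ F : G.Subgraph, M ≤ F ∧ F.IsMatching ∧ F.verts ⊆ ((S' : Set V)ᶜ) ∧
      F.verts.ncard = Nat.card V - S'.card - d := by
  classical
  induction m with
  | zero =>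
    intro S' _ hcard M hM hMv hMk
    have h := extendG hG S' (by omega) M hM hMv hMk
    rw [hcard]
    simpa using h
  | succ m ih =>
    intro S' hm hcard M hM hMv hMk
    have hV := hG.1
    -- find two vertices outside S' and M
    have hUcard : ((S' : Set V) ∪ M.verts).ncard ≤ (n - 2 * m - 2) + 2 * k := by
      refine le_trans (Set.ncard_union_le _ _) ?_
      rw [Set.ncard_coe_finset, hcard]
      omega
    have hUc : 1 < (((S' : Set V) ∪ M.verts)ᶜ).ncard := by
      have h1 := Set.ncard_add_ncard_compl ((S' : Set V) ∪ M.verts)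
      omega
    obtain ⟨x0, y0, hx0, hy0, hxy0⟩ := (Set.one_lt_ncard_iff (Set.toFinite _)).mp hUc
    rw [Set.mem_compl_iff, Set.mem_union, not_or] at hx0 hy0
    have hx0S : x0 ∉ S' := fun h => hx0.1 h
    have hy0S : y0 ∉ S' := fun h => hy0.1 h
    set S'' := insert x0 (insert y0 S') with hS''def
    have hS''card : S''.card = n - 2 * m := by
      rw [hS''def, Finset.card_insert_of_notMem (by simp [hx0S, hxy0]),
        Finset.card_insert_of_notMem hy0S, hcard]
      omega
    have hMv'' : M.verts ⊆ ((S'' : Set V)ᶜ) := by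
      intro v hv
      simp only [hS''def, Finset.coe_insert, Set.mem_compl_iff, Set.mem_insert_iff,
        Finset.mem_coe, not_or]
      refine ⟨fun h => hx0.2 (h ▸ hv), fun h => hy0.2 (h ▸ hv), fun h => hMv hv h⟩
    obtain ⟨F0, hMF0, hF0m, hF0v, hF0c⟩ := ih S'' (by omega) hS''card M hM hMv'' hMk
    -- find an edge of F0 disjoint from M
    have hlt : M.verts.ncard < F0.verts.ncard := by
      rw [hF0c, hS''card]
      omega
    have hnsub : ¬ F0.verts ⊆ M.verts := by
      intro hsub
      have := Set.ncard_le_ncard hsub (Set.toFinite _)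
      omega
    obtain ⟨v, hvF0, hvM⟩ := Set.not_subset.mp hnsub
    obtain ⟨w, hvw, -⟩ := hF0m hvF0
    have hwM : w ∉ M.verts := by
      intro hwM
      obtain ⟨u, hu, -⟩ := hM hwM
      have hF0wu : F0.Adj w u := hMF0.2 hu
      have huv : u = v := (hF0m (F0.edge_vert hF0wu)).unique hF0wu (F0.adj_symm hvw)
      exact hvM (huv ▸ M.edge_vert (M.adj_symm hu))
    have hGvw : G.Adj v w := F0.adj_sub hvw
    have hvnw : v ≠ w := hGvw.ne
    have hS'S'' : (S' : Set V) ⊆ (S'' : Set V) := by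
      intro a ha
      simp only [hS''def, Finset.coe_insert, Set.mem_insert_iff]
      tauto
    have hvS' : v ∉ S' := fun h => hF0v hvF0 (hS'S'' h)
    have hwS' : w ∉ S' := fun h => hF0v (F0.edge_vert (F0.adj_symm hvw)) (hS'S'' h)
    set S3 := insert v (insert w S') with hS3def
    have hS3card : S3.card = n - 2 * m := by
      rw [hS3def, Finset.card_insert_of_notMem (by simp [hvS', hvnw]),
        Finset.card_insert_of_notMem hwS', hcard]
      omega
    have hMv3 : M.verts ⊆ ((S3 : Set V)ᶜ) := by
      intro a ha
      simp only [hS3def, Finset.coe_insert, Set.mem_compl_iff, Set.mem_insert_iff,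
        Finset.mem_coe, not_or]
      refine ⟨fun h => hvM (h ▸ ha), fun h => hwM (h ▸ ha), fun h => hMv ha h⟩
    obtain ⟨F, hMF, hFm, hFv, hFc⟩ := ih S3 (by omega) hS3card M hM hMv3 hMk
    have hvS3 : (v : V) ∈ (S3 : Set V) := by simp [hS3def]
    have hwS3 : (w : V) ∈ (S3 : Set V) := by simp [hS3def]
    have hvF : v ∉ F.verts := fun h => hFv h hvS3
    have hwF : w ∉ F.verts := fun h => hFv h hwS3
    refine ⟨F ⊔ G.subgraphOfAdj hGvw, le_trans hMF le_sup_left,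
      sup_edge_isMatching hFm hGvw hvF hwF, ?_, ?_⟩
    · rw [SimpleGraph.Subgraph.verts_sup, SimpleGraph.subgraphOfAdj_verts]
      rintro a (ha | ha)
      · intro hmem
        exact hFv ha (by simp [hS3def]; right; right; exact hmem)
      · rcases ha with rfl | rfl
        · exact fun h => hvS' h
        · exact fun h => hwS' h
    · rw [SimpleGraph.Subgraph.verts_sup, SimpleGraph.subgraphOfAdj_verts]
      have hdisj : Disjoint F.verts ({v, w} : Set V) := by
        rw [Set.disjoint_right]
        rintro a (rfl | rfl) <;> assumption
      rw [Set.ncard_union_eq hdisj (Set.toFinite _) (Set.toFinite _),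
        Set.ncard_pair hvnw, hFc, hS3card, hcard]
      omega

end NkdAux

theorem stmt_1 {V : Type*} [Fintype V] (G : SimpleGraph V) (n k d n' k' : ℕ)
    (hG : IsNkdGraph G n k d) (hn : n' ≤ n) (hk : k' ≤ k) (hpar : n' % 2 = n % 2) :
    IsNkdGraph G n' k' d := by
  classical
  obtain ⟨m, hmeq⟩ : ∃ m, n - n' = 2 * m := ⟨(n - n') / 2, by omega⟩
  have hVcard := hG.1
  refine ⟨by omega, ?_, ?_⟩
  · obtain ⟨r, hr⟩ := hG.2.1
    exact ⟨r + m, by omega⟩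
  · intro S' hS'
    constructor
    · -- existence of a k'-matching
      have hnuniv : n ≤ (Finset.univ : Finset V).card := by
        rw [Finset.card_univ, ← Nat.card_eq_fintype_card]
        omega
      obtain ⟨S, hsub, -, hScard⟩ := Finset.exists_subsuperset_card_eq (n := n)
        (Finset.subset_univ S') (by omega) hnuniv
      obtain ⟨⟨M0, hM0⟩, -⟩ := hG.2.2 S hScard
      have hM0m : (NkdAux.up M0).IsMatching := NkdAux.up_isMatching hM0.1
      have hM0e : (NkdAux.up M0).edgeSet.ncard = k := by
        have h1 := NkdAux.isMatching_ncard_verts hM0m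
        have h2 := NkdAux.up_verts_ncard M0
        have h3 := hM0.2
        omega
      obtain ⟨E1, hE1sub, hE1card⟩ :=
        Set.exists_subset_card_eq (s := (NkdAux.up M0).edgeSet) (n := k') (by omega)
      set N := NkdAux.restrictE (NkdAux.up M0) E1 with hN
      have hNm : N.IsMatching := NkdAux.restrictE_isMatching hM0m _
      have hNv : N.verts ⊆ ((S' : Set V)ᶜ) := by
        refine le_trans (le_trans (NkdAux.restrictE_le _ _).1 (NkdAux.up_verts_subset M0)) ?_
        intro a ha hmem
        exact ha (hsub hmem)
      refine ⟨NkdAux.down _ N hNv, NkdAux.down_isMatching hNv hNm, ?_⟩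
      rw [NkdAux.down_verts_ncard, NkdAux.isMatching_ncard_verts hNm,
        NkdAux.restrictE_edgeSet _ hE1sub, hE1card]
    · -- extension of k'-matchings
      intro M hMk'
      have hup : (NkdAux.up M).IsMatching := NkdAux.up_isMatching hMk'.1
      have hupv : (NkdAux.up M).verts ⊆ ((S' : Set V)ᶜ) := NkdAux.up_verts_subset M
      have hupc : (NkdAux.up M).verts.ncard ≤ 2 * k := by
        rw [NkdAux.up_verts_ncard, hMk'.2]
        omega
      obtain ⟨F, hleF, hFm, hFv, hFc⟩ := NkdAux.extend_relative hG m S' (by omega)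
        (by omega) (NkdAux.up M) hup hupv hupc
      refine ⟨NkdAux.down _ F hFv, NkdAux.le_down hFv hleF,
        NkdAux.down_isMatching hFv hFm, ?_⟩
      rw [NkdAux.down_verts_ncard, hFc, hS', NkdAux.card_compl_coe, hS']
end

section
/- Let G be an (n,k,0)-graph with n ≥ 2 and k ≥ 1. Then for any edge e of G, the graph G−e obtained by deleting the edge e is an (n−2, k, 0)-graph. -/
open SimpleGraph

section Bridge

variable {V : Type*} {G H : SimpleGraph V} {s : Set V}

/-- Lift a subgraph of an induced graph `H.induce s` (with `H ≤ G`) to a subgraph of `G`. -/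
def myUp (hle : H ≤ G) (M : (H.induce s).Subgraph) : G.Subgraph where
  verts := Subtype.val '' M.verts
  Adj a b := ∃ (ha : a ∈ s) (hb : b ∈ s), M.Adj ⟨a, ha⟩ ⟨b, hb⟩
  adj_sub := by rintro a b ⟨ha, hb, h⟩; exact hle (M.adj_sub h)
  edge_vert := by rintro a b ⟨ha, hb, h⟩; exact ⟨⟨a, ha⟩, M.edge_vert h, rfl⟩
  symm := ⟨by rintro a b ⟨ha, hb, h⟩; exact ⟨hb, ha, h.symm⟩⟩

lemma myUp_verts_subset (hle : H ≤ G) (M : (H.induce s).Subgraph) :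
    (myUp hle M).verts ⊆ s := by
  rintro a ⟨x, _, rfl⟩; exact x.2

lemma myUp_ncard (hle : H ≤ G) (M : (H.induce s).Subgraph) :
    (myUp hle M).verts.ncard = M.verts.ncard :=
  Set.ncard_image_of_injective _ Subtype.val_injective

lemma myUp_isMatching (hle : H ≤ G) {M : (H.induce s).Subgraph} (hM : M.IsMatching) :
    (myUp hle M).IsMatching := by
  rintro a ⟨x, hxM, rfl⟩
  obtain ⟨w, hw, hwu⟩ := hM hxM
  refine ⟨↑w, ⟨x.2, w.2, hw⟩, ?_⟩
  rintro y ⟨hy1, hy2, hy⟩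
  exact congrArg Subtype.val (hwu ⟨y, hy2⟩ hy)

lemma myUp_adj_sub (hle : H ≤ G) {M : (H.induce s).Subgraph} {a b : V}
    (h : (myUp hle M).Adj a b) : H.Adj a b := by
  obtain ⟨ha, hb, h⟩ := h; exact M.adj_sub h

/-- Push an ambient subgraph down into an induced graph. -/
def myDown (N : G.Subgraph) (ha : ∀ ⦃a b⦄, N.Adj a b → H.Adj a b) : (H.induce s).Subgraph where
  verts := Subtype.val ⁻¹' N.verts
  Adj a b := N.Adj ↑a ↑b
  adj_sub h := ha h
  edge_vert h := N.edge_vert h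
  symm := ⟨fun a b (h : N.Adj ↑a ↑b) => h.symm⟩

lemma myDown_isMatching {N : G.Subgraph} {ha : ∀ ⦃a b⦄, N.Adj a b → H.Adj a b}
    (hN : N.IsMatching) (hv : N.verts ⊆ s) : (myDown (s := s) N ha).IsMatching := by
  rintro a haN
  obtain ⟨w, hw, hwu⟩ := hN haN
  have hws : w ∈ s := hv (N.edge_vert hw.symm)
  refine ⟨⟨w, hws⟩, hw, ?_⟩
  rintro y hy
  exact Subtype.ext (hwu ↑y hy)

lemma myDown_ncard {N : G.Subgraph} {ha : ∀ ⦃a b⦄, N.Adj a b → H.Adj a b}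
    (hv : N.verts ⊆ s) : (myDown (s := s) N ha).verts.ncard = N.verts.ncard := by
  have himg : Subtype.val '' (Subtype.val ⁻¹' N.verts : Set s) = N.verts := by
    rw [Set.image_preimage_eq_inter_range, Subtype.range_coe]
    exact Set.inter_eq_self_of_subset_left hv
  calc (myDown (s := s) N ha).verts.ncard
      = (Subtype.val '' (Subtype.val ⁻¹' N.verts : Set s)).ncard :=
        (Set.ncard_image_of_injective _ Subtype.val_injective).symm
    _ = N.verts.ncard := by rw [himg]

lemma le_myDown {M : (H.induce s).Subgraph} {N : G.Subgraph}
    {ha : ∀ ⦃a b⦄, N.Adj a b → H.Adj a b} (hle : H ≤ G)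
    (h : myUp hle M ≤ N) : M ≤ myDown (s := s) N ha := by
  constructor
  · intro a haM; exact h.1 ⟨a, haM, rfl⟩
  · intro a b hab; exact h.2 ⟨a.2, b.2, hab⟩

lemma le_myUp {N : G.Subgraph} {ha : ∀ ⦃a b⦄, N.Adj a b → H.Adj a b}
    {M' : (H.induce s).Subgraph} (hle : H ≤ G)
    (hv : N.verts ⊆ s) (h : myDown (s := s) N ha ≤ M') : N ≤ myUp hle M' := by
  constructor
  · intro a haN; exact ⟨⟨a, hv haN⟩, h.1 haN, rfl⟩
  · intro a b hab
    have has : a ∈ s := hv (N.edge_vert hab)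
    have hbs : b ∈ s := hv (N.edge_vert hab.symm)
    exact ⟨has, hbs, h.2 hab⟩

end Bridge

section Helpers

variable {V : Type*} [Fintype V] [DecidableEq V] {G : SimpleGraph V}

omit [Fintype V] [DecidableEq V] in
lemma partner_not_mem {N₀ N₁ : G.Subgraph} (h₀ : N₀.IsMatching) (h₁ : N₁.IsMatching)
    (hle : N₀ ≤ N₁) {p q : V} (hp : p ∉ N₀.verts) (hadj : N₁.Adj p q) : q ∉ N₀.verts := by
  intro hq
  obtain ⟨r, hr, _⟩ := h₀ hq
  have huniq := h₁ (N₁.edge_vert hadj.symm)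
  have : r = p := huniq.unique (hle.2 hr) hadj.symm
  exact hp (this ▸ N₀.edge_vert hr.symm)

lemma compl_union_pair (S : Finset V) (a b : V) :
    ((↑(S ∪ {a, b}) : Set V))ᶜ = ((S : Set V))ᶜ \ {a, b} := by
  ext z
  simp only [Finset.coe_union, Set.mem_compl_iff, Set.mem_union, Finset.coe_insert,
    Finset.coe_singleton, Set.mem_diff, Set.mem_insert_iff, Set.mem_singleton_iff,
    Finset.mem_coe]
  tauto

lemma card_union_pair {S : Finset V} {a b : V} (ha : a ∉ S) (hb : b ∉ S) (hab : a ≠ b) :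
    (S ∪ {a, b}).card = S.card + 2 := by
  rw [Finset.card_union_of_disjoint, Finset.card_insert_of_notMem (by simpa using hab),
    Finset.card_singleton]
  simp only [Finset.disjoint_left]
  rintro x hx hmem
  rcases Finset.mem_insert.mp hmem with rfl | hmem
  · exact ha hx
  · rw [Finset.mem_singleton] at hmem; exact hb (hmem ▸ hx)

lemma closeUp {n k : ℕ}
    (hExt : ∀ S' : Finset V, S'.card = n → ∀ N : G.Subgraph, N.IsMatching →
      N.verts.ncard = 2 * k → N.verts ⊆ ((S' : Set V))ᶜ →
      ∃ N' : G.Subgraph, N ≤ N' ∧ N'.IsMatching ∧ N'.verts = ((S' : Set V))ᶜ)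
    (hn : 2 ≤ n) (S : Finset V) (hS : S.card = n - 2)
    (N₀ : G.Subgraph) (h₀ : N₀.IsMatching) (h₀c : N₀.verts.ncard = 2 * k)
    (h₀v : N₀.verts ⊆ ((S : Set V))ᶜ)
    {p q : V} (hpq : G.Adj p q)
    (hp : p ∈ ((S : Set V))ᶜ \ N₀.verts) (hq : q ∈ ((S : Set V))ᶜ \ N₀.verts) :
    ∃ N' : G.Subgraph, N₀ ≤ N' ∧ N'.IsMatching ∧ N'.verts = ((S : Set V))ᶜ ∧ N'.Adj p q := by
  have hps : p ∉ S := by simpa using hp.1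
  have hqs : q ∉ S := by simpa using hq.1
  have hcard2 : (S ∪ {p, q}).card = n := by
    rw [card_union_pair hps hqs hpq.ne, hS]; omega
  have hsub0 : N₀.verts ⊆ ((↑(S ∪ {p, q}) : Set V))ᶜ := by
    rw [compl_union_pair]
    intro a ha
    refine ⟨h₀v ha, ?_⟩
    rintro (rfl | rfl)
    · exact hp.2 ha
    · exact hq.2 ha
  obtain ⟨N₂, hle₂, hN₂, hv₂⟩ := hExt (S ∪ {p, q}) hcard2 N₀ h₀ h₀c hsub0
  have hEmatch := SimpleGraph.Subgraph.IsMatching.subgraphOfAdj hpq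
  have hEverts : (G.subgraphOfAdj hpq).verts = {p, q} := rfl
  have hdisj : Disjoint N₂.support (G.subgraphOfAdj hpq).support := by
    have h1 : N₂.support ⊆ ((S : Set V))ᶜ \ {p, q} := by
      rw [hN₂.support_eq_verts, hv₂, compl_union_pair]
    have h2 : (G.subgraphOfAdj hpq).support ⊆ ({p, q} : Set V) :=
      hEverts ▸ SimpleGraph.Subgraph.support_subset_verts _
    exact Set.disjoint_of_subset h1 h2 Set.disjoint_sdiff_left
  refine ⟨N₂ ⊔ G.subgraphOfAdj hpq, le_trans hle₂ le_sup_left, hN₂.sup hEmatch hdisj, ?_, ?_⟩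
  · rw [SimpleGraph.Subgraph.verts_sup, hv₂, compl_union_pair, hEverts]
    apply Set.diff_union_of_subset
    rintro z (rfl | rfl)
    · exact hp.1
    · exact hq.1
  · exact Or.inr (by simp)

end Helpers

theorem stmt_4 {V : Type*} [Fintype V] (G : SimpleGraph V) (n k : ℕ)
    (hG : IsNkdGraph G n k 0) (hn : 2 ≤ n) (hk : 1 ≤ k)
    (u v : V) (huv : G.Adj u v) :
    IsNkdGraph (G.deleteEdges {s(u, v)}) (n - 2) k 0 := by
  classical
  obtain ⟨hcard, heven, hprop⟩ := hG
  have hNc : Nat.card V = Fintype.card V := Nat.card_eq_fintype_card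
  have hdel : G.deleteEdges {s(u, v)} ≤ G := SimpleGraph.deleteEdges_le _
  have hdeluv : ¬ (G.deleteEdges {s(u, v)}).Adj u v := by simp
  have hcompl : ∀ S' : Finset V, ((S' : Set V))ᶜ.ncard = Nat.card V - S'.card := by
    intro S'
    have h := Set.ncard_add_ncard_compl (↑S' : Set V)
    rw [Set.ncard_coe_finset] at h
    omega
  have hEx : ∀ S' : Finset V, S'.card = n →
      ∃ N : G.Subgraph, N.IsMatching ∧ N.verts.ncard = 2 * k ∧ N.verts ⊆ ((S' : Set V))ᶜ := by
    intro S' h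
    obtain ⟨⟨M, hM, hMc⟩, -⟩ := hprop S' h
    exact ⟨myUp le_rfl M, myUp_isMatching _ hM,
      by rw [myUp_ncard]; exact hMc, myUp_verts_subset _ _⟩
  have hExt : ∀ S' : Finset V, S'.card = n → ∀ N : G.Subgraph, N.IsMatching →
      N.verts.ncard = 2 * k → N.verts ⊆ ((S' : Set V))ᶜ →
      ∃ N' : G.Subgraph, N ≤ N' ∧ N'.IsMatching ∧ N'.verts = ((S' : Set V))ᶜ := by
    intro S' hS' N hN hNc2 hNv
    obtain ⟨-, hext⟩ := hprop S' hS'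
    have hMk : IsKMatching (myDown (s := ((S' : Set V))ᶜ) N (fun a b h => N.adj_sub h)) k :=
      ⟨myDown_isMatching hN hNv, by rw [myDown_ncard hNv]; exact hNc2⟩
    obtain ⟨M', hle', hM'⟩ := hext _ hMk
    refine ⟨myUp le_rfl M', le_myUp le_rfl hNv hle', myUp_isMatching _ hM'.1, ?_⟩
    apply Set.eq_of_subset_of_ncard_le (myUp_verts_subset _ _) _ (Set.toFinite _)
    rw [myUp_ncard, hM'.2, Nat.sub_zero, Nat.card_coe_set_eq]
  refine ⟨by omega, ?_, ?_⟩
  · obtain ⟨m, hm⟩ := heven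
    exact ⟨m + 1, by omega⟩
  · intro S hS
    constructor
    · -- existence of a k-matching
      obtain ⟨S', hSS', hS'⟩ := Finset.exists_superset_card_eq (s := insert u S) (n := n)
        (by have := Finset.card_insert_le u S; omega) (by omega)
      obtain ⟨N, hN, hNc2, hNv⟩ := hEx S' hS'
      have hv : N.verts ⊆ ((S : Set V))ᶜ := hNv.trans (Set.compl_subset_compl.mpr (by
        intro z hz
        exact Finset.mem_coe.mpr (hSS' (Finset.mem_insert_of_mem (Finset.mem_coe.mp hz)))))
      have hnu : u ∉ N.verts := fun h =>
        (hNv h) (Finset.mem_coe.mpr (hSS' (Finset.mem_insert_self u S)))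
      have ha : ∀ ⦃a b⦄, N.Adj a b → (G.deleteEdges {s(u, v)}).Adj a b := by
        intro a b hab
        rw [SimpleGraph.deleteEdges_adj]
        refine ⟨N.adj_sub hab, ?_⟩
        rw [Set.mem_singleton_iff, Sym2.eq_iff]
        rintro (⟨rfl, rfl⟩ | ⟨rfl, rfl⟩)
        · exact hnu (N.edge_vert hab)
        · exact hnu (N.edge_vert hab.symm)
      exact ⟨myDown N ha, myDown_isMatching hN hv, by rw [myDown_ncard hv]; exact hNc2⟩
    · -- extension
      intro Mbar hMbar
      set N₀ : G.Subgraph := myUp hdel Mbar with hN₀def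
      have h₀ : N₀.IsMatching := myUp_isMatching _ hMbar.1
      have h₀c : N₀.verts.ncard = 2 * k := by rw [hN₀def, myUp_ncard]; exact hMbar.2
      have h₀v : N₀.verts ⊆ ((S : Set V))ᶜ := myUp_verts_subset _ _
      have h₀uv : ¬ N₀.Adj u v := fun h => hdeluv (myUp_adj_sub hdel h)
      have h₀vu : ¬ N₀.Adj v u := fun h => h₀uv h.symm
      have hsn : ((S : Set V))ᶜ.ncard = Nat.card V - (n - 2) := by rw [hcompl, hS]
      have htc : (((S : Set V))ᶜ \ N₀.verts).ncard = ((S : Set V))ᶜ.ncard - 2 * k := by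
        rw [Set.ncard_diff h₀v (Set.toFinite _), h₀c]
      have ht4 : 4 ≤ (((S : Set V))ᶜ \ N₀.verts).ncard := by omega
      obtain ⟨N', hle', hN', hNv', hN'uv⟩ :
          ∃ N' : G.Subgraph, N₀ ≤ N' ∧ N'.IsMatching ∧ N'.verts = ((S : Set V))ᶜ ∧
            ¬ N'.Adj u v := by
        by_cases hcase : u ∈ ((S : Set V))ᶜ \ N₀.verts ∧ v ∈ ((S : Set V))ᶜ \ N₀.verts
        · -- Case B : both u, v outside S and uncovered by the matching
          obtain ⟨y, hyt, hyu, hyv⟩ : ∃ y ∈ ((S : Set V))ᶜ \ N₀.verts, y ≠ u ∧ y ≠ v := by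
            by_contra hcon
            push_neg at hcon
            have hsub : ((S : Set V))ᶜ \ N₀.verts ⊆ {u, v} := by
              intro z hz
              rcases eq_or_ne z u with rfl | h
              · exact Or.inl rfl
              · exact Or.inr (hcon z hz h)
            have hle2 := Set.ncard_le_ncard hsub (Set.toFinite _)
            have h2 : ({u, v} : Set V).ncard ≤ 2 :=
              le_trans (Set.ncard_insert_le _ _) (by simp)
            omega
          have hS₄ : (S ∪ {v, y}).card = n := by
            rw [card_union_pair (by simpa using hcase.2.1) (by simpa using hyt.1)
              (Ne.symm hyv), hS]
            omega
          have hsub₄ : N₀.verts ⊆ ((↑(S ∪ {v, y}) : Set V))ᶜ := by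
            rw [compl_union_pair]
            intro a ha
            refine ⟨h₀v ha, ?_⟩
            rintro (rfl | rfl)
            · exact hcase.2.2 ha
            · exact hyt.2 ha
          obtain ⟨N₄, hle₄, hN₄, hv₄⟩ := hExt (S ∪ {v, y}) hS₄ N₀ h₀ h₀c hsub₄
          have hu4 : u ∈ N₄.verts := by
            rw [hv₄, compl_union_pair]
            refine ⟨hcase.1.1, ?_⟩
            rintro (h | h)
            · exact huv.ne h
            · exact hyu h.symm
          obtain ⟨x, hux, -⟩ := hN₄ hu4
          have hGux : G.Adj u x := N₄.adj_sub hux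
          have hx4 : x ∈ N₄.verts := N₄.edge_vert hux.symm
          have hxmem : x ∈ ((S : Set V))ᶜ \ ({v, y} : Set V) := by
            rw [hv₄, compl_union_pair] at hx4; exact hx4
          have hxN₀ : x ∉ N₀.verts := partner_not_mem h₀ hN₄ hle₄ hcase.1.2 hux
          have hxv : x ≠ v := fun h => hxmem.2 (Or.inl h)
          obtain ⟨N', hle', hN', hNv', hadj'⟩ := closeUp hExt hn S hS N₀ h₀ h₀c h₀v hGux
            ⟨hcase.1.1, hcase.1.2⟩ ⟨hxmem.1, hxN₀⟩
          refine ⟨N', hle', hN', hNv', fun habs => ?_⟩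
          have huN' : u ∈ N'.verts := N'.edge_vert habs
          exact hxv ((hN' huN').unique habs hadj').symm
        · -- Case A
          obtain ⟨x, hx, y, hy, hxy⟩ := (Set.one_lt_ncard (Set.toFinite _)).mp
            (by omega : 1 < (((S : Set V))ᶜ \ N₀.verts).ncard)
          have hS₁ : (S ∪ {x, y}).card = n := by
            rw [card_union_pair (by simpa using hx.1) (by simpa using hy.1) hxy, hS]
            omega
          have hsub₁ : N₀.verts ⊆ ((↑(S ∪ {x, y}) : Set V))ᶜ := by
            rw [compl_union_pair]
            intro a ha
            refine ⟨h₀v ha, ?_⟩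
            rintro (rfl | rfl)
            · exact hx.2 ha
            · exact hy.2 ha
          obtain ⟨N₁, hle₁, hN₁, hv₁⟩ := hExt (S ∪ {x, y}) hS₁ N₀ h₀ h₀c hsub₁
          have hN₁c : N₁.verts.ncard = Nat.card V - n := by
            rw [hv₁, hcompl, hS₁]
          obtain ⟨p, hpN₁, hpN₀⟩ : ∃ p ∈ N₁.verts, p ∉ N₀.verts := by
            by_contra hcon
            push_neg at hcon
            have := Set.ncard_le_ncard (fun z hz => hcon z hz) (Set.toFinite _)
            omega
          obtain ⟨q, hpq', -⟩ := hN₁ hpN₁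
          have hGpq : G.Adj p q := N₁.adj_sub hpq'
          have hqN₁ : q ∈ N₁.verts := N₁.edge_vert hpq'.symm
          have hqN₀ : q ∉ N₀.verts := partner_not_mem h₀ hN₁ hle₁ hpN₀ hpq'
          have hps : p ∈ ((S : Set V))ᶜ := by
            rw [hv₁, compl_union_pair] at hpN₁; exact hpN₁.1
          have hqs : q ∈ ((S : Set V))ᶜ := by
            rw [hv₁, compl_union_pair] at hqN₁; exact hqN₁.1
          obtain ⟨N', hle', hN', hNv', -⟩ := closeUp hExt hn S hS N₀ h₀ h₀c h₀v hGpq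
            ⟨hps, hpN₀⟩ ⟨hqs, hqN₀⟩
          refine ⟨N', hle', hN', hNv', fun habs => ?_⟩
          have hu' : u ∈ ((S : Set V))ᶜ := hNv' ▸ N'.edge_vert habs
          have hv' : v ∈ ((S : Set V))ᶜ := hNv' ▸ N'.edge_vert habs.symm
          have hor : u ∈ N₀.verts ∨ v ∈ N₀.verts := by
            rcases not_and_or.mp hcase with h | h
            · left; by_contra h'; exact h ⟨hu', h'⟩
            · right; by_contra h'; exact h ⟨hv', h'⟩
          rcases hor with h | h
          · obtain ⟨w, hw, -⟩ := h₀ h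
            have huN' : u ∈ N'.verts := N'.edge_vert habs
            have hvw : v = w := (hN' huN').unique habs (hle'.2 hw)
            exact h₀uv (by rw [hvw]; exact hw)
          · obtain ⟨w, hw, -⟩ := h₀ h
            have hvN' : v ∈ N'.verts := N'.edge_vert habs.symm
            have huw : u = w := (hN' hvN').unique habs.symm (hle'.2 hw)
            exact h₀vu (by rw [huw]; exact hw)
      have hvsub : N'.verts ⊆ ((S : Set V))ᶜ := hNv'.subset
      have ha' : ∀ ⦃a b⦄, N'.Adj a b → (G.deleteEdges {s(u, v)}).Adj a b := by
        intro a b hab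
        rw [SimpleGraph.deleteEdges_adj]
        refine ⟨N'.adj_sub hab, ?_⟩
        rw [Set.mem_singleton_iff, Sym2.eq_iff]
        rintro (⟨rfl, rfl⟩ | ⟨rfl, rfl⟩)
        · exact hN'uv hab
        · exact hN'uv hab.symm
      refine ⟨myDown N' ha', le_myDown hdel hle', myDown_isMatching hN' hvsub, ?_⟩
      rw [myDown_ncard hvsub, hNv', Nat.sub_zero, Nat.card_coe_set_eq]
end

section
/- Let G be an (n,k,0)-graph with n ≥ 2 and k ≥ 1. Then for any edge e of G, the graph G−e obtained by deleting the edge e is an (n, k−1, 0)-graph. -/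
open SimpleGraph

section Transfer
variable {V : Type*} {G H : SimpleGraph V} {s : Set V}

/-- Push a subgraph of an induced graph up to a subgraph of the ambient graph. -/
def upSG (M : (H.induce s).Subgraph) (hHG : H ≤ G) : G.Subgraph where
  verts := Subtype.val '' M.verts
  Adj a b := ∃ (ha : a ∈ s) (hb : b ∈ s), M.Adj ⟨a, ha⟩ ⟨b, hb⟩
  adj_sub := by
    rintro a b ⟨ha, hb, h⟩
    exact hHG (M.adj_sub h)
  edge_vert := by
    rintro a b ⟨ha, hb, h⟩
    exact ⟨⟨a, ha⟩, M.edge_vert h, rfl⟩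
  symm := by
    refine ⟨?_⟩
    rintro a b ⟨ha, hb, h⟩
    exact ⟨hb, ha, h.symm⟩

lemma upSG_verts (M : (H.induce s).Subgraph) (hHG : H ≤ G) :
    (upSG M hHG).verts = Subtype.val '' M.verts := rfl

lemma upSG_adj {M : (H.induce s).Subgraph} {hHG : H ≤ G} {a b : V} :
    (upSG M hHG).Adj a b ↔ ∃ (ha : a ∈ s) (hb : b ∈ s), M.Adj ⟨a, ha⟩ ⟨b, hb⟩ := Iff.rfl

lemma upSG_adj_coe {M : (H.induce s).Subgraph} {hHG : H ≤ G} {a b : s} :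
    (upSG M hHG).Adj a b ↔ M.Adj a b := by
  constructor
  · rintro ⟨ha, hb, h⟩
    convert h <;> exact rfl
  · intro h
    exact ⟨a.2, b.2, h⟩

lemma upSG_isMatching {M : (H.induce s).Subgraph} (hM : M.IsMatching) (hHG : H ≤ G) :
    (upSG M hHG).IsMatching := by
  rintro a ⟨x, hx, rfl⟩
  obtain ⟨w, hw, hwu⟩ := hM hx
  refine ⟨w, upSG_adj_coe.2 hw, ?_⟩
  rintro y ⟨ha, hy, h⟩
  have : M.Adj x ⟨y, hy⟩ := by convert h
  exact congrArg Subtype.val (hwu ⟨y, hy⟩ this)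

lemma upSG_verts_ncard (M : (H.induce s).Subgraph) (hHG : H ≤ G) :
    (upSG M hHG).verts.ncard = M.verts.ncard :=
  Set.ncard_image_of_injective _ Subtype.val_injective

lemma upSG_verts_subset (M : (H.induce s).Subgraph) (hHG : H ≤ G) :
    (upSG M hHG).verts ⊆ s := by
  rintro a ⟨x, hx, rfl⟩; exact x.2

/-- Pull a subgraph of the ambient graph down to a subgraph of an induced graph. -/
def downSG (N : G.Subgraph) (hv : N.verts ⊆ s) (hadj : ∀ a b, N.Adj a b → H.Adj a b) :
    (H.induce s).Subgraph where
  verts := {x : s | (x : V) ∈ N.verts}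
  Adj x y := N.Adj x y
  adj_sub := by
    intro x y h
    exact hadj _ _ h
  edge_vert := by
    intro x y h
    exact N.edge_vert h
  symm := ⟨fun x y h => h.symm⟩

lemma downSG_verts (N : G.Subgraph) (hv : N.verts ⊆ s) (hadj : ∀ a b, N.Adj a b → H.Adj a b) :
    (downSG (H := H) N hv hadj).verts = {x : s | (x : V) ∈ N.verts} := rfl

lemma downSG_adj {N : G.Subgraph} {hv : N.verts ⊆ s} {hadj : ∀ a b, N.Adj a b → H.Adj a b}
    {x y : s} : (downSG (H := H) N hv hadj).Adj x y ↔ N.Adj x y := Iff.rfl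

lemma downSG_isMatching {N : G.Subgraph} (hN : N.IsMatching) (hv : N.verts ⊆ s)
    (hadj : ∀ a b, N.Adj a b → H.Adj a b) : (downSG (H := H) N hv hadj).IsMatching := by
  rintro x hx
  obtain ⟨w, hw, hwu⟩ := hN hx
  refine ⟨⟨w, hv (N.edge_vert hw.symm)⟩, hw, ?_⟩
  rintro y hy
  exact Subtype.ext (hwu _ hy)

lemma downSG_verts_ncard (N : G.Subgraph) (hv : N.verts ⊆ s)
    (hadj : ∀ a b, N.Adj a b → H.Adj a b) :
    (downSG (H := H) N hv hadj).verts.ncard = N.verts.ncard := by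
  have himg : Subtype.val '' (downSG (H := H) N hv hadj).verts = N.verts := by
    ext a
    constructor
    · rintro ⟨x, hx, rfl⟩; exact hx
    · intro ha; exact ⟨⟨a, hv ha⟩, ha, rfl⟩
  rw [← himg, Set.ncard_image_of_injective _ Subtype.val_injective]

end Transfer

section Toolkit
variable {V : Type*} [Fintype V] {G : SimpleGraph V}

lemma sym2_finite : Finite (Sym2 V) := by infer_instance

/-- Adding an edge disjoint from a matching gives a matching. -/
lemma matching_sup_edge {N : G.Subgraph} (hN : N.IsMatching) {p q : V} (hpq : G.Adj p q)
    (hp : p ∉ N.verts) (hq : q ∉ N.verts) :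
    (N ⊔ G.subgraphOfAdj hpq).IsMatching ∧
      (N ⊔ G.subgraphOfAdj hpq).verts = N.verts ∪ {p, q} := by
  constructor
  · refine hN.sup (Subgraph.IsMatching.subgraphOfAdj hpq) ?_
    rw [hN.support_eq_verts, (Subgraph.IsMatching.subgraphOfAdj hpq).support_eq_verts,
      subgraphOfAdj_verts]
    rw [Set.disjoint_right]
    rintro a (rfl | rfl) <;> simp_all
  · simp [Subgraph.verts_sup]

/-- Removing both endpoints of an edge of a matching yields a matching. -/
lemma matching_delete_pair {N : G.Subgraph} (hN : N.IsMatching) {y z : V} (hyz : N.Adj y z) :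
    (N.deleteVerts {y, z}).IsMatching := by
  rintro x hx
  rw [Subgraph.deleteVerts_verts] at hx
  obtain ⟨hxv, hxyz⟩ := hx
  simp only [Set.mem_insert_iff, Set.mem_singleton_iff, not_or] at hxyz
  obtain ⟨w, hw, hwu⟩ := hN hxv
  have hwy : w ≠ y := by
    rintro rfl
    obtain ⟨w', hw', hwu'⟩ := hN (N.edge_vert hyz)
    exact hxyz.2 ((hwu' x hw.symm).trans (hwu' z hyz).symm)
  have hwz : w ≠ z := by
    rintro rfl
    obtain ⟨w', hw', hwu'⟩ := hN (N.edge_vert hyz.symm)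
    exact hxyz.1 ((hwu' x hw.symm).trans (hwu' y hyz.symm).symm)
  refine ⟨w, ?_, ?_⟩
  · show (N.deleteVerts {y, z}).Adj x w
    rw [Subgraph.deleteVerts_adj]
    refine ⟨hxv, by simp [hxyz.1, hxyz.2], N.edge_vert hw.symm, by simp [hwy, hwz], hw⟩
  · rintro y' hy'
    have hy' : (N.deleteVerts {y, z}).Adj x y' := hy'
    rw [Subgraph.deleteVerts_adj] at hy'
    exact hwu y' hy'.2.2.2.2

lemma matching_delete_pair_edgeSet {N : G.Subgraph} (hN : N.IsMatching) {y z : V}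
    (hyz : N.Adj y z) :
    (N.deleteVerts {y, z}).edgeSet = N.edgeSet \ {s(y, z)} := by
  ext e
  induction e using Sym2.ind with
  | _ a b =>
    rw [Subgraph.mem_edgeSet, Subgraph.deleteVerts_adj, Set.mem_diff, Subgraph.mem_edgeSet]
    simp only [Set.mem_insert_iff, Set.mem_singleton_iff, not_or]
    constructor
    · rintro ⟨_, ⟨hay, haz⟩, _, _, hadj⟩
      refine ⟨hadj, ?_⟩
      rw [Sym2.eq_iff]
      rintro (⟨rfl, rfl⟩ | ⟨rfl, rfl⟩)
      · exact hay rfl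
      · exact haz rfl
    · rintro ⟨hadj, hne⟩
      rw [Sym2.eq_iff] at hne
      push_neg at hne
      have hay : a ≠ y := by
        rintro rfl
        obtain ⟨w', hw', hwu'⟩ := hN (N.edge_vert hadj)
        exact hne.1 rfl ((hwu' b hadj).trans (hwu' z hyz).symm)
      have haz : a ≠ z := by
        rintro rfl
        obtain ⟨w', hw', hwu'⟩ := hN (N.edge_vert hadj)
        exact hne.2 rfl ((hwu' b hadj).trans (hwu' y hyz.symm).symm)
      have hbz : b ≠ z := by
        rintro rfl
        obtain ⟨w', hw', hwu'⟩ := hN (N.edge_vert hadj.symm)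
        exact hne.1 ((hwu' a hadj.symm).trans (hwu' y hyz.symm).symm) rfl
      have hby : b ≠ y := by
        rintro rfl
        obtain ⟨w', hw', hwu'⟩ := hN (N.edge_vert hadj.symm)
        exact hne.2 ((hwu' a hadj.symm).trans (hwu' z hyz).symm) rfl
      exact ⟨N.edge_vert hadj, ⟨hay, haz⟩, N.edge_vert hadj.symm, ⟨hby, hbz⟩, hadj⟩

/-- In a matching `F` extending a matching `N`, the `F`-partner of a vertex not covered
by `N` is itself not covered by `N`. -/
lemma partner_outside {F N : G.Subgraph} (hF : F.IsMatching) (hN : N.IsMatching)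
    (hle : N ≤ F) {x : V} (hx : x ∈ F.verts) (hxN : x ∉ N.verts) :
    ∃ w, F.Adj x w ∧ w ∉ N.verts ∧ w ≠ x ∧ w ∈ F.verts := by
  obtain ⟨w, hw, _⟩ := hF hx
  refine ⟨w, hw, ?_, (F.adj_sub hw).ne', F.edge_vert hw.symm⟩
  intro hwN
  obtain ⟨t, ht, _⟩ := hN hwN
  obtain ⟨t', ht', htu'⟩ := hF (F.edge_vert (hle.2 ht))
  have : t = x := (htu' t (hle.2 ht)).trans (htu' x hw.symm).symm
  exact hxN (this ▸ N.edge_vert ht.symm)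

end Toolkit

section Augment
variable {V : Type*} [Fintype V] {G : SimpleGraph V}

/-- Berge-style augmentation: given a perfect-on-its-verts matching `F`, a matching `N`
with vertices inside `F.verts`, and an `N`-uncovered vertex `x ∈ F.verts`, there is a
matching covering exactly `N.verts ∪ {x, w}` for some new vertex `w`. -/
lemma matching_augment {F : G.Subgraph} (hF : F.IsMatching) :
    ∀ (m : ℕ) (N : G.Subgraph), (N.edgeSet \ F.edgeSet).ncard ≤ m → N.IsMatching →
      N.verts ⊆ F.verts → ∀ x ∈ F.verts, x ∉ N.verts →
      ∃ (P : G.Subgraph) (w : V), P.IsMatching ∧ w ∉ N.verts ∧ w ≠ x ∧ w ∈ F.verts ∧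
        P.verts ⊆ F.verts ∧ P.verts = N.verts ∪ {x, w} := by
  intro m
  induction m with
  | zero =>
    intro N hm hN hsub x hx hxN
    obtain ⟨y, hxy, _⟩ := hF hx
    by_cases hyN : y ∈ N.verts
    · -- derive contradiction with measure 0
      exfalso
      obtain ⟨z, hyz, _⟩ := hN hyN
      have hyzF : s(y, z) ∉ F.edgeSet := by
        rw [Subgraph.mem_edgeSet]
        intro hFyz
        obtain ⟨t', ht', htu'⟩ := hF (hsub hyN)
        exact hxN (((htu' z hFyz).trans (htu' x hxy.symm).symm) ▸ N.edge_vert hyz.symm)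
      have hmem : s(y, z) ∈ N.edgeSet \ F.edgeSet := ⟨Subgraph.mem_edgeSet.2 hyz, hyzF⟩
      have : (N.edgeSet \ F.edgeSet).ncard ≠ 0 := by
        refine Set.ncard_ne_zero_of_mem hmem ?_
        exact Set.toFinite _
      omega
    · have hGxy : G.Adj x y := F.adj_sub hxy
      obtain ⟨hm1, hm2⟩ := matching_sup_edge hN hGxy hxN hyN
      exact ⟨_, y, hm1, hyN, (F.adj_sub hxy).ne', F.edge_vert hxy.symm,
        by rw [hm2]; rintro a (h | h); · exact hsub h
           · rcases h with rfl | rfl; exacts [hx, F.edge_vert hxy.symm], hm2⟩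
  | succ m ih =>
    intro N hm hN hsub x hx hxN
    obtain ⟨y, hxy, _⟩ := hF hx
    by_cases hyN : y ∈ N.verts
    · obtain ⟨z, hyz, _⟩ := hN hyN
      have hzN : z ∈ N.verts := N.edge_vert hyz.symm
      have hzx : z ≠ x := fun h => hxN (h ▸ hzN)
      have hzy : z ≠ y := (N.adj_sub hyz).ne'
      have hyzF : s(y, z) ∉ F.edgeSet := by
        rw [Subgraph.mem_edgeSet]
        intro hFyz
        obtain ⟨t', ht', htu'⟩ := hF (hsub hyN)
        exact hxN (((htu' z hFyz).trans (htu' x hxy.symm).symm) ▸ hzN)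
      have hGxy : G.Adj x y := F.adj_sub hxy
      set Nd := N.deleteVerts {y, z} with hNd
      have hNdm : Nd.IsMatching := matching_delete_pair hN hyz
      have hxNd : x ∉ Nd.verts := by
        rw [hNd, Subgraph.deleteVerts_verts]; exact fun h => hxN h.1
      have hyNd : y ∉ Nd.verts := by
        rw [hNd, Subgraph.deleteVerts_verts]; rintro ⟨_, h⟩; exact h (by simp)
      obtain ⟨hm1, hm2⟩ := matching_sup_edge hNdm hGxy hxNd hyNd
      set N' := Nd ⊔ G.subgraphOfAdj hGxy with hN'
      have hvertsN' : N'.verts = (N.verts \ {y, z}) ∪ {x, y} := by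
        rw [hN', hm2, hNd, Subgraph.deleteVerts_verts]
      have hsub' : N'.verts ⊆ F.verts := by
        rw [hvertsN']
        rintro a (⟨h, _⟩ | h)
        · exact hsub h
        · rcases h with rfl | rfl; exacts [hx, F.edge_vert hxy.symm]
      have hzN' : z ∉ N'.verts := by
        rw [hvertsN']
        rintro (⟨_, h⟩ | h)
        · exact h (by simp)
        · rcases h with rfl | rfl; exacts [hzx rfl, hzy rfl]
      -- measure decreases
      have hedge : N'.edgeSet = (N.edgeSet \ {s(y, z)}) ∪ {s(x, y)} := by
        rw [hN', Subgraph.edgeSet_sup, matching_delete_pair_edgeSet hN hyz,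
          edgeSet_subgraphOfAdj]
      have hxyF : s(x, y) ∈ F.edgeSet := Subgraph.mem_edgeSet.2 hxy
      have hmeas : N'.edgeSet \ F.edgeSet = (N.edgeSet \ F.edgeSet) \ {s(y, z)} := by
        rw [hedge]
        ext e
        simp only [Set.mem_diff, Set.mem_union, Set.mem_singleton_iff]
        constructor
        · rintro ⟨h | rfl, hf⟩
          · exact ⟨⟨h.1, hf⟩, h.2⟩
          · exact absurd hxyF hf
        · rintro ⟨⟨h1, h2⟩, h3⟩
          exact ⟨Or.inl ⟨h1, h3⟩, h2⟩
      have hmemyz : s(y, z) ∈ N.edgeSet \ F.edgeSet := ⟨Subgraph.mem_edgeSet.2 hyz, hyzF⟩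
      have hm' : (N'.edgeSet \ F.edgeSet).ncard ≤ m := by
        rw [hmeas, Set.ncard_diff_singleton_of_mem hmemyz]
        have : (N.edgeSet \ F.edgeSet).ncard ≠ 0 :=
          Set.ncard_ne_zero_of_mem hmemyz (Set.toFinite _)
        omega
      obtain ⟨P, w, hPm, hwN', hwz, hwF, hPsub, hPverts⟩ :=
        ih N' hm' hm1 hsub' z (hsub hzN) hzN'
      have hwx : w ≠ x := by
        intro h
        apply hwN'
        rw [hvertsN', h]
        exact Or.inr (by simp)
      have hwy : w ≠ y := by
        intro h
        apply hwN'
        rw [hvertsN', h]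
        exact Or.inr (by simp)
      have hwN : w ∉ N.verts := by
        intro h
        apply hwN'
        rw [hvertsN']
        exact Or.inl ⟨h, by simp [hwy, hwz]⟩
      refine ⟨P, w, hPm, hwN, hwx, hwF, hPsub, ?_⟩
      rw [hPverts, hvertsN']
      ext a
      simp only [Set.mem_union, Set.mem_diff, Set.mem_insert_iff, Set.mem_singleton_iff]
      constructor
      · rintro ((⟨h, _⟩ | h) | h)
        · exact Or.inl h
        · rcases h with rfl | rfl
          · exact Or.inr (Or.inl rfl)
          · exact Or.inl hyN
        · rcases h with rfl | rfl
          · exact Or.inl hzN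
          · exact Or.inr (Or.inr rfl)
      · rintro (h | h)
        · by_cases hay : a = y
          · exact Or.inl (Or.inr (Or.inr hay))
          · by_cases haz : a = z
            · exact Or.inr (Or.inl haz)
            · exact Or.inl (Or.inl ⟨h, by simp [hay, haz]⟩)
        · tauto
    · have hGxy : G.Adj x y := F.adj_sub hxy
      obtain ⟨hm1, hm2⟩ := matching_sup_edge hN hGxy hxN hyN
      exact ⟨_, y, hm1, hyN, (F.adj_sub hxy).ne', F.edge_vert hxy.symm,
        by rw [hm2]; rintro a (h | h); · exact hsub h
           · rcases h with rfl | rfl; exacts [hx, F.edge_vert hxy.symm], hm2⟩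

end Augment

section MoreTransfer
variable {V : Type*} {G H : SimpleGraph V} {s : Set V}

lemma upSG_mono {M M' : (H.induce s).Subgraph} (h : M ≤ M') (hHG : H ≤ G) :
    upSG M hHG ≤ upSG M' hHG := by
  refine ⟨Set.image_mono h.1, ?_⟩
  rintro a b ⟨ha, hb, had⟩
  exact ⟨ha, hb, h.2 had⟩

lemma le_upSG_downSG (N : G.Subgraph) (hv : N.verts ⊆ s)
    (hadj : ∀ a b, N.Adj a b → G.Adj a b) :
    N ≤ upSG (downSG (H := G) N hv hadj) le_rfl := by
  refine ⟨?_, ?_⟩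
  · intro a ha
    exact ⟨⟨a, hv ha⟩, ha, rfl⟩
  · intro a b h
    exact ⟨hv (N.edge_vert h), hv (N.edge_vert h.symm), h⟩

lemma ncard_union_pair {A : Set V} {p q : V} [Fintype V] (hp : p ∉ A) (hq : q ∉ A)
    (hpq : p ≠ q) : (A ∪ {p, q}).ncard = A.ncard + 2 := by
  rw [Set.ncard_union_eq ?_ (Set.toFinite _) (Set.toFinite _), Set.ncard_pair hpq]
  rw [Set.disjoint_right]
  rintro a (rfl | rfl) <;> assumption

end MoreTransfer

theorem stmt_5 {V : Type*} [Fintype V] (G : SimpleGraph V) (n k : ℕ)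
    (hG : IsNkdGraph G n k 0) (hn : 2 ≤ n) (hk : 1 ≤ k)
    (u v : V) (huv : G.Adj u v) :
    IsNkdGraph (G.deleteEdges {s(u, v)}) n (k - 1) 0 := by
  classical
  obtain ⟨hcard, hpar, hmain⟩ := hG
  refine ⟨by omega, hpar, ?_⟩
  intro S hS
  set s : Set V := ((S : Set V))ᶜ with hs_def
  have hmem_s : ∀ x : V, x ∈ s ↔ x ∉ S := by
    intro x; rw [hs_def]; simp
  -- the number of vertices outside S
  have hs_ncard : s.ncard = Nat.card V - n := by
    rw [hs_def]
    have := Set.ncard_add_ncard_compl (S : Set V)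
    rw [Set.ncard_coe_finset, hS] at this
    omega
  have hsize : 2 * k + 2 ≤ s.ncard := by rw [hs_ncard]; omega
  -- V-level reformulation of the (n,k,0) hypothesis
  have Hex : ∀ T : Finset V, T.card = n → ∃ N : G.Subgraph,
      N.IsMatching ∧ N.verts.ncard = 2 * k ∧ N.verts ⊆ ((T : Set V))ᶜ := by
    intro T hT
    obtain ⟨⟨M0, hM0m, hM0c⟩, -⟩ := hmain T hT
    exact ⟨upSG M0 le_rfl, upSG_isMatching hM0m le_rfl,
      (upSG_verts_ncard M0 le_rfl).trans hM0c, upSG_verts_subset M0 le_rfl⟩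
  have Hext : ∀ T : Finset V, T.card = n → ∀ N : G.Subgraph,
      N.IsMatching → N.verts.ncard = 2 * k → N.verts ⊆ ((T : Set V))ᶜ →
      ∃ F : G.Subgraph, N ≤ F ∧ F.IsMatching ∧ F.verts = ((T : Set V))ᶜ := by
    intro T hT N hNm hNc hNs
    obtain ⟨-, hext⟩ := hmain T hT
    have hadj : ∀ a b, N.Adj a b → G.Adj a b := fun a b h => N.adj_sub h
    obtain ⟨M', hle, hM'm, hM'c⟩ := hext (downSG (H := G) N hNs hadj)
      ⟨downSG_isMatching hNm hNs hadj, (downSG_verts_ncard N hNs hadj).trans hNc⟩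
    refine ⟨upSG M' le_rfl, le_trans (le_upSG_downSG N hNs hadj) (upSG_mono hle le_rfl), 
      upSG_isMatching hM'm le_rfl, ?_⟩
    have huniv : M'.verts = Set.univ := by
      have h1 : M'.verts.ncard = ((T : Set V)ᶜ).ncard := by
        rw [hM'c, Nat.card_coe_set_eq]
        omega
      refine Set.eq_of_subset_of_ncard_le (Set.subset_univ _) ?_ (Set.toFinite _)
      rw [Set.ncard_univ, Nat.card_coe_set_eq, h1]
    rw [upSG_verts, huniv, Set.image_univ, Subtype.range_coe]
  -- picking a vertex outside a small matching
  have hex_x : ∀ N : G.Subgraph, N.verts ⊆ s → N.verts.ncard < s.ncard →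
      ∃ x, x ∈ s ∧ x ∉ N.verts := by
    intro N hNs hlt
    by_contra hc
    push_neg at hc
    have : s ⊆ N.verts := fun x hx => hc x hx
    have := Set.ncard_le_ncard this (Set.toFinite _)
    omega
  -- existence of an edge avoiding a given (k-1)-matching
  have edge_exists : ∀ N : G.Subgraph, N.IsMatching → N.verts ⊆ s →
      N.verts.ncard = 2 * k - 2 →
      ∃ p q, G.Adj p q ∧ p ∈ s ∧ q ∈ s ∧ p ∉ N.verts ∧ q ∉ N.verts ∧ p ≠ q := by
    intro N hNm hNs hNc
    obtain ⟨N0, hN0m, hN0c, hN0s⟩ := Hex S hS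
    obtain ⟨F0, hF0le, hF0m, hF0v⟩ := Hext S hS N0 hN0m hN0c hN0s
    rw [← hs_def] at hN0s hF0v
    obtain ⟨x, hxs, hxN⟩ := hex_x N hNs (by omega)
    obtain ⟨P, w, hPm, hwN, hwx, hwF, hPsub, hPverts⟩ :=
      matching_augment hF0m (N.edgeSet \ F0.edgeSet).ncard N le_rfl hNm
        (by rw [hF0v]; exact hNs) x (by rw [hF0v]; exact hxs) hxN
    have hPv_s : P.verts ⊆ s := by rw [← hF0v]; exact hPsub
    have hPc : P.verts.ncard = 2 * k := by
      rw [hPverts, ncard_union_pair hxN hwN (Ne.symm hwx)]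
      omega
    obtain ⟨F1, hF1le, hF1m, hF1v⟩ := Hext S hS P hPm hPc (hs_def ▸ hPv_s)
    rw [← hs_def] at hF1v
    obtain ⟨x', hx's, hx'P⟩ := hex_x P hPv_s (by omega)
    obtain ⟨q, hadj, hqP, hqx', hqF⟩ := partner_outside hF1m hPm hF1le
      (by rw [hF1v]; exact hx's) hx'P
    refine ⟨x', q, F1.adj_sub hadj, hx's, by rw [← hF1v]; exact hqF, ?_, ?_, fun h => hqx' h.symm⟩
    · intro h; exact hx'P (hPverts ▸ Or.inl h)
    · intro h; exact hqP (hPverts ▸ Or.inl h)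
  have ncard_pair_diff : ∀ (A : Set V) (y z : V), y ∈ A → z ∈ A → y ≠ z →
      (A \ {y, z}).ncard = A.ncard - 2 := by
    intro A y z hy hz hyz
    rw [show ({y, z} : Set V) = {y} ∪ {z} from by rw [Set.insert_eq], ← Set.diff_diff]
    rw [Set.ncard_diff_singleton_of_mem (by simp [hz, Ne.symm hyz]),
      Set.ncard_diff_singleton_of_mem hy]
    omega
  constructor
  · -- existence of a (k-1)-matching in (G-e)-S
    obtain ⟨N0, hN0m, hN0c, hN0s⟩ := Hex S hS
    have key : ∃ N1 : G.Subgraph, N1.IsMatching ∧ N1.verts.ncard = 2 * k - 2 ∧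
        N1.verts ⊆ ((S : Set V))ᶜ ∧ ¬ N1.Adj u v := by
      by_cases hA : N0.Adj u v
      · refine ⟨N0.deleteVerts {u, v}, matching_delete_pair hN0m hA, ?_, ?_, ?_⟩
        · rw [Subgraph.deleteVerts_verts,
            ncard_pair_diff _ _ _ (N0.edge_vert hA) (N0.edge_vert hA.symm) huv.ne, hN0c]
        · rw [Subgraph.deleteVerts_verts]
          exact fun a ha => hN0s ha.1
        · intro h
          have h' : (N0.deleteVerts {u, v}).Adj u v := h
          rw [Subgraph.deleteVerts_adj] at h'
          exact h'.2.1 (by simp)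
      · have hne : N0.verts.Nonempty := Set.nonempty_of_ncard_ne_zero (by omega)
        obtain ⟨y, hy⟩ := hne
        obtain ⟨z, hyz, -⟩ := hN0m hy
        refine ⟨N0.deleteVerts {y, z}, matching_delete_pair hN0m hyz, ?_, ?_, ?_⟩
        · rw [Subgraph.deleteVerts_verts,
            ncard_pair_diff _ _ _ (N0.edge_vert hyz) (N0.edge_vert hyz.symm)
              (N0.adj_sub hyz).ne, hN0c]
        · rw [Subgraph.deleteVerts_verts]
          exact fun a ha => hN0s ha.1
        · intro h
          have h' : (N0.deleteVerts {y, z}).Adj u v := h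
          rw [Subgraph.deleteVerts_adj] at h'
          exact hA h'.2.2.2.2
    obtain ⟨N1, hN1m, hN1c, hN1s, hN1uv⟩ := key
    have hadj' : ∀ a b, N1.Adj a b → (G.deleteEdges {s(u, v)}).Adj a b := by
      intro a b h
      rw [deleteEdges_adj]
      refine ⟨N1.adj_sub h, ?_⟩
      intro hm
      rw [Set.mem_singleton_iff, Sym2.eq_iff] at hm
      rcases hm with ⟨rfl, rfl⟩ | ⟨rfl, rfl⟩
      · exact hN1uv h
      · exact hN1uv h.symm
    refine ⟨downSG (H := G.deleteEdges {s(u, v)}) N1 hN1s hadj',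
      downSG_isMatching hN1m hN1s hadj', ?_⟩
    rw [downSG_verts_ncard, hN1c]
    omega
  · -- extension property
    intro M hM
    obtain ⟨hMm, hMc⟩ := hM
    have hGG' : G.deleteEdges {s(u, v)} ≤ G := deleteEdges_le _
    set Nt := upSG M hGG' with hNt
    have hNtm : Nt.IsMatching := upSG_isMatching hMm hGG'
    have hNtc : Nt.verts.ncard = 2 * k - 2 := by
      rw [hNt, upSG_verts_ncard M hGG', hMc]; omega
    have hNts : Nt.verts ⊆ s := upSG_verts_subset M hGG'
    have hNtuv : ¬ Nt.Adj u v := by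
      intro h
      rw [hNt, upSG_adj] at h
      obtain ⟨hu', hv', had⟩ := h
      have h2 : (G.deleteEdges {s(u, v)}).Adj u v := M.adj_sub had
      rw [deleteEdges_adj] at h2
      exact h2.2 rfl
    suffices hF : ∃ F : G.Subgraph, Nt ≤ F ∧ F.IsMatching ∧ F.verts = ((S : Set V))ᶜ ∧
        ¬ F.Adj u v by
      obtain ⟨F, hFle, hFm, hFv, hFuv⟩ := hF
      have hadj' : ∀ a b, F.Adj a b → (G.deleteEdges {s(u, v)}).Adj a b := by
        intro a b h
        rw [deleteEdges_adj]
        refine ⟨F.adj_sub h, ?_⟩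
        intro hm
        rw [Set.mem_singleton_iff, Sym2.eq_iff] at hm
        rcases hm with ⟨rfl, rfl⟩ | ⟨rfl, rfl⟩
        · exact hFuv h
        · exact hFuv h.symm
      have hFs : F.verts ⊆ ((S : Set V))ᶜ := hFv.le
      refine ⟨downSG (H := G.deleteEdges {s(u, v)}) F hFs hadj', ⟨?_, ?_⟩,
        downSG_isMatching hFm hFs hadj', ?_⟩
      · intro x hx
        exact hFle.1 ⟨x, hx, rfl⟩
      · intro a b h
        exact hFle.2 (upSG_adj_coe.2 h)
      · rw [downSG_verts_ncard, hFv, Nat.card_coe_set_eq, ← hs_def]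
        omega
    -- main case analysis
    have unique_partner : ∀ (F : G.Subgraph), F.IsMatching → ∀ a b c, F.Adj a b →
        F.Adj a c → b = c := by
      intro F hFm a b c h1 h2
      obtain ⟨t, ht, htu⟩ := hFm (F.edge_vert h1)
      exact (htu b h1).trans (htu c h2).symm
    have build : ∀ p q, G.Adj p q → p ∈ s → q ∈ s → p ∉ Nt.verts → q ∉ Nt.verts →
        ∃ F : G.Subgraph, Nt ≤ F ∧ F.IsMatching ∧ F.verts = ((S : Set V))ᶜ ∧ F.Adj p q := by
      intro p q hGpq hps hqs hpN hqN
      obtain ⟨hm1, hm2⟩ := matching_sup_edge hNtm hGpq hpN hqN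
      have hN1c : (Nt ⊔ G.subgraphOfAdj hGpq).verts.ncard = 2 * k := by
        rw [hm2, ncard_union_pair hpN hqN hGpq.ne]
        omega
      have hN1s : (Nt ⊔ G.subgraphOfAdj hGpq).verts ⊆ ((S : Set V))ᶜ := by
        rw [hm2]
        rintro a (h | h)
        · exact hNts h
        · rcases h with rfl | rfl
          exacts [hps, hqs]
      obtain ⟨F, hFle, hFm, hFv⟩ := Hext S hS _ hm1 hN1c hN1s
      exact ⟨F, le_trans le_sup_left hFle, hFm, hFv,
        hFle.2 (Subgraph.sup_adj.2 (Or.inr (by rw [subgraphOfAdj_adj])))⟩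
    by_cases hboth : u ∈ s ∧ v ∈ s
    swap
    · -- u or v is inside S : any completion works
      obtain ⟨p, q, hGpq, hps, hqs, hpN, hqN, hpq⟩ := edge_exists Nt hNtm hNts hNtc
      obtain ⟨F, hFle, hFm, hFv, -⟩ := build p q hGpq hps hqs hpN hqN
      refine ⟨F, hFle, hFm, hFv, fun h => hboth ⟨?_, ?_⟩⟩
      · have := F.edge_vert h
        rw [hFv] at this
        exact this
      · have := F.edge_vert h.symm
        rw [hFv] at this
        exact this
    obtain ⟨hus, hvs⟩ := hboth
    by_cases huN : u ∈ Nt.verts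
    · -- u is covered by the matching
      obtain ⟨p, q, hGpq, hps, hqs, hpN, hqN, hpq⟩ := edge_exists Nt hNtm hNts hNtc
      obtain ⟨F, hFle, hFm, hFv, -⟩ := build p q hGpq hps hqs hpN hqN
      refine ⟨F, hFle, hFm, hFv, fun h => ?_⟩
      obtain ⟨wt, hwt, -⟩ := hNtm huN
      have hwv : wt = v := unique_partner F hFm u wt v (hFle.2 hwt) h
      exact hNtuv (hwv ▸ hwt)
    by_cases hvN : v ∈ Nt.verts
    · obtain ⟨p, q, hGpq, hps, hqs, hpN, hqN, hpq⟩ := edge_exists Nt hNtm hNts hNtc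
      obtain ⟨F, hFle, hFm, hFv, -⟩ := build p q hGpq hps hqs hpN hqN
      refine ⟨F, hFle, hFm, hFv, fun h => ?_⟩
      obtain ⟨wt, hwt, -⟩ := hNtm hvN
      have hwu : wt = u := unique_partner F hFm v wt u (hFle.2 hwt) h.symm
      exact hNtuv ((hwu ▸ hwt : Nt.Adj v u)).symm
    by_cases hEu : ∃ x, G.Adj u x ∧ x ∈ s ∧ x ∉ Nt.verts ∧ x ≠ v
    · obtain ⟨x, hGux, hxs, hxN, hxv⟩ := hEu
      obtain ⟨F, hFle, hFm, hFv, hFux⟩ := build u x hGux hus hxs huN hxN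
      exact ⟨F, hFle, hFm, hFv, fun h => hxv (unique_partner F hFm u x v hFux h)⟩
    by_cases hEv : ∃ x, G.Adj v x ∧ x ∈ s ∧ x ∉ Nt.verts ∧ x ≠ u
    · obtain ⟨x, hGvx, hxs, hxN, hxu⟩ := hEv
      obtain ⟨F, hFle, hFm, hFv, hFvx⟩ := build v x hGvx hvs hxs hvN hxN
      exact ⟨F, hFle, hFm, hFv, fun h => hxu (unique_partner F hFm v x u hFvx h.symm)⟩
    -- impossible configuration
    exfalso
    push_neg at hEu hEv
    obtain ⟨hm2m, hm2v⟩ := matching_sup_edge hNtm huv huN hvN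
    have hN2c : (Nt ⊔ G.subgraphOfAdj huv).verts.ncard = 2 * k := by
      rw [hm2v, ncard_union_pair huN hvN huv.ne]
      omega
    have hN2s : (Nt ⊔ G.subgraphOfAdj huv).verts ⊆ ((S : Set V))ᶜ := by
      rw [hm2v]
      rintro a (h | h)
      · exact hNts h
      · rcases h with rfl | rfl
        exacts [hus, hvs]
    obtain ⟨F2, hF2le, hF2m, hF2v⟩ := Hext S hS _ hm2m hN2c hN2s
    obtain ⟨p, hps, hpN2⟩ := hex_x _ hN2s (by rw [hN2c]; omega)
    obtain ⟨q, hF2pq, hqN2, hqp, hqF2⟩ := partner_outside hF2m hm2m hF2le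
      (by rw [hF2v]; exact hps) hpN2
    have hGpq : G.Adj p q := F2.adj_sub hF2pq
    have hqs : q ∈ s := by rw [hs_def, ← hF2v]; exact hqF2
    have hpN : p ∉ Nt.verts := fun h => hpN2 (hm2v ▸ Or.inl h)
    have hqN : q ∉ Nt.verts := fun h => hqN2 (hm2v ▸ Or.inl h)
    have hpu : p ≠ u := fun h => hpN2 (hm2v ▸ Or.inr (by simp [h]))
    have hpv : p ≠ v := fun h => hpN2 (hm2v ▸ Or.inr (by simp [h]))
    have hqu : q ≠ u := fun h => hqN2 (hm2v ▸ Or.inr (by simp [h]))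
    have hqv : q ≠ v := fun h => hqN2 (hm2v ▸ Or.inr (by simp [h]))
    obtain ⟨a, haS⟩ : S.Nonempty := Finset.card_pos.1 (by omega)
    have hvS : v ∉ S := (hmem_s v).1 hvs
    have huS : u ∉ S := (hmem_s u).1 hus
    have hpS : p ∉ S := (hmem_s p).1 hps
    have haN : a ∉ Nt.verts := fun h => (hmem_s a).1 (hNts h) haS
    have hau : u ≠ a := fun h => huS (h ▸ haS)
    have hav : v ≠ a := fun h => hvS (h ▸ haS)
    have hap : a ≠ p := fun h => hpS (h ▸ haS)
    -- first swap : S2 = S - a + v forces u to be adjacent to a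
    have hS2card : (insert v (S.erase a)).card = n := by
      rw [Finset.card_insert_of_notMem (fun h => hvS (Finset.mem_of_mem_erase h)),
        Finset.card_erase_of_mem haS, hS]
      omega
    have hmem_s2 : ∀ x : V, x ∈ ((insert v (S.erase a) : Finset V) : Set V)ᶜ ↔
        (x ≠ v ∧ (x ∉ S ∨ x = a)) := by
      intro x
      simp only [Set.mem_compl_iff, Finset.coe_insert, Set.mem_insert_iff, Finset.coe_erase,
        Set.mem_diff, Finset.mem_coe, Set.mem_singleton_iff, not_or, not_and, not_not]
      tauto
    obtain ⟨hm3m, hm3v⟩ := matching_sup_edge hNtm hGpq hpN hqN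
    have hN3c : (Nt ⊔ G.subgraphOfAdj hGpq).verts.ncard = 2 * k := by
      rw [hm3v, ncard_union_pair hpN hqN hGpq.ne]
      omega
    have hN3s2 : (Nt ⊔ G.subgraphOfAdj hGpq).verts ⊆
        ((insert v (S.erase a) : Finset V) : Set V)ᶜ := by
      rw [hm3v]
      rintro y (h | h)
      · exact (hmem_s2 y).2 ⟨fun hy => hvN (hy ▸ h), Or.inl ((hmem_s y).1 (hNts h))⟩
      · rcases h with rfl | rfl
        · exact (hmem_s2 y).2 ⟨hpv, Or.inl hpS⟩
        · exact (hmem_s2 y).2 ⟨hqv, Or.inl ((hmem_s y).1 hqs)⟩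
    obtain ⟨F3, hF3le, hF3m, hF3v⟩ := Hext (insert v (S.erase a)) hS2card _ hm3m hN3c hN3s2
    have hus2 : u ∈ ((insert v (S.erase a) : Finset V) : Set V)ᶜ :=
      (hmem_s2 u).2 ⟨huv.ne, Or.inl huS⟩
    have huN3 : u ∉ (Nt ⊔ G.subgraphOfAdj hGpq).verts := by
      rw [hm3v]
      rintro (h | h)
      · exact huN h
      · rcases h with rfl | rfl
        exacts [hpu rfl, hqu rfl]
    obtain ⟨w, hF3uw, hwN3, hwu, hwF3⟩ := partner_outside hF3m hm3m hF3le
      (by rw [hF3v]; exact hus2) huN3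
    have hGuw : G.Adj u w := F3.adj_sub hF3uw
    have hwS2 : w ∈ ((insert v (S.erase a) : Finset V) : Set V)ᶜ := by
      rw [← hF3v]; exact hwF3
    have hwv : w ≠ v := ((hmem_s2 w).1 hwS2).1
    have hwN : w ∉ Nt.verts := fun h => hwN3 (hm3v ▸ Or.inl h)
    have hGua : G.Adj u a := by
      rcases ((hmem_s2 w).1 hwS2).2 with hwS | rfl
      · exact absurd (hEu w hGuw ((hmem_s w).2 hwS) hwN) hwv
      · exact hGuw
    -- second swap : S7 = S - a + p leaves v with no possible partner
    have hS7card : (insert p (S.erase a)).card = n := by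
      rw [Finset.card_insert_of_notMem (fun h => hpS (Finset.mem_of_mem_erase h)),
        Finset.card_erase_of_mem haS, hS]
      omega
    have hmem_s7 : ∀ x : V, x ∈ ((insert p (S.erase a) : Finset V) : Set V)ᶜ ↔
        (x ≠ p ∧ (x ∉ S ∨ x = a)) := by
      intro x
      simp only [Set.mem_compl_iff, Finset.coe_insert, Set.mem_insert_iff, Finset.coe_erase,
        Set.mem_diff, Finset.mem_coe, Set.mem_singleton_iff, not_or, not_and, not_not]
      tauto
    obtain ⟨hm4m, hm4v⟩ := matching_sup_edge hNtm hGua huN haN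
    have hN4c : (Nt ⊔ G.subgraphOfAdj hGua).verts.ncard = 2 * k := by
      rw [hm4v, ncard_union_pair huN haN hau]
      omega
    have hN4s7 : (Nt ⊔ G.subgraphOfAdj hGua).verts ⊆
        ((insert p (S.erase a) : Finset V) : Set V)ᶜ := by
      rw [hm4v]
      rintro y (h | h)
      · exact (hmem_s7 y).2 ⟨fun hy => hpN (hy ▸ h), Or.inl ((hmem_s y).1 (hNts h))⟩
      · rcases h with rfl | rfl
        · exact (hmem_s7 y).2 ⟨fun hy => hpu hy.symm, Or.inl huS⟩
        · exact (hmem_s7 y).2 ⟨hap, Or.inr rfl⟩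
    obtain ⟨F4, hF4le, hF4m, hF4v⟩ := Hext (insert p (S.erase a)) hS7card _ hm4m hN4c hN4s7
    have hvs7 : v ∈ ((insert p (S.erase a) : Finset V) : Set V)ᶜ :=
      (hmem_s7 v).2 ⟨fun hy => hpv hy.symm, Or.inl hvS⟩
    have hvN4 : v ∉ (Nt ⊔ G.subgraphOfAdj hGua).verts := by
      rw [hm4v]
      rintro (h | h)
      · exact hvN h
      · rcases h with rfl | rfl
        exacts [huv.ne rfl, hav rfl]
    obtain ⟨w', hF4vw', hw'N4, hw'v, hw'F4⟩ := partner_outside hF4m hm4m hF4le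
      (by rw [hF4v]; exact hvs7) hvN4
    have hGvw' : G.Adj v w' := F4.adj_sub hF4vw'
    have hw'S7 : w' ∈ ((insert p (S.erase a) : Finset V) : Set V)ᶜ := by
      rw [← hF4v]; exact hw'F4
    have hw'N : w' ∉ Nt.verts := fun h => hw'N4 (hm4v ▸ Or.inl h)
    rcases ((hmem_s7 w').1 hw'S7).2 with hw'S | rfl
    · have := hEv w' hGvw' ((hmem_s w').2 hw'S) hw'N
      exact hw'N4 (hm4v ▸ Or.inr (by simp [this]))
    · exact hw'N4 (hm4v ▸ Or.inr (by simp))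
end

section
/- Let G be a bipartite (n,k,d)-graph with n ≥ 2. Then for every edge e of G, the graph G−e obtained by deleting the edge e is an (n−2, k, d)-graph. -/
open SimpleGraph

section Infra
variable {V : Type*}

/-- Lift a subgraph of an induced graph to a subgraph of a (larger) ambient graph. -/
def liftSG (Γ Δ : SimpleGraph V) (h : Γ ≤ Δ) (T : Set V) (M : (Γ.induce T).Subgraph) :
    Δ.Subgraph where
  verts := Subtype.val '' M.verts
  Adj x y := ∃ (hx : x ∈ T) (hy : y ∈ T), M.Adj ⟨x, hx⟩ ⟨y, hy⟩
  adj_sub := fun ⟨_, _, ha⟩ => h (M.adj_sub ha)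
  edge_vert := fun ⟨_, _, ha⟩ => ⟨_, M.edge_vert ha, rfl⟩
  symm := ⟨fun x y ⟨hx, hy, ha⟩ => ⟨hy, hx, ha.symm⟩⟩

lemma liftSG_verts {Γ Δ : SimpleGraph V} (h : Γ ≤ Δ) (T : Set V)
    (M : (Γ.induce T).Subgraph) : (liftSG Γ Δ h T M).verts = Subtype.val '' M.verts := rfl

lemma liftSG_verts_subset {Γ Δ : SimpleGraph V} (h : Γ ≤ Δ) (T : Set V)
    (M : (Γ.induce T).Subgraph) : (liftSG Γ Δ h T M).verts ⊆ T := by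
  rintro x ⟨x', _, rfl⟩; exact x'.2

lemma liftSG_ncard {Γ Δ : SimpleGraph V} (h : Γ ≤ Δ) (T : Set V)
    (M : (Γ.induce T).Subgraph) : (liftSG Γ Δ h T M).verts.ncard = M.verts.ncard :=
  Set.ncard_image_of_injective _ Subtype.val_injective

lemma liftSG_adj_of {Γ Δ : SimpleGraph V} (h : Γ ≤ Δ) (T : Set V)
    (M : (Γ.induce T).Subgraph) {x y : T} (ha : M.Adj x y) :
    (liftSG Γ Δ h T M).Adj x.val y.val := ⟨x.2, y.2, by simpa using ha⟩

lemma liftSG_matching {Γ Δ : SimpleGraph V} (h : Γ ≤ Δ) (T : Set V)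
    {M : (Γ.induce T).Subgraph} (hM : M.IsMatching) : (liftSG Γ Δ h T M).IsMatching := by
  rintro x ⟨x', hx', rfl⟩
  obtain ⟨w, hw, hu⟩ := hM hx'
  refine ⟨w.val, ⟨x'.2, w.2, by simpa using hw⟩, ?_⟩
  rintro y ⟨hx, hy, ha⟩
  have := hu ⟨y, hy⟩ (by simpa using ha)
  simpa using congrArg Subtype.val this

/-- Restrict a subgraph of an ambient graph to a subgraph of an induced graph. -/
def restrictSG (Γ : SimpleGraph V) (T : Set V) {Δ : SimpleGraph V} (N : Δ.Subgraph)
    (hv : N.verts ⊆ T) (ha : ∀ ⦃x y⦄, N.Adj x y → Γ.Adj x y) : (Γ.induce T).Subgraph where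
  verts := Subtype.val ⁻¹' N.verts
  Adj x y := N.Adj x.val y.val
  adj_sub := fun h' => ha h'
  edge_vert := fun h' => N.edge_vert h'
  symm := ⟨fun x y h' => N.adj_symm h'⟩

lemma restrictSG_verts {Γ : SimpleGraph V} (T : Set V) {Δ : SimpleGraph V} (N : Δ.Subgraph)
    (hv : N.verts ⊆ T) (ha : ∀ ⦃x y⦄, N.Adj x y → Γ.Adj x y) :
    (restrictSG Γ T N hv ha).verts = Subtype.val ⁻¹' N.verts := rfl

lemma restrictSG_adj {Γ : SimpleGraph V} (T : Set V) {Δ : SimpleGraph V} (N : Δ.Subgraph)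
    (hv : N.verts ⊆ T) (ha : ∀ ⦃x y⦄, N.Adj x y → Γ.Adj x y) (x y : T) :
    (restrictSG Γ T N hv ha).Adj x y ↔ N.Adj x.val y.val := Iff.rfl

lemma restrictSG_ncard {Γ : SimpleGraph V} (T : Set V) {Δ : SimpleGraph V} (N : Δ.Subgraph)
    (hv : N.verts ⊆ T) (ha : ∀ ⦃x y⦄, N.Adj x y → Γ.Adj x y) :
    (restrictSG Γ T N hv ha).verts.ncard = N.verts.ncard := by
  have : Subtype.val '' (restrictSG Γ T N hv ha).verts = N.verts := by
    rw [restrictSG_verts, Subtype.image_preimage_coe]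
    exact Set.inter_eq_self_of_subset_right hv
  rw [← this, Set.ncard_image_of_injective _ Subtype.val_injective]

lemma restrictSG_matching {Γ : SimpleGraph V} {T : Set V} {Δ : SimpleGraph V} {N : Δ.Subgraph}
    (hv : N.verts ⊆ T) (ha : ∀ ⦃x y⦄, N.Adj x y → Γ.Adj x y) (hN : N.IsMatching) :
    (restrictSG Γ T N hv ha).IsMatching := by
  rintro x hx
  obtain ⟨w, hw, hu⟩ := hN hx
  refine ⟨⟨w, hv (N.edge_vert (N.adj_symm hw))⟩, hw, ?_⟩
  rintro y hy
  exact Subtype.ext (hu y.val hy)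

end Infra

section Edit
variable {V : Type*} {Γ : SimpleGraph V}

lemma matching_unique {N : Γ.Subgraph} (hN : N.IsMatching) {x y z : V}
    (h1 : N.Adj x y) (h2 : N.Adj x z) : y = z := by
  obtain ⟨w, _, hu⟩ := hN (N.edge_vert h1)
  rw [hu y h1, hu z h2]

lemma matching_deleteVerts_pair {N : Γ.Subgraph} (hN : N.IsMatching) {x y : V}
    (hxy : N.Adj x y) : (N.deleteVerts {x, y}).IsMatching := by
  rintro w hw
  rw [Subgraph.deleteVerts_verts] at hw
  obtain ⟨hw1, hw2⟩ := hw
  obtain ⟨z, hz, hu⟩ := hN hw1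
  have hzx : z ≠ x := by
    rintro rfl
    have : w = y := matching_unique hN (N.adj_symm hz) hxy
    exact hw2 (by simp [this])
  have hzy : z ≠ y := by
    rintro rfl
    have : w = x := matching_unique hN (N.adj_symm hz) (N.adj_symm hxy)
    exact hw2 (by simp [this])
  refine ⟨z, ?_, ?_⟩
  · show (N.deleteVerts {x, y}).Adj w z
    rw [Subgraph.deleteVerts_adj]
    exact ⟨hw1, hw2, N.edge_vert (N.adj_symm hz), by simp [hzx, hzy], hz⟩
  · rintro t ht
    have ht' : (N.deleteVerts {x, y}).Adj w t := ht
    rw [Subgraph.deleteVerts_adj] at ht'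
    exact hu t ht'.2.2.2.2

/-- Add an edge (with both endpoints uncovered) to a matching. -/
lemma matching_sup_edge_s11 {N : Γ.Subgraph} (hN : N.IsMatching) {a b : V} (hab : Γ.Adj a b)
    (ha : a ∉ N.verts) (hb : b ∉ N.verts) :
    (N ⊔ Γ.subgraphOfAdj hab).IsMatching ∧
      (N ⊔ Γ.subgraphOfAdj hab).verts = N.verts ∪ {a, b} := by
  constructor
  · refine hN.sup (Subgraph.IsMatching.subgraphOfAdj hab) ?_
    rw [hN.support_eq_verts, (Subgraph.IsMatching.subgraphOfAdj hab).support_eq_verts]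
    rw [Set.disjoint_right]
    intro x hx
    simp only [subgraphOfAdj_verts, Set.mem_insert_iff, Set.mem_singleton_iff] at hx
    rcases hx with rfl | rfl <;> assumption
  · simp [Subgraph.verts_sup]

lemma matched_partner_of_le {M₀ N : Γ.Subgraph} (hM₀ : M₀.IsMatching) (hN : N.IsMatching)
    (h0 : M₀ ≤ N) {q p : V} (hq0 : q ∈ M₀.verts) (hqp : N.Adj q p) : M₀.Adj q p := by
  obtain ⟨r, hr, _⟩ := hM₀ hq0
  have : r = p := matching_unique hN (h0.2 hr) hqp
  exact this ▸ hr

lemma exists_extra_edge {M₀ N : Γ.Subgraph} (hM₀ : M₀.IsMatching) (hN : N.IsMatching)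
    (h0 : M₀ ≤ N) (hfin : N.verts.Finite) (hcard : M₀.verts.ncard < N.verts.ncard) :
    ∃ p q, N.Adj p q ∧ p ∉ M₀.verts ∧ q ∉ M₀.verts := by
  have hsub : ¬ N.verts ⊆ M₀.verts := by
    intro hsub
    exact absurd (Set.ncard_le_ncard hsub (hfin.subset h0.1)) (by omega)
  obtain ⟨p, hp, hp0⟩ := Set.not_subset.mp hsub
  obtain ⟨q, hq, _⟩ := hN hp
  refine ⟨p, q, hq, hp0, fun hq0 => ?_⟩
  exact hp0 (M₀.edge_vert (M₀.adj_symm (matched_partner_of_le hM₀ hN h0 hq0 (N.adj_symm hq))))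

lemma fin2_eq_of_ne {x y z : Fin 2} (h1 : x ≠ z) (h2 : y ≠ z) : x = y := by
  fin_cases x <;> fin_cases y <;> fin_cases z <;> simp_all

end Edit
section Walk
variable {V : Type*} [Fintype V] {Γ : SimpleGraph V}

lemma subOfAdj_adj' {a b x y : V} (hab : Γ.Adj a b) (h : (Γ.subgraphOfAdj hab).Adj x y) :
    (x = a ∧ y = b) ∨ (x = b ∧ y = a) := by
  have := h
  simp only [subgraphOfAdj_adj] at this
  exact Sym2.eq_iff.mp this.symm

lemma walk_lemma (col : Γ.Coloring (Fin 2)) (M₀ : Γ.Subgraph) (hM₀ : M₀.IsMatching)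
    (μ : ℕ) :
    ∀ (Na Nb : Γ.Subgraph) (a : V),
      (Nb.edgeSet \ Na.edgeSet).ncard = μ →
      Na.IsMatching → Nb.IsMatching → M₀ ≤ Na → M₀ ≤ Nb →
      a ∉ Na.verts →
      Na.verts.ncard = Nb.verts.ncard →
      ∃ P : Γ.Subgraph, P.IsMatching ∧ M₀ ≤ P ∧
        P.verts ⊆ Na.verts ∪ Nb.verts ∪ {a} ∧
        (∀ x y, P.Adj x y → Na.Adj x y ∨ Nb.Adj x y) ∧
        (P.verts.ncard = Nb.verts.ncard + 2 ∨
          (P.verts.ncard = Nb.verts.ncard ∧ a ∉ P.verts ∧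
            ∀ x, x ∉ Nb.verts → col x ≠ col a → x ∉ P.verts)) := by
  induction μ using Nat.strong_induction_on with
  | _ μ IH =>
  intro Na Nb a hμ hMa hMb h0a h0b hca hcard
  by_cases haNb : a ∈ Nb.verts
  case neg =>
    -- base case 1 : a not covered by Nb, return Nb itself
    refine ⟨Nb, hMb, h0b, ?_, fun x y h => Or.inr h, Or.inr ⟨rfl, haNb, fun x hx _ => hx⟩⟩
    intro x hx; exact Or.inl (Or.inr hx)
  case pos =>
  obtain ⟨a', ha', hu'⟩ := hMb haNb
  have haa' : a ≠ a' := (Nb.adj_sub ha').ne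
  by_cases ha'Na : a' ∈ Na.verts
  case neg =>
    -- base case 2 : path ends here; return Na + (a,a')
    obtain ⟨hPm, hPv⟩ := matching_sup_edge_s11 hMa (Nb.adj_sub ha') hca ha'Na
    refine ⟨_, hPm, le_trans h0a le_sup_left, ?_, ?_, Or.inl ?_⟩
    · rw [hPv]
      rintro x (hx | hx)
      · exact Or.inl (Or.inl hx)
      · rcases hx with rfl | rfl
        · exact Or.inr rfl
        · exact Or.inl (Or.inr (Nb.edge_vert (Nb.adj_symm ha')))
    · intro x y h
      rcases h with h | h
      · exact Or.inl h
      · rcases subOfAdj_adj' _ h with ⟨rfl, rfl⟩ | ⟨rfl, rfl⟩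
        · exact Or.inr ha'
        · exact Or.inr (Nb.adj_symm ha')
    · have hd : Disjoint Na.verts ({a, a'} : Set V) := by
        rw [Set.disjoint_right]
        rintro x (rfl | rfl) <;> assumption
      rw [hPv, Set.ncard_union_eq hd (Set.toFinite _) (Set.toFinite _),
        Set.ncard_pair haa', hcard]
  case pos =>
  -- step case
  obtain ⟨a'', ha'', _⟩ := hMa ha'Na
  have haa'' : a'' ≠ a := by
    rintro rfl
    exact hca (Na.edge_vert (Na.adj_symm ha''))
  have ha'a'' : a' ≠ a'' := (Na.adj_sub ha'').ne
  set Na' : Γ.Subgraph := (Na.deleteVerts {a', a''}) ⊔ Γ.subgraphOfAdj (Nb.adj_sub ha') with hNa'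
  have hMa'' : a'' ∈ Na.verts := Na.edge_vert (Na.adj_symm ha'')
  have hdelverts : (Na.deleteVerts {a', a''}).verts = Na.verts \ {a', a''} :=
    Subgraph.deleteVerts_verts
  have hMa'del : (Na.deleteVerts {a', a''}).IsMatching := matching_deleteVerts_pair hMa ha''
  have hamem : a ∉ (Na.deleteVerts {a', a''}).verts := by
    rw [hdelverts]; exact fun h => hca h.1
  have ha'mem : a' ∉ (Na.deleteVerts {a', a''}).verts := by
    rw [hdelverts]; rintro ⟨_, h⟩; exact h (by simp)
  obtain ⟨hNa'm, hNa'v⟩ := matching_sup_edge_s11 hMa'del (Nb.adj_sub ha') hamem ha'mem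
  -- M₀ avoids a' and a''
  have hM₀a : a ∉ M₀.verts := fun h => hca (h0a.1 h)
  have hM₀a' : a' ∉ M₀.verts := by
    intro h
    have := matched_partner_of_le hM₀ hMb h0b h (Nb.adj_symm ha')
    exact hM₀a (M₀.edge_vert (M₀.adj_symm this))
  have hM₀a'' : a'' ∉ M₀.verts := by
    intro h
    have := matched_partner_of_le hM₀ hMa h0a h (Na.adj_symm ha'')
    exact hM₀a' (M₀.edge_vert (M₀.adj_symm this))
  have h0a' : M₀ ≤ Na' := by
    refine le_trans ?_ (le_sup_left : Na.deleteVerts {a', a''} ≤ Na')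
    constructor
    · intro x hx
      rw [hdelverts]
      refine ⟨h0a.1 hx, ?_⟩
      rintro (rfl | rfl) <;> [exact hM₀a' hx; exact hM₀a'' hx]
    · intro x y hxy
      rw [Subgraph.deleteVerts_adj]
      have hx := M₀.edge_vert hxy
      have hy := M₀.edge_vert (M₀.adj_symm hxy)
      refine ⟨h0a.1 hx, ?_, h0a.1 hy, ?_, h0a.2 hxy⟩
      · rintro (rfl | rfl) <;> [exact hM₀a' hx; exact hM₀a'' hx]
      · rintro (rfl | rfl) <;> [exact hM₀a' hy; exact hM₀a'' hy]
  have hca'' : a'' ∉ Na'.verts := by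
    rw [hNa'v, hdelverts]
    rintro (⟨_, h⟩ | h)
    · exact h (by simp)
    · rcases h with h | h
      · exact haa'' h
      · exact ha'a'' h.symm
  have hcardv : Na'.verts.ncard = Nb.verts.ncard := by
    rw [hNa'v, hdelverts]
    rw [Set.ncard_union_eq ?hd (Set.toFinite _) (Set.toFinite _),
      Set.ncard_diff (by intro x hx; rcases hx with rfl | rfl; exacts [ha'Na, hMa'']) (Set.toFinite _),
      Set.ncard_pair haa', Set.ncard_pair ha'a'']
    · have h2 : 2 ≤ Na.verts.ncard := by
        have : ({a', a''} : Set V).ncard ≤ Na.verts.ncard := by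
          refine Set.ncard_le_ncard ?_ (Set.toFinite _)
          intro x hx; rcases hx with rfl | rfl; exacts [ha'Na, hMa'']
        rwa [Set.ncard_pair ha'a''] at this
      omega
    case hd =>
      rw [Set.disjoint_right]
      rintro x (rfl | rfl)
      · exact fun h => hca h.1
      · rintro ⟨_, h⟩; exact h (by simp)
  -- the measure decreases
  have hmeas : (Nb.edgeSet \ Na'.edgeSet).ncard < μ := by
    have hsub : Nb.edgeSet \ Na'.edgeSet ⊆ (Nb.edgeSet \ Na.edgeSet) \ {s(a, a')} := by
      rintro e ⟨heb, hea⟩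
      induction e with
      | h x y =>
        rw [Subgraph.mem_edgeSet] at heb
        refine ⟨⟨Subgraph.mem_edgeSet.mpr heb, ?_⟩, ?_⟩
        · intro hNae
          rw [Subgraph.mem_edgeSet] at hNae
          -- edge in Na and Nb but not Na' : must touch {a', a''}, so must be s(a',a'')
          apply hea
          rw [hNa'v] at *
          rw [Subgraph.mem_edgeSet]
          by_cases hx : x = a' ∨ x = a''
          · exfalso
            -- x ∈ {a',a''}: then Na-partner forces edge = s(a',a''), but that edge is not in Nb
            rcases hx with rfl | rfl
            · have hy'' : y = a'' := matching_unique hMa hNae ha''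
              subst hy''
              exact haa'' (matching_unique hMb heb (Nb.adj_symm ha'))
            · have hy' : y = a' := matching_unique hMa hNae (Na.adj_symm ha'')
              subst hy'
              exact haa'' (matching_unique hMb (Nb.adj_symm heb) (Nb.adj_symm ha'))
          · by_cases hy : y = a' ∨ y = a''
            · exfalso
              rcases hy with rfl | rfl
              · exact hx (Or.inr (matching_unique hMa (Na.adj_symm hNae) ha''))
              · exact hx (Or.inl (matching_unique hMa (Na.adj_symm hNae) (Na.adj_symm ha'')))
            · push_neg at hx hy
              exact Or.inl (Subgraph.deleteVerts_adj.mpr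
                ⟨Na.edge_vert hNae, by simp [hx.1, hx.2], Na.edge_vert (Na.adj_symm hNae),
                  by simp [hy.1, hy.2], hNae⟩)
        · intro he
          apply hea
          rw [Set.mem_singleton_iff] at he
          rw [he, Subgraph.mem_edgeSet, hNa']
          exact Or.inr (by simp)
    have hmem : s(a, a') ∈ Nb.edgeSet \ Na.edgeSet := by
      refine ⟨Subgraph.mem_edgeSet.mpr ha', fun h => hca (Na.edge_vert (Subgraph.mem_edgeSet.mp h))⟩
    calc (Nb.edgeSet \ Na'.edgeSet).ncard
        ≤ ((Nb.edgeSet \ Na.edgeSet) \ {s(a, a')}).ncard :=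
          Set.ncard_le_ncard hsub (Set.toFinite _)
      _ < μ := by
          rw [← hμ]
          have := Set.ncard_diff_singleton_lt_of_mem hmem (Set.toFinite _)
          exact this
  obtain ⟨P', hP'm, h0P', hP'v, hP'e, hP'c⟩ :=
    IH _ hmeas Na' Nb a'' rfl hNa'm hMb h0a' h0b hca'' hcardv
  have ha'Nb : a' ∈ Nb.verts := Nb.edge_vert (Nb.adj_symm ha')
  have hNa'adj : ∀ x y, Na'.Adj x y → Na.Adj x y ∨ Nb.Adj x y := by
    intro x y h
    rcases h with h | h
    · exact Or.inl (Subgraph.deleteVerts_adj.mp h).2.2.2.2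
    · rcases subOfAdj_adj' _ h with ⟨rfl, rfl⟩ | ⟨rfl, rfl⟩
      · exact Or.inr ha'
      · exact Or.inr (Nb.adj_symm ha')
  have hPe : ∀ x y, P'.Adj x y → Na.Adj x y ∨ Nb.Adj x y :=
    fun x y h => (hP'e x y h).elim (hNa'adj x y) Or.inr
  have hPverts : P'.verts ⊆ Na.verts ∪ Nb.verts ∪ {a} := by
    intro x hx
    rcases hP'v hx with (h | h) | h
    · rw [hNa'v, hdelverts] at h
      rcases h with h | h
      · exact Or.inl (Or.inl h.1)
      · rcases h with rfl | rfl
        · exact Or.inr rfl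
        · exact Or.inl (Or.inr ha'Nb)
    · exact Or.inl (Or.inr h)
    · rw [Set.mem_singleton_iff] at h
      subst h
      exact Or.inl (Or.inl hMa'')
  rcases hP'c with hc | ⟨hc, ha''P, hinv⟩
  · exact ⟨P', hP'm, h0P', hPverts, hPe, Or.inl hc⟩
  have hcol : col a'' = col a :=
    fin2_eq_of_ne (col.valid (Na.adj_sub ha'')).symm (col.valid (Nb.adj_sub ha'))
  by_cases haP : a ∈ P'.verts
  case neg =>
    exact ⟨P', hP'm, h0P', hPverts, hPe,
      Or.inr ⟨hc, haP, fun x hx hcx => hinv x hx (fun h => hcx (h.trans hcol))⟩⟩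
  case pos =>
  obtain ⟨w, hw, _⟩ := hP'm haP
  have hwa' : w = a' := by
    rcases hPe a w hw with h | h
    · exact absurd (Na.edge_vert h) hca
    · exact matching_unique hMb h ha'
  have hP'aa' : P'.Adj a a' := hwa' ▸ hw
  have ha'P : a' ∈ P'.verts := P'.edge_vert (P'.adj_symm hP'aa')
  have hdel2 : (P'.deleteVerts {a, a'}).IsMatching := matching_deleteVerts_pair hP'm hP'aa'
  have hdev : (P'.deleteVerts {a, a'}).verts = P'.verts \ {a, a'} := Subgraph.deleteVerts_verts
  have hga'a'' : Γ.Adj a' a'' := Na.adj_sub ha''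
  have h1 : a' ∉ (P'.deleteVerts {a, a'}).verts := by
    rw [hdev]; rintro ⟨_, h⟩; exact h (by simp)
  have h2 : a'' ∉ (P'.deleteVerts {a, a'}).verts := by
    rw [hdev]; rintro ⟨h, _⟩; exact ha''P h
  obtain ⟨hPm2, hPv2⟩ := matching_sup_edge_s11 hdel2 hga'a'' h1 h2
  have hM0del : M₀ ≤ P'.deleteVerts {a, a'} := by
    constructor
    · intro x hx
      rw [hdev]
      refine ⟨h0P'.1 hx, ?_⟩
      rintro (rfl | rfl) <;> [exact hM₀a hx; exact hM₀a' hx]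
    · intro x y hxy
      rw [Subgraph.deleteVerts_adj]
      have hx := M₀.edge_vert hxy
      have hy := M₀.edge_vert (M₀.adj_symm hxy)
      refine ⟨h0P'.1 hx, ?_, h0P'.1 hy, ?_, h0P'.2 hxy⟩
      · rintro (rfl | rfl) <;> [exact hM₀a hx; exact hM₀a' hx]
      · rintro (rfl | rfl) <;> [exact hM₀a hy; exact hM₀a' hy]
  refine ⟨_, hPm2, le_trans hM0del le_sup_left, ?_, ?_, Or.inr ⟨?_, ?_, ?_⟩⟩
  · rw [hPv2, hdev]
    rintro x (⟨hx, _⟩ | hx)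
    · exact hPverts hx
    · rcases hx with rfl | rfl
      · exact Or.inl (Or.inr ha'Nb)
      · exact Or.inl (Or.inl hMa'')
  · intro x y h
    rcases h with h | h
    · exact hPe x y (Subgraph.deleteVerts_adj.mp h).2.2.2.2
    · rcases subOfAdj_adj' _ h with ⟨rfl, rfl⟩ | ⟨rfl, rfl⟩
      · exact Or.inl ha''
      · exact Or.inl (Na.adj_symm ha'')
  · -- cardinality
    have d1 : Disjoint (P'.verts \ {a, a'}) ({a', a''} : Set V) := by
      rw [Set.disjoint_right]
      rintro x (rfl | rfl)
      · rintro ⟨_, h⟩; exact h (by simp)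
      · rintro ⟨h, _⟩; exact ha''P h
    have hpairP : ({a, a'} : Set V) ⊆ P'.verts := by
      rintro x (rfl | rfl) <;> assumption
    have h2le : 2 ≤ P'.verts.ncard := by
      have := Set.ncard_le_ncard hpairP (Set.toFinite _)
      rwa [Set.ncard_pair haa'] at this
    rw [hPv2, hdev, Set.ncard_union_eq d1 (Set.toFinite _) (Set.toFinite _),
      Set.ncard_diff hpairP (Set.toFinite _), Set.ncard_pair haa', Set.ncard_pair ha'a'']
    omega
  · rw [hPv2, hdev]
    rintro (⟨_, h⟩ | h)
    · exact h (by simp)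
    · rcases h with h | h
      · exact haa' h
      · exact haa'' h.symm
  · intro x hxNb hxcol
    rw [hPv2, hdev]
    rintro (⟨hxP, _⟩ | hx)
    · exact hinv x hxNb (fun h => hxcol (h.trans hcol)) hxP
    · rcases hx with rfl | rfl
      · exact hxNb ha'Nb
      · exact hxcol hcol

end Walk
theorem stmt_11 {V : Type*} [Fintype V] (G : SimpleGraph V) (n k d : ℕ)
    (hbip : G.Colorable 2) (hG : IsNkdGraph G n k d) (hn : 2 ≤ n)
    (u v : V) (huv : G.Adj u v) :
    IsNkdGraph (G.deleteEdges {s(u, v)}) (n - 2) k d := by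
  classical
  obtain ⟨hcount, heven, hprop⟩ := hG
  obtain ⟨col⟩ := hbip
  set H := G.deleteEdges {s(u, v)} with hHdef
  have hHG : H ≤ G := G.deleteEdges_le _
  have hHadj : ∀ {x y : V}, H.Adj x y ↔ G.Adj x y ∧ ¬ s(x, y) = s(u, v) := by
    intro x y
    rw [hHdef, deleteEdges_adj]
    simp
  have hnV : n ≤ Nat.card V := by omega
  -- transfer of the (n,k,d) property to subgraphs of G on V
  have extend : ∀ S' : Finset V, S'.card = n → ∀ N₀ : G.Subgraph, N₀.IsMatching →
      N₀.verts ⊆ ((S' : Set V))ᶜ → N₀.verts.ncard = 2 * k →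
      ∃ N : G.Subgraph, N.IsMatching ∧ N₀ ≤ N ∧ N.verts ⊆ ((S' : Set V))ᶜ ∧
        N.verts.ncard = Nat.card V - n - d := by
    intro S' hS' N₀ hN₀m hN₀sub hN₀c
    have hcompl : (((S' : Set V))ᶜ).ncard = Nat.card V - n := by
      have := Set.ncard_add_ncard_compl (S' : Set V)
      rw [Set.ncard_coe_finset, hS'] at this
      omega
    have hadj : ∀ ⦃x y : V⦄, N₀.Adj x y → G.Adj x y := fun x y h => N₀.adj_sub h
    set R := restrictSG G ((S' : Set V))ᶜ N₀ hN₀sub hadj with hR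
    have hRk : IsKMatching R k := by
      refine ⟨restrictSG_matching hN₀sub hadj hN₀m, ?_⟩
      rw [hR, restrictSG_ncard, hN₀c]
    obtain ⟨M', hle, hdm⟩ := (hprop S' hS').2 R hRk
    refine ⟨liftSG G G le_rfl _ M', liftSG_matching le_rfl _ hdm.1, ⟨?_, ?_⟩, 
      liftSG_verts_subset le_rfl _ _, ?_⟩
    · intro x hx
      exact ⟨⟨x, hN₀sub hx⟩, hle.1 hx, rfl⟩
    · intro x y hxy
      exact ⟨hN₀sub (N₀.edge_vert hxy), hN₀sub (N₀.edge_vert (N₀.adj_symm hxy)),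
        hle.2 (show R.Adj ⟨x, _⟩ ⟨y, _⟩ from hxy)⟩
    · rw [liftSG_ncard, hdm.2, Nat.card_coe_set_eq, hcompl]
  refine ⟨by omega, ?_, ?_⟩
  · obtain ⟨t, ht⟩ := heven
    exact ⟨t + 1, by omega⟩
  intro S hS
  have hSsub : ∀ {x : V}, x ∈ ((S : Set V))ᶜ → x ∉ S := fun h => by simpa using h
  have hcomplS : (((S : Set V))ᶜ).ncard = Nat.card V - (n - 2) := by
    have := Set.ncard_add_ncard_compl (S : Set V)
    rw [Set.ncard_coe_finset, hS] at this
    omega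
  constructor
  · -- existence of a k-matching in (G-e) - S
    obtain ⟨S', hSS', hS'c, huS'⟩ : ∃ S' : Finset V, S ⊆ S' ∧ S'.card = n ∧ u ∈ S' := by
      obtain ⟨S', h1, _, h3⟩ := Finset.exists_subsuperset_card_eq (t := Finset.univ) (n := n)
        (Finset.subset_univ (insert u S))
        (by have := Finset.card_insert_le u S; rw [hS] at this; omega)
        (by rw [Finset.card_univ, ← Nat.card_eq_fintype_card]; exact hnV)
      exact ⟨S', (Finset.subset_insert u S).trans h1, h3, h1 (Finset.mem_insert_self u S)⟩
    obtain ⟨M₁, hM₁⟩ := (hprop S' hS'c).1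
    set N := liftSG G G le_rfl _ M₁ with hN
    have hNm : N.IsMatching := liftSG_matching le_rfl _ hM₁.1
    have hNsub : N.verts ⊆ ((S' : Set V))ᶜ := liftSG_verts_subset le_rfl _ _
    have hNsubS : N.verts ⊆ ((S : Set V))ᶜ := by
      intro x hx
      have := hNsub hx
      simp only [Set.mem_compl_iff, Finset.mem_coe] at *
      exact fun h => this (hSS' h)
    have huN : u ∉ N.verts := fun h => by simpa using (hNsub h) huS'
    have hNadjH : ∀ ⦃x y : V⦄, N.Adj x y → H.Adj x y := by
      intro x y h
      rw [hHadj]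
      refine ⟨N.adj_sub h, fun he => ?_⟩
      rcases Sym2.eq_iff.mp he with ⟨rfl, rfl⟩ | ⟨rfl, rfl⟩
      · exact huN (N.edge_vert h)
      · exact huN (N.edge_vert (N.adj_symm h))
    refine ⟨restrictSG H ((S : Set V))ᶜ N hNsubS hNadjH,
      restrictSG_matching hNsubS hNadjH hNm, ?_⟩
    rw [restrictSG_ncard, hN, liftSG_ncard]
    exact hM₁.2
  -- extension property
  intro M hM
  set M₀ := liftSG H G hHG _ M with hM₀
  have hM₀m : M₀.IsMatching := liftSG_matching hHG _ hM.1
  have hM₀c : M₀.verts.ncard = 2 * k := by rw [hM₀, liftSG_ncard]; exact hM.2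
  have hM₀sub : M₀.verts ⊆ ((S : Set V))ᶜ := liftSG_verts_subset hHG _ _
  have hM₀uv : ¬ M₀.Adj u v := by
    rintro ⟨hx, hy, hadj⟩
    have := M.adj_sub hadj
    rw [show ((H.induce ((S : Set V))ᶜ).Adj ⟨u, hx⟩ ⟨v, hy⟩) = H.Adj u v from rfl] at *
    exact (hHadj.mp this).2 rfl
  set U := ((S : Set V))ᶜ \ M₀.verts with hU
  have hUS : U ⊆ ((S : Set V))ᶜ := Set.diff_subset
  have hUcard : U.ncard = Nat.card V - (n - 2) - 2 * k := by
    rw [hU, Set.ncard_diff hM₀sub (Set.toFinite _), hM₀c, hcomplS]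
  have hUbig : 4 + d ≤ U.ncard := by
    rw [hUcard]; omega
  -- the key: extending M₀ avoiding any two uncovered vertices
  have hPair : ∀ x y : V, x ∈ U → y ∈ U → x ≠ y →
      ∃ N : G.Subgraph, N.IsMatching ∧ M₀ ≤ N ∧ N.verts ⊆ ((S : Set V))ᶜ \ {x, y} ∧
        N.verts.ncard = Nat.card V - n - d ∧
        (∀ p q, N.Adj p q → p ∉ M₀.verts → (p ∈ U \ {x, y} ∧ q ∈ U \ {x, y})) := by
    intro x y hx hy hxy
    have hxS : x ∉ S := hSsub (hUS hx)
    have hyS : y ∉ S := hSsub (hUS hy)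
    set S' : Finset V := insert x (insert y S) with hS'
    have hS'c : S'.card = n := by
      rw [hS', Finset.card_insert_of_notMem (by simp [hxy, hxS]),
        Finset.card_insert_of_notMem hyS, hS]
      omega
    have hS'compl : ((S' : Set V))ᶜ = ((S : Set V))ᶜ \ {x, y} := by
      ext z
      simp only [hS', Finset.coe_insert, Set.mem_compl_iff, Set.mem_insert_iff,
        Finset.mem_coe, Set.mem_diff, Set.mem_singleton_iff]
      tauto
    have hM₀sub' : M₀.verts ⊆ ((S' : Set V))ᶜ := by
      rw [hS'compl]
      intro z hz
      refine ⟨hM₀sub hz, ?_⟩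
      rintro (rfl | rfl)
      · exact hx.2 hz
      · exact hy.2 hz
    obtain ⟨N, hNm, hle, hNsub, hNc⟩ := extend S' hS'c M₀ hM₀m hM₀sub' hM₀c
    rw [hS'compl] at hNsub
    refine ⟨N, hNm, hle, hNsub, hNc, ?_⟩
    intro p q hpq hp
    have hq : q ∉ M₀.verts := by
      intro hq
      exact hp (M₀.edge_vert (M₀.adj_symm (matched_partner_of_le hM₀m hNm hle hq (N.adj_symm hpq))))
    exact ⟨⟨⟨(hNsub (N.edge_vert hpq)).1, hp⟩, (hNsub (N.edge_vert hpq)).2⟩,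
      ⟨⟨(hNsub (N.edge_vert (N.adj_symm hpq))).1, hq⟩, (hNsub (N.edge_vert (N.adj_symm hpq))).2⟩⟩
  -- final packaging
  have finish : ∀ P : G.Subgraph, P.IsMatching → M₀ ≤ P → P.verts ⊆ ((S : Set V))ᶜ →
      P.verts.ncard = Nat.card V - n - d + 2 → ¬ P.Adj u v →
      ∃ M' : (H.induce ((S : Set V))ᶜ).Subgraph, M ≤ M' ∧ IsDefectMatching M' d := by
    intro P hPm hPle hPsub hPc hPuv
    have hPadjH : ∀ ⦃x y : V⦄, P.Adj x y → H.Adj x y := by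
      intro x y h
      rw [hHadj]
      refine ⟨P.adj_sub h, fun he => ?_⟩
      rcases Sym2.eq_iff.mp he with ⟨rfl, rfl⟩ | ⟨rfl, rfl⟩
      · exact hPuv h
      · exact hPuv (P.adj_symm h)
    refine ⟨restrictSG H ((S : Set V))ᶜ P hPsub hPadjH, ⟨?_, ?_⟩,
      restrictSG_matching hPsub hPadjH hPm, ?_⟩
    · intro z hz
      exact hPle.1 (⟨z, hz, rfl⟩ : (z : V) ∈ M₀.verts)
    · intro z w hzw
      exact hPle.2 (liftSG_adj_of hHG _ _ hzw)
    · rw [restrictSG_ncard, hPc, Nat.card_coe_set_eq, hcomplS]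
      omega
  by_cases hB : u ∈ U ∧ v ∈ U
  case neg =>
    -- Case A : the deleted edge has an endpoint in S or covered by M
    obtain ⟨x₀, y₀, hx₀, hy₀, hxy₀⟩ := (Set.one_lt_ncard_iff (Set.toFinite _)).mp
      (by omega : 1 < U.ncard)
    obtain ⟨N₁, hN₁m, hN₁le, hN₁sub, hN₁c, hN₁extra⟩ := hPair x₀ y₀ hx₀ hy₀ hxy₀
    obtain ⟨a, b, hab, haM, hbM⟩ := exists_extra_edge hM₀m hN₁m hN₁le (Set.toFinite _)
      (by rw [hM₀c, hN₁c]; omega)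
    obtain ⟨haU, hbU⟩ := hN₁extra a b hab haM
    have hGab : G.Adj a b := N₁.adj_sub hab
    obtain ⟨N₂, hN₂m, hN₂le, hN₂sub, hN₂c, hN₂extra⟩ := hPair a b haU.1 hbU.1 hGab.ne
    have hN₂uv : ¬ N₂.Adj u v := by
      intro h
      by_cases hu0 : u ∈ M₀.verts
      · exact hM₀uv (matched_partner_of_le hM₀m hN₂m hN₂le hu0 h)
      · obtain ⟨h1, h2⟩ := hN₂extra u v h hu0
        exact hB ⟨h1.1, h2.1⟩
    have haN₂ : a ∉ N₂.verts := fun h => by simpa using (hN₂sub h).2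
    have hbN₂ : b ∉ N₂.verts := fun h => by simpa using (hN₂sub h).2
    obtain ⟨hPm, hPv⟩ := matching_sup_edge_s11 hN₂m hGab haN₂ hbN₂
    refine finish _ hPm (hN₂le.trans le_sup_left) ?_ ?_ ?_
    · rw [hPv]
      rintro z (hz | hz)
      · exact (hN₂sub hz).1
      · rcases hz with rfl | rfl
        · exact hUS haU.1
        · exact hUS hbU.1
    · rw [hPv, Set.ncard_union_eq ?_ (Set.toFinite _) (Set.toFinite _),
        Set.ncard_pair hGab.ne, hN₂c]
      rw [Set.disjoint_right]
      rintro z (rfl | rfl) <;> assumption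
    · rintro (h | h)
      · exact hN₂uv h
      · rcases subOfAdj_adj' _ h with ⟨rfl, rfl⟩ | ⟨rfl, rfl⟩
        · exact hB ⟨haU.1, hbU.1⟩
        · exact hB ⟨hbU.1, haU.1⟩
  case pos =>
  obtain ⟨huU, hvU⟩ := hB
  by_cases hBu : ∃ y, y ∈ U ∧ y ≠ v ∧ G.Adj u y
  · obtain ⟨y, hyU, hyv, hGuy⟩ := hBu
    obtain ⟨N, hNm, hNle, hNsub, hNc, _⟩ := hPair u y huU hyU hGuy.ne
    have huN : u ∉ N.verts := fun h => by simpa using (hNsub h).2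
    have hyN : y ∉ N.verts := fun h => by simpa using (hNsub h).2
    obtain ⟨hPm, hPv⟩ := matching_sup_edge_s11 hNm hGuy huN hyN
    refine finish _ hPm (hNle.trans le_sup_left) ?_ ?_ ?_
    · rw [hPv]
      rintro z (hz | hz)
      · exact (hNsub hz).1
      · rcases hz with rfl | rfl
        · exact hUS huU
        · exact hUS hyU
    · rw [hPv, Set.ncard_union_eq ?_ (Set.toFinite _) (Set.toFinite _),
        Set.ncard_pair hGuy.ne, hNc]
      rw [Set.disjoint_right]
      rintro z (rfl | rfl) <;> assumption
    · rintro (h | h)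
      · exact huN (N.edge_vert h)
      · rcases subOfAdj_adj' _ h with ⟨h1, h2⟩ | ⟨h1, h2⟩
        · exact hyv h2.symm
        · exact hGuy.ne h1
  by_cases hBv : ∃ x, x ∈ U ∧ x ≠ u ∧ G.Adj v x
  · obtain ⟨x, hxU, hxu, hGvx⟩ := hBv
    obtain ⟨N, hNm, hNle, hNsub, hNc, _⟩ := hPair v x hvU hxU hGvx.ne
    have hvN : v ∉ N.verts := fun h => by simpa using (hNsub h).2
    have hxN : x ∉ N.verts := fun h => by simpa using (hNsub h).2
    obtain ⟨hPm, hPv⟩ := matching_sup_edge_s11 hNm hGvx hvN hxN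
    refine finish _ hPm (hNle.trans le_sup_left) ?_ ?_ ?_
    · rw [hPv]
      rintro z (hz | hz)
      · exact (hNsub hz).1
      · rcases hz with rfl | rfl
        · exact hUS hvU
        · exact hUS hxU
    · rw [hPv, Set.ncard_union_eq ?_ (Set.toFinite _) (Set.toFinite _),
        Set.ncard_pair hGvx.ne, hNc]
      rw [Set.disjoint_right]
      rintro z (rfl | rfl) <;> assumption
    · rintro (h | h)
      · exact hvN (N.edge_vert (N.adj_symm h))
      · rcases subOfAdj_adj' _ h with ⟨h1, h2⟩ | ⟨h1, h2⟩
        · exact huv.ne h1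
        · exact hxu h1.symm
  -- the hard corner case
  push_neg at hBu hBv
  obtain ⟨N₁, hN₁m, hN₁le, hN₁sub, hN₁c, hN₁extra⟩ := hPair u v huU hvU huv.ne
  obtain ⟨a, b, hab, haM, hbM⟩ := exists_extra_edge hM₀m hN₁m hN₁le (Set.toFinite _)
    (by rw [hM₀c, hN₁c]; omega)
  obtain ⟨haU, hbU⟩ := hN₁extra a b hab haM
  have hGab : G.Adj a b := N₁.adj_sub hab
  have hau : a ≠ u := fun h => haU.2 (by rw [h]; exact Set.mem_insert _ _)
  have hav : a ≠ v := fun h => haU.2 (by rw [h]; exact Set.mem_insert_of_mem _ rfl)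
  have hbu : b ≠ u := fun h => hbU.2 (by rw [h]; exact Set.mem_insert _ _)
  have hbv : b ≠ v := fun h => hbU.2 (by rw [h]; exact Set.mem_insert_of_mem _ rfl)
  have mkN : ∀ z : V, z ∈ U → z ≠ u → z ≠ v →
      ∃ N : G.Subgraph, N.IsMatching ∧ M₀ ≤ N ∧ N.verts ⊆ ((S : Set V))ᶜ \ {u, z} ∧
        N.verts.ncard = Nat.card V - n - d ∧ v ∉ N.verts ∧ z ∉ N.verts ∧ u ∉ N.verts := by
    intro z hz hzu hzv
    obtain ⟨N, hNm, hNle, hNsub, hNc, hNextra⟩ := hPair u z huU hz (fun h => hzu h.symm)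
    have hvN : v ∉ N.verts := by
      intro hvN
      obtain ⟨w, hw, _⟩ := hNm hvN
      have hvM : v ∉ M₀.verts := hvU.2
      obtain ⟨_, hwU⟩ := hNextra v w hw hvM
      have hwu : w ≠ u := fun h => hwU.2 (by rw [h]; exact Set.mem_insert _ _)
      exact hBv w hwU.1 hwu (N.adj_sub hw)
    exact ⟨N, hNm, hNle, hNsub, hNc, hvN,
      fun h => by simpa using (hNsub h).2,
      fun h => by simpa using (hNsub h).2⟩
  obtain ⟨Na, hNam, hNale, hNasub, hNac, hvNa, haNa, huNa⟩ := mkN a haU.1 hau hav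
  obtain ⟨Nb, hNbm, hNble, hNbsub, hNbc, hvNb, hbNb, huNb⟩ := mkN b hbU.1 hbu hbv
  obtain ⟨P₀, hP₀m, hP₀le, hP₀v, _, hP₀c⟩ := walk_lemma col M₀ hM₀m
    ((Nb.edgeSet \ Na.edgeSet).ncard) Na Nb a rfl hNam hNbm hNale hNble haNa
    (by rw [hNac, hNbc])
  have hP₀subS : P₀.verts ⊆ ((S : Set V))ᶜ := by
    intro z hz
    rcases hP₀v hz with (h | h) | h
    · exact (hNasub h).1
    · exact (hNbsub h).1
    · rw [Set.mem_singleton_iff] at h; subst h; exact hUS haU.1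
  have huP₀ : u ∉ P₀.verts := by
    intro h
    rcases hP₀v h with (h' | h') | h'
    · exact huNa h'
    · exact huNb h'
    · rw [Set.mem_singleton_iff] at h'; exact hau h'.symm
  have hvP₀ : v ∉ P₀.verts := by
    intro h
    rcases hP₀v h with (h' | h') | h'
    · exact hvNa h'
    · exact hvNb h'
    · rw [Set.mem_singleton_iff] at h'; exact hav h'.symm
  have hP₀uv : ¬ P₀.Adj u v := fun h => huP₀ (P₀.edge_vert h)
  rcases hP₀c with hc | ⟨hc, haP₀, hinv⟩
  · exact finish _ hP₀m hP₀le hP₀subS (by rw [hc, hNbc]) hP₀uv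
  · have hbP₀ : b ∉ P₀.verts := hinv b hbNb (col.valid hGab).symm
    obtain ⟨hPm, hPv⟩ := matching_sup_edge_s11 hP₀m hGab haP₀ hbP₀
    refine finish _ hPm (hP₀le.trans le_sup_left) ?_ ?_ ?_
    · rw [hPv]
      rintro z (hz | hz)
      · exact hP₀subS hz
      · rcases hz with rfl | rfl
        · exact hUS haU.1
        · exact hUS hbU.1
    · rw [hPv, Set.ncard_union_eq ?_ (Set.toFinite _) (Set.toFinite _),
        Set.ncard_pair hGab.ne, hc, hNbc]
      rw [Set.disjoint_right]
      rintro z (rfl | rfl) <;> assumption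
    · rintro (h | h)
      · exact hP₀uv h
      · rcases subOfAdj_adj' _ h with ⟨rfl, rfl⟩ | ⟨rfl, rfl⟩
        · exact hau rfl
        · exact hbu rfl
end

section
/- Let G be an (n,k,d)-graph with n ≥ 2, let uv ∈ E(G), and suppose S' ⊆ V(G) with |S'| = n−2, M' is a k-matching of (G−uv)−S' with vertex set S'' that cannot be extended to a defect-d matching of (G−uv)−S', and S₁ ⊆ V(G)−S'−S''−{u,v} satisfies o((G−uv)−S'−S''−S₁) ≥ |S₁|+d+1. Then o((G−uv)−S'−S''−S₁) = |S₁|+d+2 and o(G−S'−S''−S₁) = |S₁|+d; in particular, uv is a bridge of an even component of G−S'−S''−S₁. -/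
open SimpleGraph

namespace StmtAux


variable {V : Type*}

/-- Reinterpret a subgraph of an induced subgraph as a subgraph of a supergraph. -/
def pushSub {H K : SimpleGraph V} {s : Set V} (M : (H.induce s).Subgraph) (hHK : H ≤ K) :
    K.Subgraph where
  verts := Subtype.val '' M.verts
  Adj x y := ∃ (hx : x ∈ s) (hy : y ∈ s), M.Adj ⟨x, hx⟩ ⟨y, hy⟩
  adj_sub := by
    rintro x y ⟨hx, hy, h⟩
    exact hHK (M.adj_sub h)
  edge_vert := by
    rintro x y ⟨hx, hy, h⟩
    exact ⟨⟨x, hx⟩, M.edge_vert h, rfl⟩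
  symm := by
    constructor
    rintro x y ⟨hx, hy, h⟩
    exact ⟨hy, hx, M.adj_symm h⟩

lemma pushSub_verts {H K : SimpleGraph V} {s : Set V} (M : (H.induce s).Subgraph) (hHK : H ≤ K) :
    (pushSub M hHK).verts = Subtype.val '' M.verts := rfl

lemma pushSub_isMatching {H K : SimpleGraph V} {s : Set V} {M : (H.induce s).Subgraph}
    (hHK : H ≤ K) (hM : M.IsMatching) : (pushSub M hHK).IsMatching := by
  rintro x ⟨x₀, hx₀, rfl⟩
  obtain ⟨y₀, hy₀, hyu⟩ := hM hx₀
  refine ⟨(y₀ : V), ⟨x₀.2, y₀.2, hy₀⟩, ?_⟩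
  rintro z ⟨hxz, hz, hadj⟩
  exact congrArg Subtype.val (hyu ⟨z, hz⟩ hadj)

/-- Restrict a subgraph whose vertices lie in `s` and whose edges lie in `H`
to a subgraph of `H.induce s`. -/
def downSub {H K : SimpleGraph V} (N : K.Subgraph) {s : Set V} (hv : N.verts ⊆ s)
    (ha : ∀ x y, N.Adj x y → H.Adj x y) : (H.induce s).Subgraph where
  verts := Subtype.val ⁻¹' N.verts
  Adj x y := N.Adj ↑x ↑y
  adj_sub := by intro x y h; exact ha _ _ h
  edge_vert := by intro x y h; exact N.edge_vert h
  symm := by constructor; intro x y h; exact N.adj_symm h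

lemma downSub_isMatching {H K : SimpleGraph V} {N : K.Subgraph} {s : Set V} {hv : N.verts ⊆ s}
    {ha : ∀ x y, N.Adj x y → H.Adj x y} (hN : N.IsMatching) : (downSub N hv ha).IsMatching := by
  rintro x hx
  obtain ⟨y, hy, hyu⟩ := hN hx
  exact ⟨⟨y, hv (N.edge_vert (N.adj_symm hy))⟩, hy, fun z hz => Subtype.ext (hyu _ hz)⟩

lemma downSub_verts_ncard {H K : SimpleGraph V} (N : K.Subgraph) {s : Set V} (hv : N.verts ⊆ s)
    (ha : ∀ x y, N.Adj x y → H.Adj x y) :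
    (downSub (H := H) N hv ha).verts.ncard = N.verts.ncard := by
  have h1 : Subtype.val '' (downSub (H := H) N hv ha).verts = N.verts := by
    apply Set.image_preimage_eq_of_subset
    rw [Subtype.range_coe_subtype]
    exact hv
  rw [← h1, Set.ncard_image_of_injective _ Subtype.val_injective]

lemma oddComponentsCard_eq_ncard {W : Type*} (H : SimpleGraph W) :
    oddComponentsCard H = {c : H.ConnectedComponent | Odd (Nat.card c.supp)}.ncard := by
  rw [← Nat.card_coe_set_eq]
  rfl

lemma odd_oddComponentsCard_iff {X : Type*} [Finite X] (H : SimpleGraph X) :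
    Odd (oddComponentsCard H) ↔ Odd (Nat.card X) := by
  have h : {c : H.ConnectedComponent | Odd (Nat.card c.supp)} = H.oddComponents := by
    ext c; simp [Nat.card_coe_set_eq, SimpleGraph.oddComponents]
  rw [oddComponentsCard_eq_ncard, h, H.odd_ncard_oddComponents]



variable {V : Type*}

lemma reach_induce_down {H : SimpleGraph V} {s t : Set V} {x y : ↥s}
    (w : (H.induce s).Walk x y) (hw : ∀ z ∈ w.support, (z : V) ∈ t)
    (hx : (x : V) ∈ t) (hy : (y : V) ∈ t) :
    (H.induce t).Reachable ⟨x, hx⟩ ⟨y, hy⟩ := by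
  have hconn := w.connected_induce_support
  have hreach := hconn.preconnected ⟨x, w.start_mem_support⟩ ⟨y, w.end_mem_support⟩
  have hmap : Set.MapsTo (Embedding.induce (G := H) s).toHom
      {z : ↥s | z ∈ w.support} t := fun z hz => hw z hz
  exact hreach.map (SimpleGraph.induceHom (Embedding.induce (G := H) s).toHom hmap)

lemma reach_induce_up {H : SimpleGraph V} {s t : Set V} (hts : t ⊆ s) {x y : ↥t}
    (h : (H.induce t).Reachable x y) :
    (H.induce s).Reachable ⟨↑x, hts x.2⟩ ⟨↑y, hts y.2⟩ :=
  h.map (H.induceHomOfLE hts).toHom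

lemma mem_supp_of_mem_walk_support {X : Type*} {H : SimpleGraph X} {x y : X}
    (w : H.Walk x y) {z : X} (hz : z ∈ w.support) :
    z ∈ (H.connectedComponentMk x).supp := by
  classical
  have : H.Reachable x z := ⟨w.takeUntil z hz⟩
  simp only [ConnectedComponent.mem_supp_iff, ConnectedComponent.eq]
  exact this.symm

lemma exists_comp_eq_supp {H : SimpleGraph V} {s t : Set V} (hts : t ⊆ s)
    (c : (H.induce s).ConnectedComponent) (hc : ∀ z : ↥s, z ∈ c.supp → (z : V) ∈ t) :
    ∃ c' : (H.induce t).ConnectedComponent,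
      Subtype.val '' c'.supp = Subtype.val '' c.supp := by
  obtain ⟨x, hx⟩ := c.exists_rep
  have hx' : (H.induce s).connectedComponentMk x = c := hx
  have hxc : x ∈ c.supp := by rw [ConnectedComponent.mem_supp_iff, hx']
  have hxt : (x : V) ∈ t := hc x hxc
  refine ⟨(H.induce t).connectedComponentMk ⟨↑x, hxt⟩, ?_⟩
  ext z
  simp only [Set.mem_image]
  constructor
  · rintro ⟨z', hz', rfl⟩
    rw [ConnectedComponent.mem_supp_iff, ConnectedComponent.eq] at hz'
    have h2 := reach_induce_up hts hz'
    refine ⟨⟨↑z', hts z'.2⟩, ?_, rfl⟩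
    rw [ConnectedComponent.mem_supp_iff, ← hx', ConnectedComponent.eq]
    exact h2
  · rintro ⟨z', hz', rfl⟩
    rw [ConnectedComponent.mem_supp_iff, ← hx', ConnectedComponent.eq] at hz'
    obtain ⟨w⟩ := hz'
    have hsupp : ∀ m ∈ w.support, (m : V) ∈ t := by
      intro m hm
      refine hc m ?_
      have hmm := mem_supp_of_mem_walk_support w hm
      rw [ConnectedComponent.mem_supp_iff] at hmm
      have hzc : (H.induce s).connectedComponentMk z' = c := by
        rw [← hx', ConnectedComponent.eq]; exact ⟨w⟩
      rw [ConnectedComponent.mem_supp_iff, hmm, hzc]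
    have hzt : (z' : V) ∈ t := hsupp z' w.start_mem_support
    have h3 := reach_induce_down w hsupp hzt hxt
    exact ⟨⟨↑z', hzt⟩, by
      rw [ConnectedComponent.mem_supp_iff, ConnectedComponent.eq]; exact h3, rfl⟩

lemma card_supp_eq_image_ncard {X : Type*} {s : Set X} {H : SimpleGraph ↥s}
    (c : H.ConnectedComponent) :
    Nat.card c.supp = (Subtype.val '' c.supp).ncard := by
  rw [Set.ncard_image_of_injective _ Subtype.val_injective, Nat.card_coe_set_eq]

lemma ncard_odd_restrict_le [Finite V] {H : SimpleGraph V} {s t : Set V} (hts : t ⊆ s) :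
    {c : (H.induce s).ConnectedComponent |
        Odd (Nat.card c.supp) ∧ ∀ z : ↥s, z ∈ c.supp → (z : V) ∈ t}.ncard
      ≤ oddComponentsCard (H.induce t) := by
  classical
  set P := {c : (H.induce s).ConnectedComponent |
      Odd (Nat.card c.supp) ∧ ∀ z : ↥s, z ∈ c.supp → (z : V) ∈ t}
  have hchoice : ∀ c : P, ∃ c' : (H.induce t).ConnectedComponent,
      Subtype.val '' c'.supp = Subtype.val '' (c : (H.induce s).ConnectedComponent).supp :=
    fun c => exists_comp_eq_supp hts (c : (H.induce s).ConnectedComponent) c.2.2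
  choose f hf using hchoice
  have hodd : ∀ c : P, Odd (Nat.card (f c).supp) := by
    intro c
    rw [card_supp_eq_image_ncard, hf c, ← card_supp_eq_image_ncard]
    exact c.2.1
  have hinj : Function.Injective (fun c : P => (⟨f c, hodd c⟩ :
      {c' : (H.induce t).ConnectedComponent // Odd (Nat.card c'.supp)})) := by
    intro c₁ c₂ h
    simp only [Subtype.mk_eq_mk] at h
    have hsupp : Subtype.val '' (c₁ : (H.induce s).ConnectedComponent).supp
        = Subtype.val '' (c₂ : (H.induce s).ConnectedComponent).supp := by
      rw [← hf c₁, ← hf c₂, h]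
    have heq : (c₁ : (H.induce s).ConnectedComponent).supp
        = (c₂ : (H.induce s).ConnectedComponent).supp :=
      Set.image_injective.mpr Subtype.val_injective hsupp
    exact Subtype.ext (ConnectedComponent.supp_injective heq)
  calc P.ncard = Nat.card P := (Nat.card_coe_set_eq _).symm
    _ ≤ _ := Nat.card_le_card_of_injective _ hinj



section AddEdge

variable {X : Type*} {K L : SimpleGraph X} {u₀ v₀ : X}

lemma reach_add_edge (hA : ∀ x y, L.Adj x y ↔ K.Adj x y ∨ (x = u₀ ∧ y = v₀) ∨ (x = v₀ ∧ y = u₀))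
    {x y : X} (h : L.Reachable x y) :
    K.Reachable x y ∨ (K.Reachable x u₀ ∧ K.Reachable v₀ y) ∨
      (K.Reachable x v₀ ∧ K.Reachable u₀ y) := by
  obtain ⟨w⟩ := h
  induction w with
  | nil => exact Or.inl (Reachable.refl _)
  | @cons a b c hab p ih =>
    rcases (hA a b).mp hab with h' | ⟨rfl, rfl⟩ | ⟨rfl, rfl⟩
    · rcases ih with h'' | ⟨h1, h2⟩ | ⟨h1, h2⟩
      · exact Or.inl (h'.reachable.trans h'')
      · exact Or.inr (Or.inl ⟨h'.reachable.trans h1, h2⟩)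
      · exact Or.inr (Or.inr ⟨h'.reachable.trans h1, h2⟩)
    · rcases ih with h'' | ⟨h1, h2⟩ | ⟨h1, h2⟩
      · exact Or.inr (Or.inl ⟨Reachable.refl _, h''⟩)
      · exact Or.inl (h1.symm.trans h2)
      · exact Or.inl h2
    · rcases ih with h'' | ⟨h1, h2⟩ | ⟨h1, h2⟩
      · exact Or.inr (Or.inr ⟨Reachable.refl _, h''⟩)
      · exact Or.inl h2
      · exact Or.inl (h1.symm.trans h2)

variable (hKL : K ≤ L)
    (hA : ∀ x y, L.Adj x y ↔ K.Adj x y ∨ (x = u₀ ∧ y = v₀) ∨ (x = v₀ ∧ y = u₀))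

include hKL hA

lemma add_edge_mk_eq_iff {x y : X} :
    L.connectedComponentMk x = L.connectedComponentMk y ↔
      (K.Reachable x y ∨ (K.Reachable x u₀ ∧ K.Reachable v₀ y) ∨
        (K.Reachable x v₀ ∧ K.Reachable u₀ y)) := by
  have hadj : L.Adj u₀ v₀ := (hA u₀ v₀).mpr (Or.inr (Or.inl ⟨rfl, rfl⟩))
  rw [ConnectedComponent.eq]
  constructor
  · exact reach_add_edge hA
  · rintro (h | ⟨h1, h2⟩ | ⟨h1, h2⟩)
    · exact h.mono hKL
    · exact ((h1.mono hKL).trans hadj.reachable).trans (h2.mono hKL)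
    · exact ((h1.mono hKL).trans hadj.symm.reachable).trans (h2.mono hKL)

lemma add_edge_supp_eq (c : K.ConnectedComponent)
    (hcu : c ≠ K.connectedComponentMk u₀) (hcv : c ≠ K.connectedComponentMk v₀) :
    (c.map (Hom.ofLE hKL)).supp = c.supp := by
  obtain ⟨x, hx⟩ := c.exists_rep
  have hx' : K.connectedComponentMk x = c := hx
  subst hx'
  ext z
  simp only [ConnectedComponent.mem_supp_iff, ConnectedComponent.map_mk,
    Hom.ofLE_apply]
  rw [add_edge_mk_eq_iff hKL hA, ConnectedComponent.eq]
  constructor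
  · rintro (h | ⟨h1, h2⟩ | ⟨h1, h2⟩)
    · exact h
    · exact absurd (ConnectedComponent.eq.mpr h2.symm) hcv
    · exact absurd (ConnectedComponent.eq.mpr h2.symm) hcu
  · exact Or.inl

lemma add_edge_supp_union :
    ((K.connectedComponentMk u₀).map (Hom.ofLE hKL)).supp
      = (K.connectedComponentMk u₀).supp ∪ (K.connectedComponentMk v₀).supp := by
  ext z
  simp only [ConnectedComponent.mem_supp_iff, ConnectedComponent.map_mk,
    Hom.ofLE_apply, Set.mem_union]
  rw [add_edge_mk_eq_iff hKL hA, ConnectedComponent.eq, ConnectedComponent.eq]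
  constructor
  · rintro (h | ⟨h1, h2⟩ | ⟨h1, h2⟩)
    · exact Or.inl h
    · exact Or.inl h1
    · exact Or.inr h1
  · rintro (h | h)
    · exact Or.inl h
    · exact Or.inr (Or.inr ⟨h, Reachable.refl _⟩)

lemma add_edge_card_supp_union [Finite X]
    (hne : K.connectedComponentMk u₀ ≠ K.connectedComponentMk v₀) :
    Nat.card ((K.connectedComponentMk u₀).map (Hom.ofLE hKL)).supp
      = Nat.card (K.connectedComponentMk u₀).supp
        + Nat.card (K.connectedComponentMk v₀).supp := by
  rw [add_edge_supp_union hKL hA, Nat.card_coe_set_eq, Nat.card_coe_set_eq,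
    Nat.card_coe_set_eq,
    Set.ncard_union_eq (K.pairwise_disjoint_supp_connectedComponent hne)
      (Set.toFinite _) (Set.toFinite _)]

lemma oddComponentsCard_add_edge [Finite X]
    (hu : Odd (Nat.card (K.connectedComponentMk u₀).supp))
    (hv : Odd (Nat.card (K.connectedComponentMk v₀).supp))
    (hne : K.connectedComponentMk u₀ ≠ K.connectedComponentMk v₀) :
    oddComponentsCard L + 2 = oddComponentsCard K := by
  classical
  have hA' : ∀ x y, L.Adj x y ↔ K.Adj x y ∨ (x = v₀ ∧ y = u₀) ∨ (x = u₀ ∧ y = v₀) := by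
    intro x y; rw [hA x y]; tauto
  have hcueven : ¬ Odd (Nat.card
      ((K.connectedComponentMk u₀).map (Hom.ofLE hKL)).supp) := by
    rw [Nat.not_odd_iff_even, add_edge_card_supp_union hKL hA hne]
    exact hu.add_odd hv
  have hcveven : ¬ Odd (Nat.card
      ((K.connectedComponentMk v₀).map (Hom.ofLE hKL)).supp) := by
    rw [Nat.not_odd_iff_even, add_edge_card_supp_union hKL hA' hne.symm]
    exact hv.add_odd hu
  have hsuppeq : ∀ c ∈ {c : K.ConnectedComponent | Odd (Nat.card c.supp)}
      \ {K.connectedComponentMk u₀, K.connectedComponentMk v₀},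
      (c.map (Hom.ofLE hKL)).supp = c.supp := by
    rintro c ⟨_, hc⟩
    simp only [Set.mem_insert_iff, Set.mem_singleton_iff, not_or] at hc
    exact add_edge_supp_eq hKL hA c hc.1 hc.2
  have himg : (ConnectedComponent.map (Hom.ofLE hKL)) ''
      ({c : K.ConnectedComponent | Odd (Nat.card c.supp)}
        \ {K.connectedComponentMk u₀, K.connectedComponentMk v₀})
      = {c : L.ConnectedComponent | Odd (Nat.card c.supp)} := by
    ext c'
    constructor
    · rintro ⟨c, hc, rfl⟩
      have hse := hsuppeq c hc
      simp only [Set.mem_setOf_eq]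
      rw [Nat.card_coe_set_eq, hse, ← Nat.card_coe_set_eq]
      exact hc.1
    · intro hc'
      obtain ⟨x, hx⟩ := c'.exists_rep
      have hφx : (K.connectedComponentMk x).map (Hom.ofLE hKL) = c' := hx
      by_cases h1 : K.connectedComponentMk x = K.connectedComponentMk u₀
      · rw [h1] at hφx
        exact absurd (by rw [hφx]; exact hc') hcueven
      by_cases h2 : K.connectedComponentMk x = K.connectedComponentMk v₀
      · rw [h2] at hφx
        exact absurd (by rw [hφx]; exact hc') hcveven
      have hmem : K.connectedComponentMk x ∈ {c : K.ConnectedComponent | Odd (Nat.card c.supp)}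
          \ {K.connectedComponentMk u₀, K.connectedComponentMk v₀} := by
        have hss := add_edge_supp_eq hKL hA _ h1 h2
        refine ⟨?_, by simp [h1, h2]⟩
        simp only [Set.mem_setOf_eq]
        have hoc : Odd (Nat.card
            ((K.connectedComponentMk x).map (Hom.ofLE hKL)).supp) := by
          rw [hφx]; exact hc'
        rwa [Nat.card_coe_set_eq, hss, ← Nat.card_coe_set_eq] at hoc
      exact ⟨_, hmem, hφx⟩
  have hinj : Set.InjOn (ConnectedComponent.map (Hom.ofLE hKL))
      ({c : K.ConnectedComponent | Odd (Nat.card c.supp)}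
        \ {K.connectedComponentMk u₀, K.connectedComponentMk v₀}) := by
    intro c₁ h₁ c₂ h₂ h
    have hse : c₁.supp = c₂.supp := by
      rw [← hsuppeq c₁ h₁, ← hsuppeq c₂ h₂, h]
    exact ConnectedComponent.supp_injective hse
  have hpair : ({K.connectedComponentMk u₀, K.connectedComponentMk v₀} :
      Set K.ConnectedComponent) ⊆ {c : K.ConnectedComponent | Odd (Nat.card c.supp)} := by
    rintro c (rfl | rfl)
    · exact hu
    · exact hv
  rw [oddComponentsCard_eq_ncard, oddComponentsCard_eq_ncard, ← himg,
    Set.ncard_image_of_injOn hinj, ← Set.ncard_pair hne]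
  exact Set.ncard_diff_add_ncard_of_subset hpair (Set.toFinite _)

end AddEdge



variable {V : Type*}

lemma tutte_count [Finite V] {H : SimpleGraph V} {M : H.Subgraph} (hM : M.IsMatching)
    {s A B : Set V} (hMs : M.verts ⊆ s)
    (hB : ∀ x ∈ B, ∀ y, M.Adj x y → y ∈ B) :
    oddComponentsCard (H.induce (s \ (A ∪ B)))
      ≤ (s \ M.verts).ncard + A.ncard := by
  classical
  set w := s \ (A ∪ B) with hw
  have key : ∀ c : (H.induce w).ConnectedComponent, Odd (Nat.card c.supp) →
      ∃ z : V, (z ∈ Subtype.val '' c.supp ∧ z ∉ M.verts) ∨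
        (z ∈ A ∧ ∃ x ∈ Subtype.val '' c.supp, M.Adj x z) := by
    intro c hodd
    by_contra hcon
    push_neg at hcon
    set Q := Subtype.val '' c.supp with hQ
    have hQw : Q ⊆ w := by
      rintro _ ⟨z, _, rfl⟩; exact z.2
    have hQM : Q ⊆ M.verts := fun z hz => (hcon z).1 hz
    have hQpart : ∀ x ∈ Q, ∀ y, M.Adj x y → y ∈ Q := by
      intro x hx y hxy
      have hyA : y ∉ A := by
        intro hyA
        exact (hcon y).2 hyA x hx hxy
      have hyB : y ∉ B := by
        intro hyB
        have : x ∈ B := hB y hyB x (M.adj_symm hxy)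
        exact ((hQw hx).2 (Or.inr this)).elim
      have hys : y ∈ s := hMs (M.edge_vert (M.adj_symm hxy))
      have hyw : y ∈ w := ⟨hys, fun h => h.elim hyA hyB⟩
      obtain ⟨x₀, hx₀, rfl⟩ := hx
      have hadj : (H.induce w).Adj x₀ ⟨y, hyw⟩ := M.adj_sub hxy
      have hc : (H.induce w).connectedComponentMk ⟨y, hyw⟩ = c := by
        rw [← (ConnectedComponent.mem_supp_iff c x₀).mp hx₀]
        exact ConnectedComponent.connectedComponentMk_eq_of_adj hadj.symm
      exact ⟨⟨y, hyw⟩, hc, rfl⟩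
    have hind : (M.induce Q).IsMatching := by
      intro x hx
      have hx' : x ∈ Q := hx
      obtain ⟨y, hy, hyu⟩ := hM (hQM hx')
      refine ⟨y, ⟨hx', hQpart x hx' y hy, hy⟩, ?_⟩
      rintro z ⟨_, hz, hadj⟩
      exact hyu z hadj
    haveI : Fintype ((M.induce Q).verts) := Fintype.ofFinite _
    have heven := hind.even_card
    have hQeven : Even (Q.ncard) := by
      have h1 : Even ((M.induce Q).verts.ncard) := by
        rwa [Set.ncard_eq_toFinset_card' _]
      rwa [Subgraph.induce_verts] at h1
    rw [card_supp_eq_image_ncard, ← hQ] at hodd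
    exact (Nat.not_odd_iff_even.mpr hQeven) hodd
  choose z hz using fun c : {c : (H.induce w).ConnectedComponent // Odd (Nat.card c.supp)} =>
    key c c.2
  have hwz : ∀ c, z c ∈ (s \ M.verts) ∪ A := by
    intro c
    rcases hz c with ⟨hmem, hnot⟩ | ⟨hA, _⟩
    · obtain ⟨x₀, _, hval⟩ := hmem
      rw [← hval] at hnot ⊢
      exact Or.inl ⟨x₀.2.1, hnot⟩
    · exact Or.inr hA
  have hinj : Function.Injective (fun c => (⟨z c, hwz c⟩ : ↥((s \ M.verts) ∪ A))) := by
    intro c₁ c₂ heq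
    simp only [Subtype.mk_eq_mk] at heq
    have hzz := hz c₂
    rw [← heq] at hzz
    rcases hz c₁ with ⟨hmem₁, hnot₁⟩ | ⟨hA₁, x₁, hx₁, hadj₁⟩ <;>
      rcases hzz with ⟨hmem₂, hnot₂⟩ | ⟨hA₂, x₂, hx₂, hadj₂⟩
    · obtain ⟨y₁, hy₁, he₁⟩ := hmem₁
      obtain ⟨y₂, hy₂, he₂⟩ := hmem₂
      have : y₁ = y₂ := Subtype.val_injective (he₁.trans he₂.symm)
      subst this
      refine Subtype.ext ?_
      rw [← (ConnectedComponent.mem_supp_iff _ y₁).mp hy₁,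
        ← (ConnectedComponent.mem_supp_iff _ y₁).mp hy₂]
    · obtain ⟨y₁, _, hv⟩ := hmem₁
      rw [← hv] at hA₂
      exact absurd (Or.inl hA₂) y₁.2.2
    · obtain ⟨y₂, _, hv⟩ := hmem₂
      rw [← hv] at hA₁
      exact absurd (Or.inl hA₁) y₂.2.2
    · have hzM : z c₁ ∈ M.verts := M.edge_vert (M.adj_symm hadj₁)
      obtain ⟨y, hy, hyu⟩ := hM hzM
      have hx12 : x₁ = x₂ := by
        rw [hyu x₁ (M.adj_symm hadj₁), hyu x₂ (M.adj_symm hadj₂)]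
      subst hx12
      obtain ⟨y₁, hy₁, he₁⟩ := hx₁
      obtain ⟨y₂, hy₂, he₂⟩ := hx₂
      have : y₁ = y₂ := Subtype.val_injective (he₁.trans he₂.symm)
      subst this
      refine Subtype.ext ?_
      rw [← (ConnectedComponent.mem_supp_iff _ y₁).mp hy₁,
        ← (ConnectedComponent.mem_supp_iff _ y₁).mp hy₂]
  calc oddComponentsCard (H.induce w)
      ≤ Nat.card ↥((s \ M.verts) ∪ A) := Nat.card_le_card_of_injective _ hinj
    _ = ((s \ M.verts) ∪ A).ncard := Nat.card_coe_set_eq _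
    _ ≤ (s \ M.verts).ncard + A.ncard := Set.ncard_union_le _ _


section Ext

variable {V : Type*} [Fintype V] {G : SimpleGraph V} {n k d : ℕ}

lemma ncard_compl_eq (s : Set V) : sᶜ.ncard = Nat.card V - s.ncard := by
  have := Set.ncard_add_ncard_compl s
  omega

lemma hG_ext (hG : IsNkdGraph G n k d) (S : Finset V) (hS : S.card = n)
    (N : G.Subgraph) (hNm : N.IsMatching) (hN2k : N.verts.ncard = 2 * k)
    (hdisj : Disjoint (↑S : Set V) N.verts) :
    ∃ N' : G.Subgraph, N ≤ N' ∧ N'.IsMatching ∧ N'.verts ⊆ ((S : Set V))ᶜ ∧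
      N'.verts.ncard = Nat.card V - n - d := by
  have hvs : N.verts ⊆ ((S : Set V))ᶜ := by
    intro x hx hxS
    exact Set.disjoint_left.mp hdisj hxS hx
  set Nd := downSub (H := G) N hvs (fun x y h => N.adj_sub h) with hNd
  have hKm : IsKMatching Nd k := by
    refine ⟨downSub_isMatching hNm, ?_⟩
    rw [hNd, downSub_verts_ncard]
    exact hN2k
  obtain ⟨M₂, hle, hm, hcard⟩ := (hG.2.2 S hS).2 Nd hKm
  refine ⟨pushSub M₂ (le_refl G), ⟨?_, ?_⟩, pushSub_isMatching _ hm, ?_, ?_⟩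
  · intro x hx
    exact ⟨⟨x, hvs hx⟩, hle.1 hx, rfl⟩
  · intro x y h
    have hx : x ∈ ((S : Set V))ᶜ := hvs (N.edge_vert h)
    have hy : y ∈ ((S : Set V))ᶜ := hvs (N.edge_vert (N.adj_symm h))
    exact ⟨hx, hy, hle.2 h⟩
  · rw [pushSub_verts]
    exact Subtype.coe_image_subset _ _
  · rw [pushSub_verts, Set.ncard_image_of_injective _ Subtype.val_injective, hcard,
      Nat.card_coe_set_eq, ncard_compl_eq, Set.ncard_coe_finset, hS]

lemma Lext (hG : IsNkdGraph G n k d) (hn : 2 ≤ n) (S' : Finset V) (hS' : S'.card = n - 2)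
    (N : G.Subgraph) (hNm : N.IsMatching) (hN2k : N.verts.ncard = 2 * k)
    (hdisj : Disjoint (↑S' : Set V) N.verts) :
    ∃ N' : G.Subgraph, N ≤ N' ∧ N'.IsMatching ∧ N'.verts ⊆ ((S' : Set V))ᶜ ∧
      N'.verts.ncard = Nat.card V - (n - 2) - d := by
  classical
  have hV := hG.1
  set I := ((S' : Set V) ∪ N.verts)ᶜ with hI
  have hIcard : I.ncard = Nat.card V - (n - 2) - 2 * k := by
    rw [hI, ncard_compl_eq, Set.ncard_union_eq hdisj (Set.toFinite _) (Set.toFinite _),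
      Set.ncard_coe_finset, hS', hN2k]
    omega
  have hI2 : 2 ≤ I.ncard := by omega
  have hcardS : ∀ a b : V, a ∈ I → b ∈ I → a ≠ b →
      (insert a (insert b S') : Finset V).card = n := by
    intro a b ha hb hne
    have haS : a ∉ S' := fun h => ha (Or.inl (by exact_mod_cast h))
    have hbS : b ∉ S' := fun h => hb (Or.inl (by exact_mod_cast h))
    rw [Finset.card_insert_of_notMem (by simp [hne, haS]),
      Finset.card_insert_of_notMem hbS, hS']
    omega
  have hdisjS : ∀ a b : V, a ∈ I → b ∈ I →
      Disjoint (↑(insert a (insert b S')) : Set V) N.verts := by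
    intro a b ha hb
    rw [Set.disjoint_left]
    intro x hx hxN
    simp only [Finset.coe_insert, Set.mem_insert_iff] at hx
    rcases hx with rfl | rfl | hx
    · exact ha (Or.inr hxN)
    · exact hb (Or.inr hxN)
    · exact Set.disjoint_left.mp hdisj hx hxN
  by_cases hedge : ∃ a ∈ I, ∃ b ∈ I, G.Adj a b
  · obtain ⟨a, haI, b, hbI, hab⟩ := hedge
    obtain ⟨N'', hle, hm, hsub, hcard⟩ :=
      hG_ext hG (insert a (insert b S')) (hcardS a b haI hbI hab.ne) N hNm hN2k
        (hdisjS a b haI hbI)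
    have habm : a ∉ N''.verts ∧ b ∉ N''.verts := by
      constructor <;> intro h <;> apply hsub h <;> simp
    have hdisjv : Disjoint N''.verts (G.subgraphOfAdj hab).verts := by
      rw [Set.disjoint_right]
      intro x hx
      simp only [SimpleGraph.subgraphOfAdj_verts, Set.mem_insert_iff,
        Set.mem_singleton_iff] at hx
      rcases hx with rfl | rfl
      · exact habm.1
      · exact habm.2
    refine ⟨N'' ⊔ G.subgraphOfAdj hab, le_trans hle le_sup_left, ?_, ?_, ?_⟩
    · refine hm.sup (Subgraph.IsMatching.subgraphOfAdj hab) ?_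
      rw [hm.support_eq_verts, (Subgraph.IsMatching.subgraphOfAdj hab).support_eq_verts]
      exact hdisjv
    · intro x hx
      rcases hx with hx | hx
      · intro hxS
        exact hsub hx (by simp [hxS])
      · simp only [SimpleGraph.subgraphOfAdj_verts, Set.mem_insert_iff,
          Set.mem_singleton_iff] at hx
        rcases hx with rfl | rfl
        · exact fun h => haI (Or.inl h)
        · exact fun h => hbI (Or.inl h)
    · have : (N'' ⊔ G.subgraphOfAdj hab).verts = N''.verts ∪ {a, b} := rfl
      rw [this, Set.ncard_union_eq (by simpa using hdisjv) (Set.toFinite _) (Set.toFinite _),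
        hcard, Set.ncard_pair hab.ne]
      omega
  · push_neg at hedge
    obtain ⟨a, haI, b, hbI, hne⟩ := (Set.one_lt_ncard (s := I) (Set.toFinite _)).mp (by omega)
    obtain ⟨N'', hle, hm, hsub, hcard⟩ :=
      hG_ext hG (insert a (insert b S')) (hcardS a b haI hbI hne) N hNm hN2k
        (hdisjS a b haI hbI)
    exfalso
    have hsubI : I \ {a, b} ⊆ ((↑(insert a (insert b S')) : Set V) ∪ N''.verts)ᶜ := by
      rintro x ⟨hxI, hxab⟩
      simp only [Set.mem_insert_iff, Set.mem_singleton_iff, not_or] at hxab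
      intro hmem
      rcases hmem with hmem | hmem
      · simp only [Finset.coe_insert, Set.mem_insert_iff] at hmem
        rcases hmem with rfl | rfl | hmem
        · exact hxab.1 rfl
        · exact hxab.2 rfl
        · exact hxI (Or.inl hmem)
      · obtain ⟨y, hy, _⟩ := hm hmem
        have hyv : y ∈ N''.verts := N''.edge_vert (N''.adj_symm hy)
        have hadj : G.Adj x y := N''.adj_sub hy
        by_cases hyI : y ∈ I
        · exact hedge x hxI y hyI hadj
        · have hymem : y ∈ (S' : Set V) ∪ N.verts := not_not.mp (fun h => hyI h)
          rcases hymem with hyS | hyN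
          · exact hsub hyv (by simp [hyS])
          · obtain ⟨z, hz, hzu⟩ := hNm hyN
            have h1 : N''.Adj y z := hle.2 hz
            have h2 : N''.Adj y x := N''.adj_symm hy
            obtain ⟨ww, hww, hwwu⟩ := hm (N''.edge_vert h1)
            have hxz : x = z := by rw [hwwu x h2, hwwu z h1]
            subst hxz
            exact hxI (Or.inr (N.edge_vert (N.adj_symm hz)))
    have hIab : ({a, b} : Set V) ⊆ I := by
      rintro x (rfl | rfl) <;> assumption
    have h1 : (I \ {a, b}).ncard = I.ncard - 2 := by
      rw [Set.ncard_diff hIab (Set.toFinite _), Set.ncard_pair hne]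
    have h2 : ((↑(insert a (insert b S')) : Set V) ∪ N''.verts)ᶜ.ncard = d := by
      have hd : Disjoint (↑(insert a (insert b S')) : Set V) N''.verts := by
        rw [Set.disjoint_left]
        intro x hx hxN
        exact hsub hxN hx
      rw [ncard_compl_eq, Set.ncard_union_eq hd (Set.toFinite _) (Set.toFinite _),
        Set.ncard_coe_finset, hcardS a b haI hbI hne, hcard]
      omega
    have h3 := Set.ncard_le_ncard hsubI (Set.toFinite _)
    omega

lemma not_mem_of_noext (hG : IsNkdGraph G n k d) (hn : 2 ≤ n) {u v : V} (huv : G.Adj u v)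
    (S' : Finset V) (hS' : S'.card = n - 2)
    (M' : ((G.deleteEdges {s(u, v)}).induce ((S' : Set V)ᶜ)).Subgraph)
    (hM' : IsKMatching M' k)
    (hnoext : ¬ ∃ M'' : ((G.deleteEdges {s(u, v)}).induce ((S' : Set V)ᶜ)).Subgraph,
        M' ≤ M'' ∧ IsDefectMatching M'' d) :
    u ∉ (S' : Set V) ∪ Subtype.val '' M'.verts ∧
      v ∉ (S' : Set V) ∪ Subtype.val '' M'.verts := by
  have hGe : G.deleteEdges {s(u, v)} ≤ G := G.deleteEdges_le _
  set N := pushSub M' hGe with hNdef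
  have hNverts : N.verts = Subtype.val '' M'.verts := rfl
  have hNm : N.IsMatching := pushSub_isMatching hGe hM'.1
  have hN2k : N.verts.ncard = 2 * k := by
    rw [hNverts, Set.ncard_image_of_injective _ Subtype.val_injective]
    exact hM'.2
  have hNGe : ∀ x y, N.Adj x y → (G.deleteEdges {s(u, v)}).Adj x y := by
    rintro x y ⟨hx, hy, h⟩
    exact M'.adj_sub h
  have hdisj : Disjoint (↑S' : Set V) N.verts := by
    rw [Set.disjoint_right, hNverts]
    rintro x ⟨x₀, _, rfl⟩
    exact x₀.2
  suffices hkey : ∀ w z : V, G.Adj w z → s(w, z) = s(u, v) →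
      w ∈ (S' : Set V) ∪ Subtype.val '' M'.verts → False by
    constructor
    · intro hu
      exact hkey u v huv rfl hu
    · intro hv
      exact hkey v u huv.symm (Sym2.eq_swap) hv
  intro w z hwz hswz hwmem
  obtain ⟨N'', hle, hm, hsub, hcard⟩ := Lext hG hn S' hS' N hNm hN2k hdisj
  -- every edge of `N''` is an edge of `Ge`
  have hedge : ∀ x y, N''.Adj x y → (G.deleteEdges {s(u, v)}).Adj x y := by
    intro x y h
    rw [SimpleGraph.deleteEdges_adj]
    refine ⟨N''.adj_sub h, ?_⟩
    intro he
    rw [Set.mem_singleton_iff, ← hswz] at he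
    -- so {x,y} = {w,z} as unordered pairs
    have hcases := (Sym2.eq_iff).mp he
    -- it suffices: N''.Adj w z' for some z' with w matched appropriately gives Ge edge
    have hwadj : N''.Adj w z := by
      rcases hcases with ⟨rfl, rfl⟩ | ⟨rfl, rfl⟩
      · exact h
      · exact N''.adj_symm h
    rcases hwmem with hwS | hwM
    · exact (hsub (N''.edge_vert hwadj)) hwS
    · have hwN : w ∈ N.verts := by rw [hNverts]; exact hwM
      obtain ⟨z₀, hz₀, _⟩ := hNm hwN
      have h1 : N''.Adj w z₀ := hle.2 hz₀
      obtain ⟨y₀, _, hyu⟩ := hm (hle.1 hwN)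
      have : z = z₀ := by rw [hyu z hwadj, hyu z₀ h1]
      subst this
      have hge := hNGe _ _ hz₀
      rw [SimpleGraph.deleteEdges_adj] at hge
      exact hge.2 (by rw [hswz]; rfl)
  -- pull `N''` back down to a subgraph of `Ge.induce (↑S')ᶜ`
  refine hnoext ⟨downSub (H := G.deleteEdges {s(u, v)}) N'' hsub hedge, ⟨?_, ?_⟩,
    downSub_isMatching hm, ?_⟩
  · intro x hx
    exact hle.1 ⟨x, hx, rfl⟩
  · intro x y h
    exact hle.2 (⟨x.2, y.2, h⟩ : N.Adj ↑x ↑y)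
  · rw [downSub_verts_ncard, hcard, Nat.card_coe_set_eq, ncard_compl_eq,
      Set.ncard_coe_finset, hS']

end Ext

end StmtAux

open StmtAux

theorem stmt_17 {V : Type*} [Fintype V] (G : SimpleGraph V) (n k d : ℕ)
    (hn : 2 ≤ n) (hG : IsNkdGraph G n k d) (u v : V) (huv : G.Adj u v)
    (S' : Finset V) (hS' : S'.card = n - 2)
    (M' : ((G.deleteEdges {s(u, v)}).induce ((S' : Set V)ᶜ)).Subgraph)
    (hM' : IsKMatching M' k)
    (hnoext : ¬ ∃ M'' : ((G.deleteEdges {s(u, v)}).induce ((S' : Set V)ᶜ)).Subgraph,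
        M' ≤ M'' ∧ IsDefectMatching M'' d)
    (S₁ : Finset V)
    (hS₁ : (S₁ : Set V) ⊆ ((S' : Set V) ∪ (Subtype.val '' M'.verts) ∪ {u, v})ᶜ)
    (ho : S₁.card + d + 1 ≤
        oddComponentsCard ((G.deleteEdges {s(u, v)}).induce
          (((S' : Set V) ∪ (Subtype.val '' M'.verts) ∪ (S₁ : Set V))ᶜ))) :
    oddComponentsCard ((G.deleteEdges {s(u, v)}).induce
        (((S' : Set V) ∪ (Subtype.val '' M'.verts) ∪ (S₁ : Set V))ᶜ))
      = S₁.card + d + 2 ∧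
    oddComponentsCard (G.induce
        (((S' : Set V) ∪ (Subtype.val '' M'.verts) ∪ (S₁ : Set V))ᶜ))
      = S₁.card + d ∧
    -- in particular, `uv` is a bridge of an even component of `G - S' - S'' - S₁`:
    ∃ (hu : u ∈ ((S' : Set V) ∪ (Subtype.val '' M'.verts) ∪ (S₁ : Set V))ᶜ)
      (hv : v ∈ ((S' : Set V) ∪ (Subtype.val '' M'.verts) ∪ (S₁ : Set V))ᶜ),
      (G.induce (((S' : Set V) ∪ (Subtype.val '' M'.verts) ∪ (S₁ : Set V))ᶜ)).connectedComponentMk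
          ⟨u, hu⟩
        = (G.induce (((S' : Set V) ∪ (Subtype.val '' M'.verts) ∪ (S₁ : Set V))ᶜ)).connectedComponentMk
          ⟨v, hv⟩ ∧
      Even (Nat.card
        ((G.induce (((S' : Set V) ∪ (Subtype.val '' M'.verts) ∪ (S₁ : Set V))ᶜ)).connectedComponentMk
          ⟨u, hu⟩).supp) ∧
      ¬ ((G.induce (((S' : Set V) ∪ (Subtype.val '' M'.verts) ∪ (S₁ : Set V))ᶜ)).deleteEdges
          {s(⟨u, hu⟩, ⟨v, hv⟩)}).Reachable ⟨u, hu⟩ ⟨v, hv⟩ := by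
  classical
  obtain ⟨hu', hv'⟩ := StmtAux.not_mem_of_noext hG hn huv S' hS' M' hM' hnoext
  set img := Subtype.val '' M'.verts with himg
  set W := ((S' : Set V) ∪ img ∪ (S₁ : Set V))ᶜ with hW
  have huS₁ : u ∉ (S₁ : Set V) := fun h => (hS₁ h) (Or.inr (Or.inl rfl))
  have hvS₁ : v ∉ (S₁ : Set V) := fun h => (hS₁ h) (Or.inr (Or.inr rfl))
  have hu : u ∈ W := by
    rw [hW]
    rintro (h | h)
    · exact hu' h
    · exact huS₁ h
  have hv : v ∈ W := by
    rw [hW]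
    rintro (h | h)
    · exact hv' h
    · exact hvS₁ h
  -- cardinalities
  have himg2k : img.ncard = 2 * k := by
    rw [himg, Set.ncard_image_of_injective _ Subtype.val_injective]
    exact hM'.2
  have himgsub : img ⊆ ((S' : Set V))ᶜ := Subtype.coe_image_subset _ _
  have hdisj1 : Disjoint (↑S' : Set V) img := by
    rw [Set.disjoint_right]
    exact fun x hx hxS => himgsub hx hxS
  have hdisj2 : Disjoint ((S' : Set V) ∪ img) (↑S₁ : Set V) := by
    rw [Set.disjoint_right]
    intro x hx hxm
    exact (hS₁ hx) (Or.inl hxm)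
  have hWcard : W.ncard + ((n - 2) + 2 * k + S₁.card) = Nat.card V := by
    have h1 := Set.ncard_add_ncard_compl ((S' : Set V) ∪ img ∪ (S₁ : Set V))
    rw [Set.ncard_union_eq hdisj2 (Set.toFinite _) (Set.toFinite _),
      Set.ncard_union_eq hdisj1 (Set.toFinite _) (Set.toFinite _),
      Set.ncard_coe_finset, Set.ncard_coe_finset, hS', himg2k] at h1
    rw [hW]
    omega
  have hWnat : Nat.card ↥W = W.ncard := Nat.card_coe_set_eq _
  obtain ⟨m, hm2⟩ := hG.2.1
  have hVge := hG.1
  -- the graph `K = (G-uv) - S' - S'' - S₁` and its two special components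
  have hGe : G.deleteEdges {s(u, v)} ≤ G := G.deleteEdges_le _
  set u' : ↥W := ⟨u, hu⟩ with hu'def
  set v' : ↥W := ⟨v, hv⟩ with hv'def
  set cu := ((G.deleteEdges {s(u, v)}).induce W).connectedComponentMk u' with hcu
  set cv := ((G.deleteEdges {s(u, v)}).induce W).connectedComponentMk v' with hcv
  -- parity of the number of odd components
  have hparW : W.ncard % 2 = (S₁.card + d) % 2 := by omega
  have hqpar : oddComponentsCard ((G.deleteEdges {s(u, v)}).induce W) % 2
      = (S₁.card + d) % 2 := by
    have hodd := StmtAux.odd_oddComponentsCard_iff ((G.deleteEdges {s(u, v)}).induce W)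
    rw [Nat.odd_iff, Nat.odd_iff, hWnat] at hodd
    by_cases h : oddComponentsCard ((G.deleteEdges {s(u, v)}).induce W) % 2 = 1
    · rw [h]
      have := hodd.mp h
      omega
    · have h0 : oddComponentsCard ((G.deleteEdges {s(u, v)}).induce W) % 2 = 0 := by omega
      rw [h0]
      have hne1 : ¬ (W.ncard % 2 = 1) := fun hh => h (hodd.mpr hh)
      omega
  -- the (n,k,d) property gives the key upper bound
  have hF2 : oddComponentsCard (G.induce (W \ {u, v})) ≤ d + S₁.card := by
    set S : Finset V := insert u (insert v S') with hS
    have huS' : u ∉ S' := fun h => hu' (Or.inl (Finset.mem_coe.mpr h))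
    have hvS' : v ∉ S' := fun h => hv' (Or.inl (Finset.mem_coe.mpr h))
    have huimg : u ∉ img := fun h => hu' (Or.inr h)
    have hvimg : v ∉ img := fun h => hv' (Or.inr h)
    have hScard : S.card = n := by
      rw [hS, Finset.card_insert_of_notMem (by simp [huv.ne, huS']),
        Finset.card_insert_of_notMem hvS', hS']
      omega
    set N := StmtAux.pushSub M' hGe with hNdef
    have hNverts : N.verts = img := rfl
    have hNm : N.IsMatching := StmtAux.pushSub_isMatching hGe hM'.1
    have hN2k : N.verts.ncard = 2 * k := by rw [hNverts]; exact himg2k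
    have hdisjS : Disjoint (↑S : Set V) N.verts := by
      rw [Set.disjoint_left]
      intro x hx hxN
      rw [hNverts] at hxN
      simp only [hS, Finset.coe_insert, Set.mem_insert_iff] at hx
      rcases hx with rfl | rfl | hx
      · exact huimg hxN
      · exact hvimg hxN
      · exact Set.disjoint_left.mp hdisj1 hx hxN
    obtain ⟨N'', hle, hmm, hsub, hcard⟩ := StmtAux.hG_ext hG S hScard N hNm hN2k hdisjS
    have hbcond : ∀ x ∈ img, ∀ y, N''.Adj x y → y ∈ img := by
      intro x hx y hxy
      have hxN : x ∈ N.verts := by rw [hNverts]; exact hx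
      obtain ⟨z, hz, _⟩ := hNm hxN
      obtain ⟨y₀, _, hyu⟩ := hmm (hle.1 hxN)
      have : y = z := by rw [hyu y hxy, hyu z (hle.2 hz)]
      subst this
      rw [← hNverts]
      exact N.edge_vert (N.adj_symm hz)
    have htut := StmtAux.tutte_count hmm hsub hbcond (A := (S₁ : Set V))
    have hseteq : ((S : Finset V) : Set V)ᶜ \ ((S₁ : Set V) ∪ img) = W \ {u, v} := by
      ext x
      simp only [hW, hS, Finset.coe_insert, Set.mem_diff, Set.mem_compl_iff,
        Set.mem_insert_iff, Set.mem_union, Set.mem_singleton_iff, not_or]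
      tauto
    rw [hseteq] at htut
    have hdcard : (((S : Finset V) : Set V)ᶜ \ N''.verts).ncard = d := by
      rw [Set.ncard_diff hsub (Set.toFinite _), StmtAux.ncard_compl_eq,
        Set.ncard_coe_finset, hScard, hcard]
      omega
    rw [hdcard, Set.ncard_coe_finset] at htut
    exact htut
  -- transfer: on `W \ {u,v}` the graphs `G` and `G - uv` agree
  have hGeq : (G.deleteEdges {s(u, v)}).induce (W \ {u, v}) = G.induce (W \ {u, v}) := by
    ext x y
    show (G.deleteEdges {s(u, v)}).Adj ↑x ↑y ↔ G.Adj ↑x ↑y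
    rw [SimpleGraph.deleteEdges_adj]
    constructor
    · exact fun h => h.1
    · intro h
      refine ⟨h, ?_⟩
      intro he
      rw [Set.mem_singleton_iff, Sym2.eq_iff] at he
      rcases he with ⟨hx, _⟩ | ⟨hx, _⟩
      · exact x.2.2 (Or.inl hx)
      · exact x.2.2 (Or.inr hx)
  -- the number of odd components avoiding u,v is at most d + |S₁|
  have hrest : ({c : ((G.deleteEdges {s(u, v)}).induce W).ConnectedComponent | Odd (Nat.card c.supp)}
      \ {cu, cv}).ncard ≤ d + S₁.card := by
    refine le_trans (le_trans (Set.ncard_le_ncard ?_ (Set.toFinite _))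
      (StmtAux.ncard_odd_restrict_le (Set.diff_subset (s := W) (t := {u, v})))) ?_
    · rintro c ⟨hodd, hcuv⟩
      simp only [Set.mem_insert_iff, Set.mem_singleton_iff, not_or] at hcuv
      refine ⟨hodd, ?_⟩
      intro z hz
      refine ⟨z.2, ?_⟩
      have hcz : ((G.deleteEdges {s(u, v)}).induce W).connectedComponentMk z = c :=
        (ConnectedComponent.mem_supp_iff c z).mp hz
      rintro (h | h)
      · refine hcuv.1 ?_
        have hzu : z = u' := Subtype.ext h
        rw [← hcz, hzu]
      · refine hcuv.2 ?_
        have hzv : z = v' := Subtype.ext h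
        rw [← hcz, hzv]
    · rw [hGeq]
      exact hF2
  have hq_as_ncard : oddComponentsCard ((G.deleteEdges {s(u, v)}).induce W)
      = {c : ((G.deleteEdges {s(u, v)}).induce W).ConnectedComponent | Odd (Nat.card c.supp)}.ncard :=
    StmtAux.oddComponentsCard_eq_ncard _
  have hsplit : {c : ((G.deleteEdges {s(u, v)}).induce W).ConnectedComponent | Odd (Nat.card c.supp)}.ncard
      ≤ ({c : ((G.deleteEdges {s(u, v)}).induce W).ConnectedComponent | Odd (Nat.card c.supp)} \ {cu, cv}).ncard
        + 2 := by
    have hsubu : {c : ((G.deleteEdges {s(u, v)}).induce W).ConnectedComponent |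
        Odd (Nat.card c.supp)} ⊆
        ({c : ((G.deleteEdges {s(u, v)}).induce W).ConnectedComponent |
          Odd (Nat.card c.supp)} \ {cu, cv}) ∪ {cu, cv} := by
      intro c hc
      by_cases h : c = cu ∨ c = cv
      · exact Or.inr (by rcases h with rfl | rfl <;> simp)
      · push_neg at h
        exact Or.inl ⟨hc, by simp [h.1, h.2]⟩
    have hpcard : ({cu, cv} :
        Set ((G.deleteEdges {s(u, v)}).induce W).ConnectedComponent).ncard ≤ 2 :=
      le_trans (Set.ncard_insert_le _ _) (by simp)
    calc _ ≤ _ := Set.ncard_le_ncard hsubu (Set.toFinite _)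
      _ ≤ _ := Set.ncard_union_le _ _
      _ ≤ _ + 2 := by omega
  -- the two components of u and v must be odd and distinct
  have hmain : Odd (Nat.card cu.supp) ∧ Odd (Nat.card cv.supp) ∧ cu ≠ cv := by
    by_contra hbad
    have hone : oddComponentsCard ((G.deleteEdges {s(u, v)}).induce W)
        ≤ ({c : ((G.deleteEdges {s(u, v)}).induce W).ConnectedComponent | Odd (Nat.card c.supp)}
            \ {cu, cv}).ncard + 1 := by
      rw [hq_as_ncard]
      have hsub1 : ∃ e : ((G.deleteEdges {s(u, v)}).induce W).ConnectedComponent,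
          {c : ((G.deleteEdges {s(u, v)}).induce W).ConnectedComponent | Odd (Nat.card c.supp)} ⊆
            ({c : ((G.deleteEdges {s(u, v)}).induce W).ConnectedComponent | Odd (Nat.card c.supp)} \ {cu, cv})
              ∪ {e} := by
        by_cases h1 : Odd (Nat.card cu.supp)
        · by_cases h2 : Odd (Nat.card cv.supp)
          · have h3 : cu = cv := by tauto
            refine ⟨cu, fun c hc => ?_⟩
            by_cases h : c = cu ∨ c = cv
            · refine Or.inr ?_
              rcases h with rfl | rfl
              · rfl
              · exact Set.mem_singleton_iff.mpr h3.symm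
            · push_neg at h
              exact Or.inl ⟨hc, by simp [h.1, h.2]⟩
          · refine ⟨cu, fun c hc => ?_⟩
            by_cases h : c = cu ∨ c = cv
            · rcases h with rfl | rfl
              · exact Or.inr rfl
              · exact absurd hc h2
            · push_neg at h
              exact Or.inl ⟨hc, by simp [h.1, h.2]⟩
        · refine ⟨cv, fun c hc => ?_⟩
          by_cases h : c = cu ∨ c = cv
          · rcases h with rfl | rfl
            · exact absurd hc h1
            · exact Or.inr rfl
          · push_neg at h
            exact Or.inl ⟨hc, by simp [h.1, h.2]⟩
      obtain ⟨e, he⟩ := hsub1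
      calc _ ≤ _ := Set.ncard_le_ncard he (Set.toFinite _)
        _ ≤ _ := Set.ncard_union_le _ _
        _ ≤ _ + 1 := by simp
    omega
  have hq : oddComponentsCard ((G.deleteEdges {s(u, v)}).induce W) = S₁.card + d + 2 := by omega
  -- now add the edge back
  have hKL : (G.deleteEdges {s(u, v)}).induce W ≤ G.induce W := by
    intro a b hab
    exact hGe hab
  have hA : ∀ x y : ↥W, (G.induce W).Adj x y ↔ ((G.deleteEdges {s(u, v)}).induce W).Adj x y ∨
      (x = u' ∧ y = v') ∨ (x = v' ∧ y = u') := by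
    intro x y
    constructor
    · intro h
      by_cases he : s((x : V), (y : V)) = s(u, v)
      · rw [Sym2.eq_iff] at he
        rcases he with ⟨hx, hy⟩ | ⟨hx, hy⟩
        · exact Or.inr (Or.inl ⟨Subtype.ext hx, Subtype.ext hy⟩)
        · exact Or.inr (Or.inr ⟨Subtype.ext hx, Subtype.ext hy⟩)
      · refine Or.inl ?_
        show (G.deleteEdges {s(u, v)}).Adj ↑x ↑y
        rw [SimpleGraph.deleteEdges_adj]
        exact ⟨h, by simpa using he⟩
    · rintro (h | ⟨rfl, rfl⟩ | ⟨rfl, rfl⟩)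
      · exact hGe h
      · exact huv
      · exact huv.symm
  have hkuodd : Odd (Nat.card (((G.deleteEdges {s(u, v)}).induce W).connectedComponentMk u').supp) := by
    rw [← hcu]; exact hmain.1
  have hkvodd : Odd (Nat.card (((G.deleteEdges {s(u, v)}).induce W).connectedComponentMk v').supp) := by
    rw [← hcv]; exact hmain.2.1
  have hkne : ((G.deleteEdges {s(u, v)}).induce W).connectedComponentMk u' ≠ ((G.deleteEdges {s(u, v)}).induce W).connectedComponentMk v' := by
    rw [← hcu, ← hcv]; exact hmain.2.2
  have hadd := StmtAux.oddComponentsCard_add_edge hKL hA hkuodd hkvodd hkne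
  refine ⟨hq, by omega, hu, hv, ?_, ?_, ?_⟩
  · exact ConnectedComponent.connectedComponentMk_eq_of_adj (show G.Adj u v from huv)
  · show Even (Nat.card ((G.induce W).connectedComponentMk u').supp)
    have hcardu := StmtAux.add_edge_card_supp_union hKL hA hkne
    have hmapmk : (((G.deleteEdges {s(u, v)}).induce W).connectedComponentMk u').map
        (Hom.ofLE hKL) = (G.induce W).connectedComponentMk u' := rfl
    rw [hmapmk] at hcardu
    rw [hcardu]
    exact hkuodd.add_odd hkvodd
  · show ¬ ((G.induce W).deleteEdges {s(u', v')}).Reachable u' v'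
    have hdel : (G.induce W).deleteEdges {s(u', v')} = (G.deleteEdges {s(u, v)}).induce W := by
      ext x y
      rw [SimpleGraph.deleteEdges_adj]
      show (G.Adj ↑x ↑y ∧ _) ↔ (G.deleteEdges {s(u, v)}).Adj ↑x ↑y
      rw [SimpleGraph.deleteEdges_adj]
      have hpair : s(x, y) = s(u', v') ↔ s((x : V), (y : V)) = s(u, v) := by
        rw [Sym2.eq_iff, Sym2.eq_iff]
        simp only [Subtype.ext_iff]
        exact Iff.rfl
      constructor
      · rintro ⟨h1, h2⟩
        refine ⟨h1, ?_⟩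
        simp only [Set.mem_singleton_iff] at h2 ⊢
        rw [← hpair]
        exact h2
      · rintro ⟨h1, h2⟩
        refine ⟨h1, ?_⟩
        simp only [Set.mem_singleton_iff] at h2 ⊢
        rw [hpair]
        exact h2
    rw [hdel]
    intro hr
    exact hkne (ConnectedComponent.sound hr)
end
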